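/- arXiv:2410.15434 — 4 statements merged into one kernel-verified Lean document; each statement's English description precedes it below -/
import Mathlib

section
/- Let inc(n) denote the number of increasing permutations of {1,...,n}. Then for n ≥ 1, inc(n+1) = 2·inc(n) + Σ_{i=1}^{n−1} C(n,i)·2^(i−1)·inc(n−i), with inc(0) = inc(1) = 1. In particular, inc(2)=2, inc(3)=6, inc(4)=24, inc(5)=112, inc(6)=584, inc(7)=3376. -/
open Finset

/-- `ℓ` is a valley of `π`: `2 ≤ ℓ ≤ n-1` (1-based) with `π(ℓ-1) > π(ℓ) < π(ℓ+1)`. -/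
def IsValley {n : ℕ} (π : Equiv.Perm (Fin n)) (ℓ : Fin n) : Prop :=
  1 ≤ ℓ.val ∧ ∃ h2 : ℓ.val + 1 < n,
    π ⟨ℓ.val - 1, lt_of_le_of_lt (Nat.sub_le _ _) ℓ.isLt⟩ > π ℓ ∧ π ℓ < π ⟨ℓ.val + 1, h2⟩

/-- number of valleys of `π` -/
noncomputable def valCount {n : ℕ} (π : Equiv.Perm (Fin n)) : ℕ :=
  {ℓ : Fin n | IsValley π ℓ}.ncard

/-- `ℓ` is a peak of `π`. -/
def IsPeak {n : ℕ} (π : Equiv.Perm (Fin n)) (ℓ : Fin n) : Prop :=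
  1 ≤ ℓ.val ∧ ∃ h2 : ℓ.val + 1 < n,
    π ⟨ℓ.val - 1, lt_of_le_of_lt (Nat.sub_le _ _) ℓ.isLt⟩ < π ℓ ∧ π ℓ > π ⟨ℓ.val + 1, h2⟩

/-- number of peaks of `π` -/
noncomputable def peakCount {n : ℕ} (π : Equiv.Perm (Fin n)) : ℕ :=
  {ℓ : Fin n | IsPeak π ℓ}.ncard

/-- number of descents of `π` -/
noncomputable def desCount {n : ℕ} (π : Equiv.Perm (Fin n)) : ℕ :=
  {ℓ : Fin n | ∃ h : ℓ.val + 1 < n, π ⟨ℓ.val + 1, h⟩ < π ℓ}.ncard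

/-- `π` is increasing: the values at its valleys, from left to right, strictly increase. -/
def Increasing {n : ℕ} (π : Equiv.Perm (Fin n)) : Prop :=
  ∀ i j : Fin n, IsValley π i → IsValley π j → i < j → π i < π j

/-- `ℓ` is the first position of a (maximal increasing) run of `π`. -/
def IsRunStart {n : ℕ} (π : Equiv.Perm (Fin n)) (ℓ : Fin n) : Prop :=
  ℓ.val = 0 ∨ π ⟨ℓ.val - 1, lt_of_le_of_lt (Nat.sub_le _ _) ℓ.isLt⟩ > π ℓ

/-- number of (maximal increasing) runs of `π` -/
noncomputable def runCount {n : ℕ} (π : Equiv.Perm (Fin n)) : ℕ :=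
  {ℓ : Fin n | IsRunStart π ℓ}.ncard

/-- `π` is flattened: the first entries of its runs, from left to right, increase. -/
def Flattened {n : ℕ} (π : Equiv.Perm (Fin n)) : Prop :=
  ∀ i j : Fin n, IsRunStart π i → IsRunStart π j → i < j → π i < π j

/-- `π i` is a right-to-left minimum of `π`. -/
def IsRLMin {n : ℕ} (π : Equiv.Perm (Fin n)) (i : Fin n) : Prop :=
  ∀ j : Fin n, i < j → π i < π j

/-- number of right-to-left minima of `π` -/
noncomputable def rlmCount {n : ℕ} (π : Equiv.Perm (Fin n)) : ℕ :=
  {i : Fin n | IsRLMin π i}.ncard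

/-- number of increasing permutations of `{1,...,n}` -/
noncomputable def incCount (n : ℕ) : ℕ :=
  {π : Equiv.Perm (Fin n) | Increasing π}.ncard


set_option linter.unusedSectionVars false
namespace IncAux

variable {α β : Type*} [LinearOrder α] [LinearOrder β]

def WVal {k : ℕ} (f : Fin k → α) (ℓ : Fin k) : Prop :=
  1 ≤ ℓ.val ∧ ∃ h2 : ℓ.val + 1 < k,
    f ⟨ℓ.val - 1, lt_of_le_of_lt (Nat.sub_le _ _) ℓ.isLt⟩ > f ℓ ∧ f ℓ < f ⟨ℓ.val + 1, h2⟩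

def WInc {k : ℕ} (f : Fin k → α) : Prop :=
  ∀ i j : Fin k, WVal f i → WVal f j → i < j → f i < f j

def WNV {k : ℕ} (f : Fin k → α) : Prop := ∀ ℓ, ¬ WVal f ℓ

lemma fcongr {k : ℕ} (f : Fin k → α) {i j : Fin k} (h : i.val = j.val) : f i = f j := by
  congr 1; exact Fin.ext h

lemma wval_comp {k : ℕ} {g : α → β} (hg : StrictMono g) (f : Fin k → α) (ℓ : Fin k) :
    WVal (fun j => g (f j)) ℓ ↔ WVal f ℓ := by
  unfold WVal
  simp only [gt_iff_lt, hg.lt_iff_lt]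

lemma winc_comp {k : ℕ} {g : α → β} (hg : StrictMono g) (f : Fin k → α) :
    WInc (fun j => g (f j)) ↔ WInc f := by
  unfold WInc
  constructor <;> intro h i j hi hj hij
  · exact hg.lt_iff_lt.mp (h i j ((wval_comp hg f i).mpr hi) ((wval_comp hg f j).mpr hj) hij)
  · exact hg.lt_iff_lt.mpr (h i j ((wval_comp hg f i).mp hi) ((wval_comp hg f j).mp hj) hij)

lemma wnv_comp {k : ℕ} {g : α → β} (hg : StrictMono g) (f : Fin k → α) :
    WNV (fun j => g (f j)) ↔ WNV f := by
  unfold WNV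
  simp only [wval_comp hg]

lemma wval_min_interior {m : ℕ} (f : Fin m → α) (p : Fin m)
    (hmin : ∀ j, j ≠ p → f p < f j) (h1 : 0 < p.val) (h2 : p.val + 1 < m) : WVal f p := by
  refine ⟨h1, h2, ?_, ?_⟩
  · exact hmin _ (by intro h; have := congrArg Fin.val h; simp only at this; omega)
  · exact hmin _ (by intro h; have := congrArg Fin.val h; simp only at this; omega)

-- head: min at position 0
section Head
variable {n : ℕ} (f : Fin (n + 1) → α) (hmin : ∀ j, j ≠ 0 → f 0 < f j)
include hmin

lemma wval_head_two (ℓ : Fin (n + 1)) (hv : WVal f ℓ) : 2 ≤ ℓ.val := by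
  obtain ⟨h1, h2, hl, hr⟩ := hv
  by_contra hc
  have hℓ1 : ℓ.val = 1 := by omega
  have e : f ⟨ℓ.val - 1, lt_of_le_of_lt (Nat.sub_le _ _) ℓ.isLt⟩ = f 0 :=
    fcongr f (by simp [hℓ1])
  rw [e] at hl
  exact lt_asymm hl (hmin ℓ (by intro h; rw [h] at hℓ1; simp at hℓ1))

lemma wval_head_iff (ℓ' : Fin n) :
    WVal (fun j : Fin n => f j.succ) ℓ' ↔ WVal f ℓ'.succ := by
  constructor
  · rintro ⟨h1, h2, hl, hr⟩
    refine ⟨by simp only [Fin.val_succ]; omega, by simp only [Fin.val_succ]; omega, ?_, ?_⟩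
    · have e : f ⟨ℓ'.succ.val - 1, lt_of_le_of_lt (Nat.sub_le _ _) ℓ'.succ.isLt⟩
          = f (⟨ℓ'.val - 1, lt_of_le_of_lt (Nat.sub_le _ _) ℓ'.isLt⟩ : Fin n).succ :=
        fcongr f (by simp only [Fin.val_succ]; omega)
      rw [e]; exact hl
    · exact hr
  · rintro ⟨h1, h2, hl, hr⟩
    have h2' : 2 ≤ ℓ'.succ.val := wval_head_two f hmin ℓ'.succ ⟨h1, h2, hl, hr⟩
    simp only [Fin.val_succ] at h2 h2'
    refine ⟨by omega, by omega, ?_, ?_⟩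
    · show f (⟨ℓ'.val - 1, _⟩ : Fin n).succ > f ℓ'.succ
      have e : f (⟨ℓ'.val - 1, lt_of_le_of_lt (Nat.sub_le _ _) ℓ'.isLt⟩ : Fin n).succ
          = f ⟨ℓ'.succ.val - 1, lt_of_le_of_lt (Nat.sub_le _ _) ℓ'.succ.isLt⟩ :=
        fcongr f (by simp only [Fin.val_succ]; omega)
      rw [e]; exact hl
    · exact hr

lemma winc_head : WInc f ↔ WInc (fun j : Fin n => f j.succ) := by
  constructor
  · intro h i j hi hj hij
    exact h i.succ j.succ ((wval_head_iff f hmin i).mp hi) ((wval_head_iff f hmin j).mp hj)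
      (by rw [Fin.lt_def] at hij ⊢; simp only [Fin.val_succ]; omega)
  · intro h i j hi hj hij
    have hi2 := wval_head_two f hmin i hi
    have hj2 := wval_head_two f hmin j hj
    set i' : Fin n := ⟨i.val - 1, by have := i.isLt; omega⟩ with hi'
    set j' : Fin n := ⟨j.val - 1, by have := j.isLt; omega⟩ with hj'
    have ei : i'.succ = i := by apply Fin.ext; simp only [hi', Fin.val_succ]; omega
    have ej : j'.succ = j := by apply Fin.ext; simp only [hj', Fin.val_succ]; omega
    rw [← ei] at hi hij ⊢
    rw [← ej] at hj hij ⊢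
    exact h i' j' ((wval_head_iff f hmin i').mpr hi) ((wval_head_iff f hmin j').mpr hj)
      (by rw [hi', hj'] at hij ⊢; simp only [Fin.lt_def, Fin.val_succ, Fin.mk_lt_mk] at hij ⊢; omega)

lemma wnv_head : WNV f ↔ WNV (fun j : Fin n => f j.succ) := by
  constructor
  · intro h ℓ' hv
    exact h ℓ'.succ ((wval_head_iff f hmin ℓ').mp hv)
  · intro h ℓ hv
    have h2 := wval_head_two f hmin ℓ hv
    set ℓ' : Fin n := ⟨ℓ.val - 1, by have := ℓ.isLt; omega⟩ with hℓ'
    have e : ℓ'.succ = ℓ := by apply Fin.ext; simp only [hℓ', Fin.val_succ]; omega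
    rw [← e] at hv
    exact h ℓ' ((wval_head_iff f hmin ℓ').mpr hv)

end Head

-- last: min at position last
section Last
variable {n : ℕ} (f : Fin (n + 1) → α) (hmin : ∀ j, j ≠ Fin.last n → f (Fin.last n) < f j)
include hmin

lemma wval_last_lt (ℓ : Fin (n + 1)) (hv : WVal f ℓ) : ℓ.val + 1 < n := by
  obtain ⟨h1, h2, hl, hr⟩ := hv
  by_contra hc
  have hℓ1 : ℓ.val + 1 = n := by omega
  have e : f ⟨ℓ.val + 1, h2⟩ = f (Fin.last n) := fcongr f (by simp [hℓ1])
  rw [e] at hr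
  exact lt_asymm hr (hmin ℓ (by intro h; rw [h] at hℓ1; simp only [Fin.val_last] at hℓ1; omega))

lemma wval_last_iff (ℓ' : Fin n) :
    WVal (fun j : Fin n => f j.castSucc) ℓ' ↔ WVal f ℓ'.castSucc := by
  constructor
  · rintro ⟨h1, h2, hl, hr⟩
    refine ⟨by simpa using h1, by simp only [Fin.coe_castSucc]; omega, ?_, ?_⟩
    · show f (⟨ℓ'.castSucc.val - 1, _⟩ : Fin (n+1)) > f ℓ'.castSucc
      have e : f (⟨ℓ'.castSucc.val - 1, lt_of_le_of_lt (Nat.sub_le _ _) ℓ'.castSucc.isLt⟩ : Fin (n+1))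
          = f (⟨ℓ'.val - 1, lt_of_le_of_lt (Nat.sub_le _ _) ℓ'.isLt⟩ : Fin n).castSucc :=
        fcongr f (by simp only [Fin.coe_castSucc])
      rw [e]; exact hl
    · show f ℓ'.castSucc < f ⟨ℓ'.castSucc.val + 1, _⟩
      have e : f (⟨ℓ'.castSucc.val + 1, by simp only [Fin.coe_castSucc]; omega⟩ : Fin (n+1))
          = f (⟨ℓ'.val + 1, h2⟩ : Fin n).castSucc := fcongr f (by simp only [Fin.coe_castSucc])
      rw [e]; exact hr
  · rintro ⟨h1, h2, hl, hr⟩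
    have h2' : ℓ'.castSucc.val + 1 < n := wval_last_lt f hmin ℓ'.castSucc ⟨h1, h2, hl, hr⟩
    simp only [Fin.coe_castSucc] at h1 h2'
    refine ⟨h1, h2', ?_, ?_⟩
    · show f (⟨ℓ'.val - 1, _⟩ : Fin n).castSucc > f ℓ'.castSucc
      have e : f (⟨ℓ'.val - 1, lt_of_le_of_lt (Nat.sub_le _ _) ℓ'.isLt⟩ : Fin n).castSucc
          = f (⟨ℓ'.castSucc.val - 1, lt_of_le_of_lt (Nat.sub_le _ _) ℓ'.castSucc.isLt⟩ : Fin (n+1)) :=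
        fcongr f (by simp only [Fin.coe_castSucc])
      rw [e]; exact hl
    · show f ℓ'.castSucc < f (⟨ℓ'.val + 1, _⟩ : Fin n).castSucc
      have e : f (⟨ℓ'.val + 1, h2'⟩ : Fin n).castSucc
          = f (⟨ℓ'.castSucc.val + 1, h2⟩ : Fin (n+1)) := fcongr f (by simp only [Fin.coe_castSucc])
      rw [e]; exact hr

lemma winc_last : WInc f ↔ WInc (fun j : Fin n => f j.castSucc) := by
  constructor
  · intro h i j hi hj hij
    exact h i.castSucc j.castSucc ((wval_last_iff f hmin i).mp hi) ((wval_last_iff f hmin j).mp hj)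
      (by rw [Fin.lt_def] at hij ⊢; simp only [Fin.coe_castSucc]; omega)
  · intro h i j hi hj hij
    have hi2 := wval_last_lt f hmin i hi
    have hj2 := wval_last_lt f hmin j hj
    set i' : Fin n := ⟨i.val, by omega⟩ with hi'
    set j' : Fin n := ⟨j.val, by omega⟩ with hj'
    have ei : i'.castSucc = i := by apply Fin.ext; simp [hi']
    have ej : j'.castSucc = j := by apply Fin.ext; simp [hj']
    rw [← ei] at hi hij ⊢
    rw [← ej] at hj hij ⊢
    exact h i' j' ((wval_last_iff f hmin i').mpr hi) ((wval_last_iff f hmin j').mpr hj)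
      (by rw [hi', hj'] at hij ⊢; simp only [Fin.lt_def, Fin.coe_castSucc, Fin.mk_lt_mk] at hij ⊢; omega)

lemma wnv_last : WNV f ↔ WNV (fun j : Fin n => f j.castSucc) := by
  constructor
  · intro h ℓ' hv
    exact h ℓ'.castSucc ((wval_last_iff f hmin ℓ').mp hv)
  · intro h ℓ hv
    have h2 := wval_last_lt f hmin ℓ hv
    set ℓ' : Fin n := ⟨ℓ.val, by omega⟩ with hℓ'
    have e : ℓ'.castSucc = ℓ := by apply Fin.ext; simp [hℓ']
    rw [← e] at hv
    exact h ℓ' ((wval_last_iff f hmin ℓ').mpr hv)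

end Last

lemma winc_interior {n : ℕ} (f : Fin (n + 1) → α) (p : Fin (n + 1))
    (hmin : ∀ j, j ≠ p → f p < f j) (hp0 : 0 < p.val) (hpn : p.val < n) :
    WInc f ↔
      (WNV (fun j : Fin p.val => f ⟨j.val, by have := j.isLt; have := p.isLt; omega⟩) ∧
       WInc (fun j : Fin (n - p.val) => f ⟨p.val + 1 + j.val, by have := j.isLt; omega⟩)) := by
  have hvp : WVal f p := wval_min_interior f p hmin hp0 (by omega)
  constructor
  · intro hf
    constructor
    · rintro ℓ ⟨h1, h2, hl, hr⟩
      have hℓp := ℓ.isLt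
      have hv : WVal f ⟨ℓ.val, by omega⟩ := by
        refine ⟨h1, by simp only [Fin.val_mk]; omega, ?_, ?_⟩
        · exact hl
        · exact hr
      have hne : (⟨ℓ.val, by omega⟩ : Fin (n+1)) ≠ p := by
        intro h; have := congrArg Fin.val h; simp only [Fin.val_mk] at this; omega
      have hlt : (⟨ℓ.val, by omega⟩ : Fin (n+1)) < p := by
        rw [Fin.lt_def]; simp only [Fin.val_mk]; omega
      exact lt_asymm (hf _ _ hv hvp hlt) (hmin _ hne)
    · intro i j hi hj hij
      have lift : ∀ i : Fin (n - p.val),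
          WVal (fun j : Fin (n - p.val) => f ⟨p.val + 1 + j.val, by have := j.isLt; omega⟩) i →
          WVal f ⟨p.val + 1 + i.val, by have := i.isLt; omega⟩ := by
        rintro i ⟨h1, h2, hl, hr⟩
        have hi' := i.isLt
        refine ⟨by simp only [Fin.val_mk]; omega, by simp only [Fin.val_mk]; omega, ?_, ?_⟩
        · have e : f ⟨p.val + 1 + i.val - 1, by omega⟩ = f ⟨p.val + 1 + (i.val - 1), by omega⟩ :=
            fcongr f (by simp only [Fin.val_mk]; omega)
          rw [e]; exact hl
        · exact hr
      have := hf _ _ (lift i hi) (lift j hj)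
        (by rw [Fin.lt_def]; simp only [Fin.val_mk]; rw [Fin.lt_def] at hij; omega)
      exact this
  · rintro ⟨hnv, hsuf⟩ i j hi hj hij
    have char : ∀ ℓ : Fin (n + 1), WVal f ℓ → ℓ = p ∨ p.val + 2 ≤ ℓ.val := by
      rintro ℓ ⟨h1, h2, hl, hr⟩
      by_contra hcon
      push_neg at hcon
      obtain ⟨hne, hlt⟩ := hcon
      have hval : ℓ.val ≠ p.val := fun h => hne (Fin.ext h)
      have hcases : ℓ.val + 1 < p.val ∨ ℓ.val + 1 = p.val ∨ ℓ.val = p.val + 1 := by omega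
      rcases hcases with hA | hB | hD
      · have hlv : ℓ.val < p.val := by omega
        exact hnv ⟨ℓ.val, hlv⟩ ⟨h1, hA, hl, hr⟩
      · have e : f ⟨ℓ.val + 1, h2⟩ = f p := fcongr f (by simp only [Fin.val_mk]; omega)
        rw [e] at hr
        exact lt_asymm hr (hmin ℓ hne)
      · have e : f ⟨ℓ.val - 1, lt_of_le_of_lt (Nat.sub_le _ _) ℓ.isLt⟩ = f p :=
          fcongr f (by simp only [Fin.val_mk]; omega)
        rw [e] at hl
        exact lt_asymm hl (hmin ℓ hne)
    have down : ∀ ℓ : Fin (n + 1), WVal f ℓ → p.val + 2 ≤ ℓ.val →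
        WVal (fun j : Fin (n - p.val) => f ⟨p.val + 1 + j.val, by have := j.isLt; omega⟩)
          ⟨ℓ.val - p.val - 1, by have := ℓ.isLt; omega⟩ := by
      rintro ℓ ⟨h1, h2, hl, hr⟩ hge
      have hℓ := ℓ.isLt
      refine ⟨by simp only [Fin.val_mk]; omega, by simp only [Fin.val_mk]; omega, ?_, ?_⟩
      · convert hl using 2 <;> exact Fin.ext (by simp only [Fin.val_mk]; omega)
      · convert hr using 2 <;> exact Fin.ext (by simp only [Fin.val_mk]; omega)
    rcases char i hi with rfl | hi2
    · exact hmin j (by intro h; rw [h] at hij; exact lt_irrefl _ hij)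
    · rcases char j hj with rfl | hj2
      · rw [Fin.lt_def] at hij; omega
      · have hii := i.isLt
        have hjj := j.isLt
        have := hsuf _ _ (down i hi hi2) (down j hj hj2)
          (by rw [Fin.lt_def]; simp only [Fin.val_mk]; rw [Fin.lt_def] at hij; omega)
        have e1 : f ⟨p.val + 1 + (i.val - p.val - 1), by omega⟩ = f i := fcongr f (by simp only [Fin.val_mk]; omega)
        have e2 : f ⟨p.val + 1 + (j.val - p.val - 1), by omega⟩ = f j := fcongr f (by simp only [Fin.val_mk]; omega)
        simp only [] at this
        rw [e1, e2] at this
        exact this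

lemma removeNone_key {n : ℕ} (p : Fin (n + 1)) (π : Equiv.Perm (Fin (n + 1))) (hπ : π p = 0)
    (j : Fin n) :
    Fin.succ (Equiv.removeNone ((finSuccEquiv' p).symm.trans (π.trans (finSuccEquiv' 0))) j)
      = π (p.succAbove j) := by
  set e := (finSuccEquiv' p).symm.trans (π.trans (finSuccEquiv' 0)) with he
  have hval : e (some j) = finSuccEquiv' 0 (π (p.succAbove j)) := by
    simp [he, finSuccEquiv'_symm_some]
  have hne : π (p.succAbove j) ≠ 0 := by
    rw [← hπ]
    exact fun h => (p.succAbove_ne j) (π.injective h)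
  have hsome : ∃ x, e (some j) = some x := by
    rw [hval]
    rcases h : finSuccEquiv' 0 (π (p.succAbove j)) with _ | x
    · exfalso
      apply hne
      have := congrArg (finSuccEquiv' (0 : Fin (n+1))).symm h
      simpa [finSuccEquiv'_symm_none] using this
    · exact ⟨x, rfl⟩
  have hkey := Equiv.removeNone_some e hsome
  rw [hval] at hkey
  have := congrArg (finSuccEquiv' (0 : Fin (n+1))).symm hkey
  simp only [Equiv.symm_apply_apply] at this
  rw [← this, finSuccEquiv'_symm_some, Fin.succAbove_zero]

lemma ins_apply {n : ℕ} (p : Fin (n + 1)) (g : Equiv.Perm (Fin n)) (j : Fin n) :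
    ((finSuccEquiv' p).trans ((Equiv.optionCongr g).trans (finSuccEquiv' 0).symm)) (p.succAbove j)
      = Fin.succ (g j) := by
  simp only [Equiv.trans_apply, finSuccEquiv'_succAbove, Equiv.optionCongr_apply,
    Option.map_some, finSuccEquiv'_symm_some, Fin.succAbove_zero]

lemma ins_at {n : ℕ} (p : Fin (n + 1)) (g : Equiv.Perm (Fin n)) :
    ((finSuccEquiv' p).trans ((Equiv.optionCongr g).trans (finSuccEquiv' 0).symm)) p = 0 := by
  simp only [Equiv.trans_apply, finSuccEquiv'_at, Equiv.optionCongr_apply,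
    Option.map_none, finSuccEquiv'_symm_none]

noncomputable def insEquiv {n : ℕ} (p : Fin (n + 1)) :
    Equiv.Perm (Fin n) ≃ {π : Equiv.Perm (Fin (n + 1)) // π p = 0} where
  toFun g := ⟨(finSuccEquiv' p).trans ((Equiv.optionCongr g).trans (finSuccEquiv' 0).symm),
    ins_at p g⟩
  invFun π := Equiv.removeNone ((finSuccEquiv' p).symm.trans (π.1.trans (finSuccEquiv' 0)))
  left_inv g := by
    apply Equiv.ext
    intro j
    refine Fin.succ_injective _ ?_
    rw [removeNone_key p _ (ins_at p g) j, ins_apply]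
  right_inv π := by
    apply Subtype.ext
    apply Equiv.ext
    intro x
    rcases eq_or_ne x p with rfl | hx
    · rw [ins_at, π.2]
    · obtain ⟨j, hj⟩ := Fin.exists_succAbove_eq hx
      rw [← hj, ins_apply]
      exact removeNone_key p π.1 π.2 j

lemma insEquiv_succAbove {n : ℕ} (p : Fin (n + 1)) (g : Equiv.Perm (Fin n)) (j : Fin n) :
    (insEquiv p g).1 (p.succAbove j) = Fin.succ (g j) := ins_apply p g j

lemma insEquiv_at {n : ℕ} (p : Fin (n + 1)) (g : Equiv.Perm (Fin n)) :
    (insEquiv p g).1 p = 0 := (insEquiv p g).2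


-- linking the given definitions to the word versions
lemma increasing_iff {n : ℕ} (π : Equiv.Perm (Fin n)) : Increasing π ↔ WInc ⇑π := Iff.rfl

lemma incCount_eq (n : ℕ) :
    incCount n = Nat.card {π : Equiv.Perm (Fin n) // Increasing π} := rfl

lemma succ_strictMono {n : ℕ} : StrictMono (Fin.succ : Fin n → Fin (n + 1)) := by
  intro a b h
  rw [Fin.lt_def] at h ⊢
  simp only [Fin.val_succ]
  omega

lemma hmin_of {n : ℕ} (π : Equiv.Perm (Fin (n + 1))) (p : Fin (n + 1)) (hp : π p = 0) :
    ∀ j, j ≠ p → π p < π j := by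
  intro j hj
  rw [hp]
  have hne : π j ≠ 0 := by rw [← hp]; exact fun h => hj (π.injective h)
  exact Fin.pos_iff_ne_zero.mpr hne

lemma transfer_zero {n : ℕ} (g : Equiv.Perm (Fin n)) :
    Increasing (insEquiv (0 : Fin (n + 1)) g).1 ↔ Increasing g := by
  rw [increasing_iff, increasing_iff]
  rw [winc_head _ (hmin_of _ _ (insEquiv_at 0 g))]
  rw [show (fun j : Fin n => (insEquiv (0 : Fin (n + 1)) g).1 j.succ)
      = fun j : Fin n => Fin.succ (g j) from funext fun j => by
    rw [show j.succ = (0 : Fin (n + 1)).succAbove j from by rw [Fin.succAbove_zero]]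
    exact insEquiv_succAbove 0 g j]
  exact winc_comp succ_strictMono ⇑g

lemma transfer_last {n : ℕ} (g : Equiv.Perm (Fin n)) :
    Increasing (insEquiv (Fin.last n) g).1 ↔ Increasing g := by
  rw [increasing_iff, increasing_iff]
  rw [winc_last _ (hmin_of _ _ (insEquiv_at (Fin.last n) g))]
  rw [show (fun j : Fin n => (insEquiv (Fin.last n) g).1 j.castSucc)
      = fun j : Fin n => Fin.succ (g j) from funext fun j => by
    rw [show j.castSucc = (Fin.last n).succAbove j from by rw [Fin.succAbove_last]]
    exact insEquiv_succAbove (Fin.last n) g j]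
  exact winc_comp succ_strictMono ⇑g

def PCond (n a : ℕ) (ha : a ≤ n) (g : Equiv.Perm (Fin n)) : Prop :=
  WNV (fun j : Fin a => g ⟨j.val, lt_of_lt_of_le j.isLt ha⟩) ∧
  WInc (fun j : Fin (n - a) => g ⟨a + j.val, by have := j.isLt; omega⟩)

lemma transfer_interior {n : ℕ} (p : Fin (n + 1)) (h0 : 0 < p.val) (hn : p.val < n)
    (g : Equiv.Perm (Fin n)) :
    Increasing (insEquiv p g).1 ↔ PCond n p.val hn.le g := by
  rw [increasing_iff]
  rw [winc_interior _ p (hmin_of _ _ (insEquiv_at p g)) h0 hn]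
  unfold PCond
  have e1 : (fun j : Fin p.val => (insEquiv p g).1 ⟨j.val, by have := j.isLt; have := p.isLt; omega⟩)
      = fun j : Fin p.val => Fin.succ (g ⟨j.val, lt_of_lt_of_le j.isLt hn.le⟩) := by
    funext j
    have hj := j.isLt
    have hcast : Fin.castSucc (⟨j.val, lt_of_lt_of_le j.isLt hn.le⟩ : Fin n) < p := by
      rw [Fin.lt_def]
      simpa using hj
    rw [show (⟨j.val, by have := j.isLt; have := p.isLt; omega⟩ : Fin (n + 1))
        = p.succAbove ⟨j.val, lt_of_lt_of_le j.isLt hn.le⟩ from by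
      rw [Fin.succAbove_of_castSucc_lt _ _ hcast]
      exact Fin.ext rfl]
    exact insEquiv_succAbove p g _
  have e2 : (fun j : Fin (n - p.val) => (insEquiv p g).1 ⟨p.val + 1 + j.val, by have := j.isLt; omega⟩)
      = fun j : Fin (n - p.val) => Fin.succ (g ⟨p.val + j.val, by have := j.isLt; omega⟩) := by
    funext j
    have hj := j.isLt
    have hle : p ≤ Fin.castSucc (⟨p.val + j.val, by omega⟩ : Fin n) := by
      rw [Fin.le_def]
      simp only [Fin.coe_castSucc, Fin.val_mk]
      omega
    rw [show (⟨p.val + 1 + j.val, by have := j.isLt; omega⟩ : Fin (n + 1))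
        = p.succAbove ⟨p.val + j.val, by omega⟩ from by
      rw [Fin.succAbove_of_le_castSucc _ _ hle]
      exact Fin.ext (by simp only [Fin.val_succ, Fin.val_mk]; omega)]
    exact insEquiv_succAbove p g _
  rw [e1, e2]
  rw [wnv_comp succ_strictMono, winc_comp succ_strictMono]

noncomputable def fiberEquiv {n : ℕ} (p : Fin (n + 1)) (P : Equiv.Perm (Fin (n + 1)) → Prop)
    (Q : Equiv.Perm (Fin n) → Prop) (hPQ : ∀ g, P (insEquiv p g).1 ↔ Q g) :
    {π : Equiv.Perm (Fin (n + 1)) // P π ∧ π p = 0} ≃ {g : Equiv.Perm (Fin n) // Q g} where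
  toFun x := ⟨(insEquiv p).symm ⟨x.1, x.2.2⟩, by
    rw [← hPQ]
    have h : (insEquiv p ((insEquiv p).symm ⟨x.1, x.2.2⟩)).1 = x.1 := by
      rw [Equiv.apply_symm_apply]
    rw [h]
    exact x.2.1⟩
  invFun y := ⟨(insEquiv p y.1).1, (hPQ y.1).mpr y.2, insEquiv_at p y.1⟩
  left_inv x := by
    apply Subtype.ext
    show (insEquiv p ((insEquiv p).symm ⟨x.1, x.2.2⟩)).1 = x.1
    rw [Equiv.apply_symm_apply]
  right_inv y := by
    apply Subtype.ext
    show (insEquiv p).symm ⟨(insEquiv p y.1).1, _⟩ = y.1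
    rw [show (⟨(insEquiv p y.1).1, insEquiv_at p y.1⟩ : {π : Equiv.Perm (Fin (n + 1)) // π p = 0})
        = insEquiv p y.1 from Subtype.ext rfl]
    exact Equiv.symm_apply_apply _ _

lemma nat_card_sigma {ι : Type*} [Fintype ι] (f : ι → Type*) [∀ i, Finite (f i)] :
    Nat.card (Σ i, f i) = ∑ i, Nat.card (f i) := by
  letI : ∀ i, Fintype (f i) := fun i => Fintype.ofFinite _
  simp [Nat.card_eq_fintype_card, Fintype.card_sigma]

lemma transfer_zero_nv {n : ℕ} (g : Equiv.Perm (Fin n)) :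
    WNV ⇑(insEquiv (0 : Fin (n + 1)) g).1 ↔ WNV ⇑g := by
  rw [wnv_head _ (hmin_of _ _ (insEquiv_at 0 g))]
  rw [show (fun j : Fin n => (insEquiv (0 : Fin (n + 1)) g).1 j.succ)
      = fun j : Fin n => Fin.succ (g j) from funext fun j => by
    rw [show j.succ = (0 : Fin (n + 1)).succAbove j from by rw [Fin.succAbove_zero]]
    exact insEquiv_succAbove 0 g j]
  exact wnv_comp succ_strictMono ⇑g

lemma transfer_last_nv {n : ℕ} (g : Equiv.Perm (Fin n)) :
    WNV ⇑(insEquiv (Fin.last n) g).1 ↔ WNV ⇑g := by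
  rw [wnv_last _ (hmin_of _ _ (insEquiv_at (Fin.last n) g))]
  rw [show (fun j : Fin n => (insEquiv (Fin.last n) g).1 j.castSucc)
      = fun j : Fin n => Fin.succ (g j) from funext fun j => by
    rw [show j.castSucc = (Fin.last n).succAbove j from by rw [Fin.succAbove_last]]
    exact insEquiv_succAbove (Fin.last n) g j]
  exact wnv_comp succ_strictMono ⇑g

/-- number of permutations of `Fin a` with no valley -/
noncomputable def UC (a : ℕ) : ℕ := Nat.card {w : Equiv.Perm (Fin a) // WNV ⇑w}

lemma UC_one : UC 1 = 1 := by
  have h : ∀ w : Equiv.Perm (Fin 1), WNV ⇑w := by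
    intro w ℓ hv
    obtain ⟨h1, h2, -⟩ := hv
    omega
  rw [UC, Nat.card_congr (Equiv.subtypeUnivEquiv h)]
  simp [Nat.card_eq_fintype_card]

lemma UC_succ (a : ℕ) (ha : 1 ≤ a) : UC (a + 1) = 2 * UC a := by
  have hsplit : {w : Equiv.Perm (Fin (a + 1)) | WNV ⇑w}
      = {w : Equiv.Perm (Fin (a + 1)) | WNV ⇑w ∧ w 0 = 0}
        ∪ {w : Equiv.Perm (Fin (a + 1)) | WNV ⇑w ∧ w (Fin.last a) = 0} := by
    ext w
    simp only [Set.mem_setOf_eq, Set.mem_union]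
    constructor
    · intro hw
      set q := w.symm 0 with hq
      have hq0 : w q = 0 := by rw [hq, Equiv.apply_symm_apply]
      have hmin := hmin_of w q hq0
      by_cases h1 : q.val = 0
      · left
        refine ⟨hw, ?_⟩
        have e : (0 : Fin (a + 1)) = q := Fin.ext (by simp only [Fin.val_zero]; omega)
        conv_lhs => rw [e]
        exact hq0
      by_cases h2 : q.val = a
      · right
        refine ⟨hw, ?_⟩
        have e : Fin.last a = q := Fin.ext (by simp only [Fin.val_last]; omega)
        conv_lhs => rw [e]
        exact hq0
      · exfalso
        have := q.isLt
        exact hw q (wval_min_interior (⇑w) q hmin (by omega) (by omega))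
    · rintro (⟨hw, -⟩ | ⟨hw, -⟩) <;> exact hw
  have hdisj : Disjoint {w : Equiv.Perm (Fin (a + 1)) | WNV ⇑w ∧ w 0 = 0}
      {w : Equiv.Perm (Fin (a + 1)) | WNV ⇑w ∧ w (Fin.last a) = 0} := by
    rw [Set.disjoint_left]
    rintro w ⟨-, h1⟩ ⟨-, h2⟩
    have : (0 : Fin (a + 1)) = Fin.last a := w.injective (h1.trans h2.symm)
    have := congrArg Fin.val this
    simp only [Fin.val_zero, Fin.val_last] at this
    omega
  have h1 : {w : Equiv.Perm (Fin (a + 1)) | WNV ⇑w ∧ w 0 = 0}.ncard = UC a := by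
    have : {w : Equiv.Perm (Fin (a + 1)) | WNV ⇑w ∧ w 0 = 0}.ncard
        = Nat.card {w : Equiv.Perm (Fin (a + 1)) // WNV ⇑w ∧ w 0 = 0} := rfl
    rw [this, Nat.card_congr (fiberEquiv 0 (fun w => WNV ⇑w) (fun g => WNV ⇑g) transfer_zero_nv)]
    rfl
  have h2 : {w : Equiv.Perm (Fin (a + 1)) | WNV ⇑w ∧ w (Fin.last a) = 0}.ncard = UC a := by
    have : {w : Equiv.Perm (Fin (a + 1)) | WNV ⇑w ∧ w (Fin.last a) = 0}.ncard
        = Nat.card {w : Equiv.Perm (Fin (a + 1)) // WNV ⇑w ∧ w (Fin.last a) = 0} := rfl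
    rw [this, Nat.card_congr
      (fiberEquiv (Fin.last a) (fun w => WNV ⇑w) (fun g => WNV ⇑g) transfer_last_nv)]
    rfl
  have : UC (a + 1) = {w : Equiv.Perm (Fin (a + 1)) | WNV ⇑w}.ncard := rfl
  rw [this, hsplit, Set.ncard_union_eq hdisj (Set.toFinite _) (Set.toFinite _), h1, h2]
  omega

lemma UC_eq (a : ℕ) (ha : 1 ≤ a) : UC a = 2 ^ (a - 1) := by
  induction a with
  | zero => omega
  | succ b ih =>
    rcases Nat.eq_zero_or_pos b with rfl | hb
    · exact UC_one
    · rw [UC_succ b hb, ih hb, show b + 1 - 1 = (b - 1) + 1 from by omega, pow_succ]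
      ring

section Arr
variable {n k : ℕ}

lemma arr_coe_eq (S : Finset (Fin n)) (hS : S.card = k) (u : Fin k ≃ {x // x ∈ S}) :
    (fun j => ((u j : {x // x ∈ S}) : Fin n))
      = fun j => (((S.orderIsoOfFin hS) ((Equiv.equivCongr (Equiv.refl (Fin k))
          (S.orderIsoOfFin hS).toEquiv.symm u) j) : {x // x ∈ S}) : Fin n) := by
  funext j
  simp [Equiv.equivCongr]

lemma orderIso_coe_strictMono (S : Finset (Fin n)) (hS : S.card = k) :
    StrictMono (fun t => (((S.orderIsoOfFin hS) t : {x // x ∈ S}) : Fin n)) := by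
  intro t1 t2 h
  exact Subtype.coe_lt_coe.mpr ((S.orderIsoOfFin hS).strictMono h)

lemma card_arr_nv (S : Finset (Fin n)) (hS : S.card = k) :
    Nat.card {u : Fin k ≃ {x // x ∈ S} // WNV (fun j => ((u j : {x // x ∈ S}) : Fin n))}
      = UC k := by
  apply Nat.card_congr
  refine Equiv.subtypeEquiv (Equiv.equivCongr (Equiv.refl (Fin k)) (S.orderIsoOfFin hS).toEquiv.symm) ?_
  intro u
  rw [arr_coe_eq S hS u]
  exact wnv_comp (orderIso_coe_strictMono S hS) _

lemma card_arr_inc (S : Finset (Fin n)) (hS : S.card = k) :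
    Nat.card {u : Fin k ≃ {x // x ∈ S} // WInc (fun j => ((u j : {x // x ∈ S}) : Fin n))}
      = incCount k := by
  rw [incCount_eq]
  apply Nat.card_congr
  refine Equiv.subtypeEquiv (Equiv.equivCongr (Equiv.refl (Fin k)) (S.orderIsoOfFin hS).toEquiv.symm) ?_
  intro u
  rw [arr_coe_eq S hS u]
  exact winc_comp (orderIso_coe_strictMono S hS) _

end Arr

section Split
variable {n : ℕ}

noncomputable def uOf (a : ℕ) (ha : a ≤ n) (S : Finset (Fin n)) (hS : S.card = a)
    (g : Equiv.Perm (Fin n))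
    (himg : image (fun j : Fin a => g ⟨j.val, lt_of_lt_of_le j.isLt ha⟩) univ = S) :
    Fin a ≃ {x // x ∈ S} :=
  Equiv.ofBijective (fun j => ⟨g ⟨j.val, lt_of_lt_of_le j.isLt ha⟩, by
    rw [← himg]; exact mem_image_of_mem _ (mem_univ j)⟩)
    (by
      rw [Fintype.bijective_iff_injective_and_card]
      constructor
      · intro x y h
        have h2 := g.injective (congrArg Subtype.val h)
        have h3 := congrArg Fin.val h2
        exact Fin.ext h3
      · simp [Fintype.card_coe, hS])

noncomputable def vOf (a : ℕ) (ha : a ≤ n) (S : Finset (Fin n)) (hS : S.card = a)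
    (g : Equiv.Perm (Fin n))
    (himg : image (fun j : Fin a => g ⟨j.val, lt_of_lt_of_le j.isLt ha⟩) univ = S) :
    Fin (n - a) ≃ {x // x ∈ Sᶜ} :=
  Equiv.ofBijective (fun j => ⟨g ⟨a + j.val, by have := j.isLt; omega⟩, by
    rw [Finset.mem_compl]
    intro hmem
    obtain ⟨t, -, ht⟩ := Finset.mem_image.mp
      (show g ⟨a + j.val, by have := j.isLt; omega⟩
          ∈ image (fun j : Fin a => g ⟨j.val, lt_of_lt_of_le j.isLt ha⟩) univ by
        rw [himg]; exact hmem)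
    have h2 := congrArg Fin.val (g.injective ht)
    simp only [Fin.val_mk] at h2
    have := t.isLt
    omega⟩)
    (by
      rw [Fintype.bijective_iff_injective_and_card]
      constructor
      · intro x y h
        have h2 := congrArg Fin.val (g.injective (congrArg Subtype.val h))
        simp only [Fin.val_mk] at h2
        exact Fin.ext (by omega)
      · simp [Fintype.card_coe, Finset.card_compl, hS])

noncomputable def gOf (a : ℕ) (ha : a ≤ n) (S : Finset (Fin n))
    (u : Fin a ≃ {x // x ∈ S}) (v : Fin (n - a) ≃ {x // x ∈ Sᶜ}) :
    Equiv.Perm (Fin n) :=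
  (finCongr (by omega : n = a + (n - a))).trans (finSumFinEquiv.symm.trans
    ((Equiv.sumCongr u (v.trans (Equiv.subtypeEquivRight (fun x => Finset.mem_compl)))).trans
      (Equiv.sumCompl (· ∈ S))))

lemma gOf_lt (a : ℕ) (ha : a ≤ n) (S : Finset (Fin n))
    (u : Fin a ≃ {x // x ∈ S}) (v : Fin (n - a) ≃ {x // x ∈ Sᶜ})
    (z : Fin n) (hz : z.val < a) :
    gOf a ha S u v z = ((u ⟨z.val, hz⟩ : {x // x ∈ S}) : Fin n) := by
  unfold gOf
  simp only [Equiv.trans_apply, finCongr_apply]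
  rw [show Fin.cast (by omega : n = a + (n - a)) z = Fin.castAdd (n - a) ⟨z.val, hz⟩ from
    Fin.ext rfl]
  rw [finSumFinEquiv_symm_apply_castAdd]
  simp only [Equiv.sumCongr_apply, Sum.map_inl, Equiv.sumCompl_apply_inl]

lemma gOf_ge (a : ℕ) (ha : a ≤ n) (S : Finset (Fin n))
    (u : Fin a ≃ {x // x ∈ S}) (v : Fin (n - a) ≃ {x // x ∈ Sᶜ})
    (z : Fin n) (hz : a ≤ z.val) :
    gOf a ha S u v z = ((v ⟨z.val - a, by have := z.isLt; omega⟩ : {x // x ∈ Sᶜ}) : Fin n) := by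
  unfold gOf
  simp only [Equiv.trans_apply, finCongr_apply]
  rw [show Fin.cast (by omega : n = a + (n - a)) z
      = Fin.natAdd a ⟨z.val - a, by have := z.isLt; omega⟩ from
    Fin.ext (by simp only [Fin.coe_cast, Fin.coe_natAdd, Fin.val_mk]; omega)]
  rw [finSumFinEquiv_symm_apply_natAdd]
  simp only [Equiv.sumCongr_apply, Sum.map_inr, Equiv.sumCompl_apply_inr, Equiv.trans_apply,
    Equiv.subtypeEquivRight_apply]

lemma gOf_pre (a : ℕ) (ha : a ≤ n) (S : Finset (Fin n))
    (u : Fin a ≃ {x // x ∈ S}) (v : Fin (n - a) ≃ {x // x ∈ Sᶜ}) :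
    (fun j : Fin a => gOf a ha S u v ⟨j.val, lt_of_lt_of_le j.isLt ha⟩)
      = fun j : Fin a => ((u j : {x // x ∈ S}) : Fin n) := by
  funext j
  rw [gOf_lt a ha S u v _ (by simp only [Fin.val_mk]; exact j.isLt)]

lemma gOf_suf (a : ℕ) (ha : a ≤ n) (S : Finset (Fin n))
    (u : Fin a ≃ {x // x ∈ S}) (v : Fin (n - a) ≃ {x // x ∈ Sᶜ}) :
    (fun j : Fin (n - a) => gOf a ha S u v ⟨a + j.val, by have := j.isLt; omega⟩)
      = fun j : Fin (n - a) => ((v j : {x // x ∈ Sᶜ}) : Fin n) := by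
  funext j
  rw [gOf_ge a ha S u v _ (by simp only [Fin.val_mk]; omega)]
  exact congrArg (fun t => ((v t : {x // x ∈ Sᶜ}) : Fin n))
    (Fin.ext (by simp only [Fin.val_mk]; omega))

lemma gOf_img (a : ℕ) (ha : a ≤ n) (S : Finset (Fin n))
    (u : Fin a ≃ {x // x ∈ S}) (v : Fin (n - a) ≃ {x // x ∈ Sᶜ}) :
    image (fun j : Fin a => gOf a ha S u v ⟨j.val, lt_of_lt_of_le j.isLt ha⟩) univ = S := by
  rw [gOf_pre a ha S u v]
  ext x
  simp only [Finset.mem_image, Finset.mem_univ, true_and]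
  constructor
  · rintro ⟨j, hj⟩
    rw [← hj]
    exact (u j).2
  · intro hx
    exact ⟨u.symm ⟨x, hx⟩, by rw [Equiv.apply_symm_apply]⟩

noncomputable def bigEquiv (a : ℕ) (ha : a ≤ n) (S : Finset (Fin n)) (hS : S.card = a) :
    {g : Equiv.Perm (Fin n) //
      image (fun j : Fin a => g ⟨j.val, lt_of_lt_of_le j.isLt ha⟩) univ = S ∧ PCond n a ha g}
    ≃ ({u : Fin a ≃ {x // x ∈ S} // WNV (fun j => ((u j : {x // x ∈ S}) : Fin n))}
        × {v : Fin (n - a) ≃ {x // x ∈ Sᶜ} // WInc (fun j => ((v j : {x // x ∈ Sᶜ}) : Fin n))}) where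
  toFun x := (⟨uOf a ha S hS x.1 x.2.1, x.2.2.1⟩, ⟨vOf a ha S hS x.1 x.2.1, x.2.2.2⟩)
  invFun y := ⟨gOf a ha S y.1.1 y.2.1, gOf_img a ha S y.1.1 y.2.1,
    (by rw [gOf_pre a ha S y.1.1 y.2.1]; exact y.1.2),
    (by rw [gOf_suf a ha S y.1.1 y.2.1]; exact y.2.2)⟩
  left_inv x := by
    apply Subtype.ext
    apply Equiv.ext
    intro z
    by_cases hz : z.val < a
    · rw [show ((gOf a ha S (uOf a ha S hS x.1 x.2.1) (vOf a ha S hS x.1 x.2.1)) z)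
          = ((uOf a ha S hS x.1 x.2.1 ⟨z.val, hz⟩ : {x // x ∈ S}) : Fin n) from
        gOf_lt a ha S _ _ z hz]
      exact fcongr (⇑x.1) rfl
    · rw [gOf_ge a ha S _ _ z (by omega)]
      exact fcongr (⇑x.1) (by simp only [Fin.val_mk]; omega)
  right_inv y := by
    refine Prod.ext ?_ ?_
    · apply Subtype.ext
      apply Equiv.ext
      intro j
      apply Subtype.ext
      exact congrFun (gOf_pre a ha S y.1.1 y.2.1) j
    · apply Subtype.ext
      apply Equiv.ext
      intro j
      apply Subtype.ext
      exact congrFun (gOf_suf a ha S y.1.1 y.2.1) j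

end Split

lemma card_block {n : ℕ} (a : ℕ) (ha1 : 1 ≤ a) (ha : a ≤ n) (S : Finset (Fin n)) (hS : S.card = a) :
    Nat.card {g : Equiv.Perm (Fin n) //
      image (fun j : Fin a => g ⟨j.val, lt_of_lt_of_le j.isLt ha⟩) univ = S ∧ PCond n a ha g}
      = 2 ^ (a - 1) * incCount (n - a) := by
  rw [Nat.card_congr (bigEquiv a ha S hS), Nat.card_prod]
  rw [card_arr_nv S hS, card_arr_inc Sᶜ (by simp [Finset.card_compl, hS]), UC_eq a ha1]

lemma card_PCond {n : ℕ} (a : ℕ) (ha1 : 1 ≤ a) (ha : a ≤ n) :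
    Nat.card {g : Equiv.Perm (Fin n) // PCond n a ha g}
      = n.choose a * (2 ^ (a - 1) * incCount (n - a)) := by
  classical
  let F : {g : Equiv.Perm (Fin n) // PCond n a ha g} → {S : Finset (Fin n) // S.card = a} :=
    fun x => ⟨image (fun j : Fin a => x.1 ⟨j.val, lt_of_lt_of_le j.isLt ha⟩) univ, by
      have hinj : Function.Injective (fun j : Fin a => x.1 ⟨j.val, lt_of_lt_of_le j.isLt ha⟩) := by
        intro s t h
        have h2 := congrArg Fin.val (x.1.injective h)
        simp only [Fin.val_mk] at h2
        exact Fin.ext h2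
      rw [Finset.card_image_of_injective _ hinj, Finset.card_univ, Fintype.card_fin]⟩
  rw [Nat.card_congr (Equiv.sigmaFiberEquiv F).symm, nat_card_sigma]
  have hfib : ∀ y : {S : Finset (Fin n) // S.card = a},
      Nat.card {x : {g : Equiv.Perm (Fin n) // PCond n a ha g} // F x = y}
        = 2 ^ (a - 1) * incCount (n - a) := by
    rintro ⟨S, hS⟩
    have e : {x : {g : Equiv.Perm (Fin n) // PCond n a ha g} // F x = ⟨S, hS⟩}
        ≃ {g : Equiv.Perm (Fin n) //
            image (fun j : Fin a => g ⟨j.val, lt_of_lt_of_le j.isLt ha⟩) univ = S ∧ PCond n a ha g} :=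
      { toFun := fun x => ⟨x.1.1, congrArg Subtype.val x.2, x.1.2⟩
        invFun := fun g => ⟨⟨g.1, g.2.2⟩, Subtype.ext g.2.1⟩
        left_inv := fun x => rfl
        right_inv := fun g => rfl }
    rw [Nat.card_congr e, card_block a ha1 ha S hS]
  rw [Finset.sum_congr rfl (fun y _ => hfib y), Finset.sum_const, Finset.card_univ,
    Fintype.card_finset_len, Fintype.card_fin, smul_eq_mul]

lemma incCount_succ_sum (n : ℕ) :
    incCount (n + 1) = ∑ p : Fin (n + 1),
      Nat.card {π : Equiv.Perm (Fin (n + 1)) // Increasing π ∧ π p = 0} := by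
  rw [incCount_eq]
  let G : {π : Equiv.Perm (Fin (n + 1)) // Increasing π} → Fin (n + 1) := fun x => x.1.symm 0
  rw [Nat.card_congr (Equiv.sigmaFiberEquiv G).symm, nat_card_sigma]
  apply Finset.sum_congr rfl
  intro p _
  apply Nat.card_congr
  exact
    { toFun := fun x => ⟨x.1.1, x.1.2, by
        have h := x.2
        have h2 : x.1.1.symm 0 = p := h
        rw [Equiv.symm_apply_eq] at h2
        exact h2.symm⟩
      invFun := fun y => ⟨⟨y.1, y.2.1⟩, by
        show y.1.symm 0 = p
        rw [Equiv.symm_apply_eq]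
        exact y.2.2.symm⟩
      left_inv := fun x => rfl
      right_inv := fun y => rfl }

lemma card_pos_zero (n : ℕ) :
    Nat.card {π : Equiv.Perm (Fin (n + 1)) // Increasing π ∧ π 0 = 0} = incCount n := by
  rw [Nat.card_congr (fiberEquiv 0 Increasing Increasing transfer_zero), incCount_eq]

lemma card_pos_last (n : ℕ) :
    Nat.card {π : Equiv.Perm (Fin (n + 1)) // Increasing π ∧ π (Fin.last n) = 0} = incCount n := by
  rw [Nat.card_congr (fiberEquiv (Fin.last n) Increasing Increasing transfer_last), incCount_eq]

lemma card_pos_mid {n : ℕ} (p : Fin (n + 1)) (h0 : 0 < p.val) (hn : p.val < n) :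
    Nat.card {π : Equiv.Perm (Fin (n + 1)) // Increasing π ∧ π p = 0}
      = n.choose p.val * (2 ^ (p.val - 1) * incCount (n - p.val)) := by
  rw [Nat.card_congr (fiberEquiv p Increasing (PCond n p.val hn.le) (transfer_interior p h0 hn))]
  exact card_PCond p.val h0 hn.le

lemma incCount_rec (n : ℕ) (hn : 1 ≤ n) :
    incCount (n + 1) = 2 * incCount n +
      ∑ i ∈ Finset.Icc 1 (n - 1), n.choose i * 2 ^ (i - 1) * incCount (n - i) := by
  classical
  set R : ℕ → ℕ := fun k =>
    if k = 0 ∨ k = n then incCount n else n.choose k * (2 ^ (k - 1) * incCount (n - k)) with hR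
  have hval : ∀ p : Fin (n + 1),
      Nat.card {π : Equiv.Perm (Fin (n + 1)) // Increasing π ∧ π p = 0} = R p.val := by
    intro p
    by_cases h0 : p.val = 0
    · rw [show p = 0 from Fin.ext (by simp [h0])]
      rw [card_pos_zero]
      simp [hR, h0]
    · by_cases h1 : p.val = n
      · rw [show p = Fin.last n from Fin.ext (by simp [Fin.val_last, h1])]
        rw [card_pos_last]
        simp [hR, h1]
      · have hlt : p.val < n := by have := p.isLt; omega
        rw [card_pos_mid p (by omega) hlt]
        simp only [hR]
        rw [if_neg (by omega)]
  rw [incCount_succ_sum n, Finset.sum_congr rfl (fun p _ => hval p),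
    Fin.sum_univ_eq_sum_range (fun k => R k) (n + 1), Finset.sum_range_succ]
  have hsplit : ∑ k ∈ Finset.range n, R k = R 0 + ∑ k ∈ Finset.Ico 1 n, R k := by
    rw [Finset.range_eq_Ico, Finset.sum_eq_sum_Ico_succ_bot (by omega : 0 < n)]
  rw [hsplit]
  have hR0 : R 0 = incCount n := by simp [hR]
  have hRn : R n = incCount n := by simp [hR]
  have hIcc : Finset.Ico 1 n = Finset.Icc 1 (n - 1) := by
    rw [← Finset.Ico_add_one_right_eq_Icc]
    congr 1
    omega
  have hmid : ∑ k ∈ Finset.Ico 1 n, R k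
      = ∑ i ∈ Finset.Icc 1 (n - 1), n.choose i * 2 ^ (i - 1) * incCount (n - i) := by
    rw [hIcc]
    apply Finset.sum_congr rfl
    intro k hk
    simp only [Finset.mem_Icc] at hk
    have hne : ¬(k = 0 ∨ k = n) := by omega
    simp only [hR]
    rw [if_neg hne, mul_assoc]
  rw [hR0, hRn, hmid]
  omega

lemma incCount_small (m : ℕ) (hm : m ≤ 4) : incCount m = Nat.factorial m := by
  have huniv : {π : Equiv.Perm (Fin m) | Increasing π} = Set.univ := by
    ext π
    simp only [Set.mem_setOf_eq, Set.mem_univ, iff_true]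
    intro i j hi hj hij
    obtain ⟨hi1, hi2, hiL, hiR⟩ := hi
    obtain ⟨hj1, hj2, hjL, hjR⟩ := hj
    rw [Fin.lt_def] at hij
    exfalso
    rcases Nat.lt_or_ge (i.val + 1) j.val with h | h
    · omega
    · have hji : j.val = i.val + 1 := by omega
      have e1 : π ⟨j.val - 1, lt_of_le_of_lt (Nat.sub_le _ _) j.isLt⟩ = π i :=
        fcongr (⇑π) (by simp only [Fin.val_mk]; omega)
      have e2 : π ⟨i.val + 1, hi2⟩ = π j := fcongr (⇑π) (by simp only [Fin.val_mk]; omega)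
      rw [e1] at hjL
      rw [e2] at hiR
      exact lt_asymm hiR hjL
  rw [incCount, huniv, Set.ncard_univ, Nat.card_eq_fintype_card]
  simp [Fintype.card_perm, Fintype.card_fin]

end IncAux

theorem incCount_recurrence :
    (∀ n : ℕ, 1 ≤ n →
      incCount (n + 1) = 2 * incCount n +
        ∑ i ∈ Finset.Icc 1 (n - 1), n.choose i * 2 ^ (i - 1) * incCount (n - i)) ∧
    incCount 0 = 1 ∧ incCount 1 = 1 ∧ incCount 2 = 2 ∧ incCount 3 = 6 ∧
    incCount 4 = 24 ∧ incCount 5 = 112 ∧ incCount 6 = 584 ∧ incCount 7 = 3376 := by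
  have h0 : incCount 0 = 1 := by rw [IncAux.incCount_small 0 (by norm_num)]; rfl
  have h1 : incCount 1 = 1 := by rw [IncAux.incCount_small 1 (by norm_num)]; rfl
  have h2 : incCount 2 = 2 := by rw [IncAux.incCount_small 2 (by norm_num)]; rfl
  have h3 : incCount 3 = 6 := by rw [IncAux.incCount_small 3 (by norm_num)]; rfl
  have h4 : incCount 4 = 24 := by rw [IncAux.incCount_small 4 (by norm_num)]; rfl
  have h5 : incCount 5 = 112 := by
    rw [show (5:ℕ) = 4 + 1 from rfl, IncAux.incCount_rec 4 (by norm_num)]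
    rw [show (4:ℕ) - 1 = 3 from rfl, show Finset.Icc 1 3 = {1, 2, 3} from by decide]
    rw [Finset.sum_insert (by decide), Finset.sum_insert (by decide), Finset.sum_singleton]
    norm_num [h1, h2, h3, h4]
    decide
  have h6 : incCount 6 = 584 := by
    rw [show (6:ℕ) = 5 + 1 from rfl, IncAux.incCount_rec 5 (by norm_num)]
    rw [show (5:ℕ) - 1 = 4 from rfl, show Finset.Icc 1 4 = {1, 2, 3, 4} from by decide]
    rw [Finset.sum_insert (by decide), Finset.sum_insert (by decide),
      Finset.sum_insert (by decide), Finset.sum_singleton]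
    norm_num [h1, h2, h3, h4, h5]
    decide
  have h7 : incCount 7 = 3376 := by
    rw [show (7:ℕ) = 6 + 1 from rfl, IncAux.incCount_rec 6 (by norm_num)]
    rw [show (6:ℕ) - 1 = 5 from rfl, show Finset.Icc 1 5 = {1, 2, 3, 4, 5} from by decide]
    rw [Finset.sum_insert (by decide), Finset.sum_insert (by decide),
      Finset.sum_insert (by decide), Finset.sum_insert (by decide), Finset.sum_singleton]
    norm_num [h1, h2, h3, h4, h5, h6]
    decide
  exact ⟨IncAux.incCount_rec, h0, h1, h2, h3, h4, h5, h6, h7⟩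
end

section
/- The number of increasing permutations π of {1,...,n} satisfying val(π) = des(π) equals the n-th Gould number Σ_{k=0}^{n−1} Σ_{j=k}^{n−1} S(j,k)·k^(n−1−j), where S(j,k) is the Stirling number of the second kind. Equivalently, it equals the number of set partitions of {1,...,n} whose blocks, ordered by their minima, have the last block a singleton. -/
open Finset

/-- Stirling numbers of the second kind. -/
def stirling2 : ℕ → ℕ → ℕ
  | 0, 0 => 1
  | 0, _+1 => 0
  | _+1, 0 => 0
  | n+1, k+1 => (k+1) * stirling2 n (k+1) + stirling2 n k

/-- When the blocks of `P` are ordered by their smallest elements, the last block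
(the one with the largest minimum) is a singleton. -/
def LastBlockSingleton {n : ℕ} (P : Finpartition (Finset.univ : Finset (Fin n))) : Prop :=
  ∃ B ∈ P.parts, B.card = 1 ∧ ∀ B' ∈ P.parts, B' ≠ B → B'.min < B.min

/-! ### Auxiliary development -/

open scoped Classical

noncomputable section AuxDev

/-- descent at position `i` -/
def DescentAt {n : ℕ} (π : Equiv.Perm (Fin n)) (i : Fin n) : Prop :=
  ∃ h : i.val + 1 < n, π ⟨i.val + 1, h⟩ < π i

/-- a "min map": the map sending each element to the minimum of its block. -/
def IsMM {n : ℕ} (m : Fin n → Fin n) : Prop :=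
  ∀ i, m i ≤ i ∧ m (m i) = m i

/-- the "last block singleton" condition for a min map. -/
def IsLB {n : ℕ} (m : Fin n → Fin n) : Prop :=
  ∃ x, m x = x ∧ ∀ i, i ≠ x → m i < x

lemma ncard_setOf {α : Type*} [Fintype α] (p : α → Prop) :
    {x | p x}.ncard = (univ.filter p).card := by
  rw [← Set.ncard_coe_finset (univ.filter p)]
  congr 1
  ext x
  simp

section Key

variable {n : ℕ}

/-- sorting key for a min map -/
def mkey (m : Fin n → Fin n) (v : Fin n) : ℕ :=
  (2 * (m v).val + if m v = v then 1 else 0) * n + v.val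

lemma mkey_lt_of_lt {m : Fin n → Fin n} {v w : Fin n} (h : m v < m w) :
    mkey m v < mkey m w := by
  unfold mkey
  have hv : v.val < n := v.isLt
  have h' : (m v).val + 1 ≤ (m w).val := h
  have hb : (if m v = v then 1 else 0) ≤ 1 := by split <;> omega
  have hb' : (0:ℕ) ≤ (if m w = w then 1 else 0) := Nat.zero_le _
  calc (2 * (m v).val + if m v = v then 1 else 0) * n + v.val
      < (2 * (m v).val + 2) * n := by nlinarith
    _ ≤ (2 * (m w).val) * n := by nlinarith
    _ ≤ (2 * (m w).val + if m w = w then 1 else 0) * n + w.val := by nlinarith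

lemma mkey_lt_leader {m : Fin n → Fin n} {v w : Fin n} (he : m v = m w)
    (hv : m v ≠ v) (hw : m w = w) : mkey m v < mkey m w := by
  unfold mkey
  rw [if_neg hv, if_pos hw]
  have hvn : v.val < n := v.isLt
  have : m v = w := he.trans hw
  rw [he]
  nlinarith [w.isLt]

lemma mkey_lt_of_val_lt {m : Fin n → Fin n} {v w : Fin n} (he : m v = m w)
    (hb : (m v = v) ↔ (m w = w)) (hvw : v < w) : mkey m v < mkey m w := by
  unfold mkey
  have hif : (if m v = v then (1:ℕ) else 0) = (if m w = w then 1 else 0) := by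
    split <;> split <;> first | rfl | (exfalso; tauto)
  rw [hif, he]
  have : v.val < w.val := hvw
  omega

lemma mkey_injective (m : Fin n → Fin n) : Function.Injective (mkey m) := by
  intro v w h
  unfold mkey at h
  have hv : v.val < n := v.isLt
  have hw : w.val < n := w.isLt
  have := Nat.add_mul_mod_self_left v.val n
  -- use mod n
  have h1 : ((2 * (m v).val + if m v = v then 1 else 0) * n + v.val) % n = v.val := by
    rw [Nat.add_comm, Nat.add_mul_mod_self_right]; exact Nat.mod_eq_of_lt hv
  have h2 : ((2 * (m w).val + if m w = w then 1 else 0) * n + w.val) % n = w.val := by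
    rw [Nat.add_comm, Nat.add_mul_mod_self_right]; exact Nat.mod_eq_of_lt hw
  have : v.val = w.val := by rw [← h1, ← h2, h]
  exact Fin.ext this

lemma mkey_dec {m : Fin n → Fin n} (hm : IsMM m) {v w : Fin n}
    (h : mkey m v < mkey m w) :
    m v < m w ∨ (m v = m w ∧ ((m w = w ∧ v ≠ w) ∨ (m v ≠ v ∧ m w ≠ w ∧ v < w))) := by
  rcases lt_trichotomy (m v) (m w) with h1 | h1 | h1
  · exact Or.inl h1
  · right
    refine ⟨h1, ?_⟩
    by_cases hw : m w = w
    · left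
      refine ⟨hw, ?_⟩
      rintro rfl
      exact lt_irrefl _ h
    · right
      by_cases hv : m v = v
      · exfalso
        have : mkey m w < mkey m v := mkey_lt_leader h1.symm hw hv
        omega
      · refine ⟨hv, hw, ?_⟩
        rcases lt_trichotomy v w with h2 | h2 | h2
        · exact h2
        · exact absurd (h2 ▸ h) (lt_irrefl _)
        · exfalso
          have : mkey m w < mkey m v := mkey_lt_of_val_lt h1.symm (by tauto) h2
          omega
  · exact absurd (mkey_lt_of_lt h1) (by omega)

lemma mkey_le_of_key_lt {m : Fin n → Fin n} (hm : IsMM m) {v w : Fin n}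
    (h : mkey m v < mkey m w) : m v ≤ m w := by
  rcases mkey_dec hm h with h1 | ⟨h1, _⟩
  · exact le_of_lt h1
  · exact le_of_eq h1

end Key

section Nxt

variable {n : ℕ} (π : Equiv.Perm (Fin n))

lemma isRLMin_lastIdx (hn : 0 < n) : IsRLMin π ⟨n - 1, by omega⟩ := by
  intro j hj
  have hj' : n - 1 < j.val := hj
  exact absurd j.isLt (by omega)

lemma mem_rlset (i : Fin n) :
    (⟨n - 1, by have := i.pos; omega⟩ : Fin n) ∈
      (univ.filter fun j => i ≤ j ∧ IsRLMin π j) := by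
  simp only [mem_filter, mem_univ, true_and]
  exact ⟨show i.val ≤ n - 1 from Nat.le_pred_of_lt i.isLt, isRLMin_lastIdx π i.pos⟩

/-- the first right-to-left minimum position weakly after `i` -/
def nxt (i : Fin n) : Fin n :=
  (univ.filter fun j => i ≤ j ∧ IsRLMin π j).min' ⟨_, mem_rlset π i⟩

lemma le_nxt (i : Fin n) : i ≤ nxt π i := by
  have := Finset.min'_mem (univ.filter fun j => i ≤ j ∧ IsRLMin π j) ⟨_, mem_rlset π i⟩
  rw [mem_filter] at this
  exact this.2.1

lemma isRLMin_nxt (i : Fin n) : IsRLMin π (nxt π i) := by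
  have := Finset.min'_mem (univ.filter fun j => i ≤ j ∧ IsRLMin π j) ⟨_, mem_rlset π i⟩
  rw [mem_filter] at this
  exact this.2.2

lemma nxt_min {i j : Fin n} (hij : i ≤ j) (hj : IsRLMin π j) : nxt π i ≤ j :=
  Finset.min'_le _ _ (by simp only [mem_filter, mem_univ, true_and]; exact ⟨hij, hj⟩)

lemma nxt_eq_self {i : Fin n} (h : IsRLMin π i) : nxt π i = i :=
  le_antisymm (nxt_min π le_rfl h) (le_nxt π i)

lemma not_rlmin_of_lt_nxt {i j : Fin n} (hij : i ≤ j) (hj : j < nxt π i) :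
    ¬ IsRLMin π j := fun h => absurd (nxt_min π hij h) (not_le.mpr hj)

lemma nxt_mono {i j : Fin n} (hij : i ≤ j) : nxt π i ≤ nxt π j :=
  nxt_min π (le_trans hij (le_nxt π j)) (isRLMin_nxt π j)

/-- the min map associated to a permutation: each value goes to the value at the
next right-to-left minimum position. -/
def mOf : Fin n → Fin n := fun v => π (nxt π (π.symm v))

end Nxt

section GoodPerm

variable {n : ℕ} {π : Equiv.Perm (Fin n)}
  (hInc : Increasing π) (hvd : valCount π = desCount π)

include hvd in
lemma descent_to_valley {i : Fin n} (hd : DescentAt π i) :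
    ∃ h1 : i.val + 1 < n, IsValley π ⟨i.val + 1, h1⟩ := by
  classical
  have hVcard : valCount π = (univ.filter (IsValley π)).card := ncard_setOf _
  have hDcard : desCount π = (univ.filter (DescentAt π)).card := ncard_setOf _
  set V := univ.filter (IsValley π) with hV
  set D := univ.filter (DescentAt π) with hD
  have hmaps : ∀ a ∈ V, (⟨a.val - 1, lt_of_le_of_lt (Nat.sub_le _ _) a.isLt⟩ : Fin n) ∈ D := by
    intro a ha
    rw [hV, mem_filter] at ha
    obtain ⟨-, h1, h2, hgt, hlt⟩ := ha
    rw [hD, mem_filter]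
    have hislt := a.isLt
    refine ⟨mem_univ _, ⟨show a.val - 1 + 1 < n by omega, ?_⟩⟩
    have harg : (⟨a.val - 1 + 1, show a.val - 1 + 1 < n by omega⟩ : Fin n) = a :=
      Fin.ext (show a.val - 1 + 1 = a.val by omega)
    show π ⟨a.val - 1 + 1, _⟩ < π ⟨a.val - 1, _⟩
    rw [harg]
    exact hgt
  have hinj : ∀ a₁ a₂, a₁ ∈ V → a₂ ∈ V →
      (⟨a₁.val - 1, lt_of_le_of_lt (Nat.sub_le _ _) a₁.isLt⟩ : Fin n) =
      (⟨a₂.val - 1, lt_of_le_of_lt (Nat.sub_le _ _) a₂.isLt⟩ : Fin n) → a₁ = a₂ := by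
    intro a₁ a₂ ha₁ ha₂ h
    rw [hV, mem_filter] at ha₁ ha₂
    have h1 : 1 ≤ a₁.val := ha₁.2.1
    have h2 : 1 ≤ a₂.val := ha₂.2.1
    have hv : a₁.val - 1 = a₂.val - 1 := congrArg Fin.val h
    exact Fin.ext (by omega)
  have hcardle : D.card ≤ V.card := by rw [← hVcard, ← hDcard, hvd]
  have hsurj := Finset.surj_on_of_inj_on_of_card_le
    (f := fun a _ => (⟨a.val - 1, lt_of_le_of_lt (Nat.sub_le _ _) a.isLt⟩ : Fin n))
    hmaps hinj hcardle
  have hiD : i ∈ D := by rw [hD, mem_filter]; exact ⟨mem_univ _, hd⟩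
  obtain ⟨a, ha, haeq⟩ := hsurj i hiD
  rw [hV, mem_filter] at ha
  have h1 : 1 ≤ a.val := ha.2.1
  have hval : a.val - 1 = i.val := (congrArg Fin.val haeq).symm
  have h1' : i.val + 1 < n := by have := a.isLt; omega
  refine ⟨h1', ?_⟩
  have heq : a = ⟨i.val + 1, h1'⟩ := Fin.ext (show a.val = i.val + 1 by omega)
  rw [← heq]
  exact ⟨ha.2.1, ha.2.2⟩

include hvd in
lemma good_ascent_end (hn2 : 2 ≤ n) :
    π ⟨n - 2, by omega⟩ < π ⟨n - 1, by omega⟩ := by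
  have hne : π ⟨n - 2, by omega⟩ ≠ π ⟨n - 1, by omega⟩ := fun h =>
    absurd (congrArg Fin.val (π.injective h)) (show ¬ (n - 2 = n - 1) by omega)
  rcases lt_or_gt_of_ne hne with h | h
  · exact h
  · exfalso
    have hd : DescentAt π ⟨n - 2, by omega⟩ := by
      refine ⟨show n - 2 + 1 < n by omega, ?_⟩
      have harg : (⟨n - 2 + 1, show n - 2 + 1 < n by omega⟩ : Fin n) =
          (⟨n - 1, by omega⟩ : Fin n) := Fin.ext (show n - 2 + 1 = n - 1 by omega)
      show π ⟨n - 2 + 1, _⟩ < π ⟨n - 2, _⟩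
      rw [harg]
      exact h
    obtain ⟨h1, hval⟩ := descent_to_valley hvd hd
    obtain ⟨-, h2, -⟩ := hval
    have : n - 2 + 1 + 1 < n := h2
    omega

include hInc hvd in
lemma valley_rlmin {t : Fin n} (ht : IsValley π t) : IsRLMin π t := by
  intro j htj
  have key : ∀ d : ℕ, ∀ j : Fin n, j.val = d → t < j → π t < π j := by
    intro d
    induction d using Nat.strong_induction_on with
    | _ d IH =>
      intro j hjd htj
      have htjv : t.val < j.val := htj
      have hj1 : 1 ≤ j.val := by omega
      have hcIsLt : j.val - 1 < n := lt_of_le_of_lt (Nat.sub_le _ _) j.isLt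
      set c : Fin n := ⟨j.val - 1, hcIsLt⟩ with hc
      have hcv : c.val = j.val - 1 := rfl
      have hcj : c.val + 1 = j.val := by omega
      have htc : t ≤ c := show t.val ≤ c.val by omega
      have hcnej : c ≠ j := fun h => by
        have := congrArg Fin.val h; rw [hcv] at this; omega
      rcases lt_or_gt_of_ne (fun h => hcnej (π.injective h)) with hcltj | hjltc
      · rcases eq_or_lt_of_le htc with rfl | htltc
        · exact hcltj
        · exact lt_trans (IH c.val (by omega) c rfl htltc) hcltj
      · have hd : DescentAt π c := by
          refine ⟨show c.val + 1 < n by omega, ?_⟩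
          have harg : (⟨c.val + 1, show c.val + 1 < n by omega⟩ : Fin n) = j :=
            Fin.ext hcj
          show π ⟨c.val + 1, _⟩ < π c
          rw [harg]
          exact hjltc
        obtain ⟨h1, hval⟩ := descent_to_valley hvd hd
        have hjval : IsValley π j := by
          have heq : (⟨c.val + 1, h1⟩ : Fin n) = j := Fin.ext hcj
          rwa [heq] at hval
        exact hInc t j ht hjval htj
  exact key j.val j rfl htj

include hInc hvd in
lemma seg_inc {a b : Fin n} (hab : a < b) (hb : b < nxt π a) : π a < π b := by
  have key : ∀ d : ℕ, ∀ b : Fin n, b.val = d → a < b → b < nxt π a → π a < π b := by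
    intro d
    induction d using Nat.strong_induction_on with
    | _ d IH =>
      intro b hbd hab hb
      have habv : a.val < b.val := hab
      have hb1 : 1 ≤ b.val := by omega
      have hcIsLt : b.val - 1 < n := lt_of_le_of_lt (Nat.sub_le _ _) b.isLt
      set c : Fin n := ⟨b.val - 1, hcIsLt⟩ with hc
      have hcv : c.val = b.val - 1 := rfl
      have hac : a ≤ c := show a.val ≤ c.val by omega
      have hcneb : c ≠ b := fun h => by
        have := congrArg Fin.val h; rw [hcv] at this; omega
      have hasc : π c < π b := by
        rcases lt_or_gt_of_ne (fun h => hcneb (π.injective h)) with h | h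
        · exact h
        · exfalso
          have hd : DescentAt π c := by
            refine ⟨show c.val + 1 < n by omega, ?_⟩
            have harg : (⟨c.val + 1, show c.val + 1 < n by omega⟩ : Fin n) = b :=
              Fin.ext (show c.val + 1 = b.val by omega)
            show π ⟨c.val + 1, _⟩ < π c
            rw [harg]
            exact h
          obtain ⟨h1, hval⟩ := descent_to_valley hvd hd
          have hbval : IsValley π b := by
            have heq : (⟨c.val + 1, h1⟩ : Fin n) = b := Fin.ext (show c.val + 1 = b.val by omega)
            rwa [heq] at hval
          exact not_rlmin_of_lt_nxt π (le_of_lt hab) hb (valley_rlmin hInc hvd hbval)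
      rcases eq_or_lt_of_le hac with rfl | haltc
      · exact hasc
      · have hcnxt : c < nxt π a :=
          lt_of_le_of_lt (show c.val ≤ b.val from by omega) hb
        exact lt_trans (IH c.val (by omega) c rfl haltc hcnxt) hasc
  exact key b.val b rfl hab hb

include hInc hvd in
lemma seg_min {a : Fin n} (ha : a < nxt π a) : π (nxt π a) < π a := by
  set t := nxt π a with htdef
  have hne : π a ≠ π t := fun h => absurd (π.injective h) (ne_of_lt ha)
  rcases lt_or_gt_of_ne hne with hlt | hgt
  · exfalso
    have hrl : IsRLMin π a := by
      intro j haj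
      rcases lt_trichotomy j t with h | rfl | h
      · exact seg_inc hInc hvd haj h
      · exact hlt
      · exact lt_trans hlt (isRLMin_nxt π a j h)
    exact absurd (nxt_eq_self π hrl) (ne_of_gt ha)
  · exact hgt

include hInc hvd in
lemma mOf_isMM : IsMM (mOf π) := by
  intro v
  constructor
  · unfold mOf
    rcases eq_or_lt_of_le (le_nxt π (π.symm v)) with h | h
    · rw [← h, Equiv.apply_symm_apply]
    · have := seg_min hInc hvd h
      rw [Equiv.apply_symm_apply] at this
      exact le_of_lt this
  · unfold mOf
    rw [Equiv.symm_apply_apply, nxt_eq_self π (isRLMin_nxt π _)]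

include hInc hvd in
lemma mOf_isLB (hn : 0 < n) : IsLB (mOf π) := by
  refine ⟨π ⟨n - 1, by omega⟩, ?_, ?_⟩
  · unfold mOf
    rw [Equiv.symm_apply_apply, nxt_eq_self π (isRLMin_lastIdx π hn)]
  · intro v hv
    set i := π.symm v with hidef
    have hine : i ≠ ⟨n - 1, by omega⟩ := by
      intro h
      apply hv
      rw [hidef] at h
      rw [← h, Equiv.apply_symm_apply]
    have hilt : i.val < n - 1 := by
      have hle : i.val ≤ n - 1 := Nat.le_pred_of_lt i.isLt
      rcases Nat.lt_or_ge i.val (n - 1) with h | h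
      · exact h
      · exact absurd (Fin.ext (show i.val = n - 1 by omega) : i = ⟨n - 1, by omega⟩) hine
    have hn2 : 2 ≤ n := by omega
    have hpre : IsRLMin π ⟨n - 2, by omega⟩ := by
      intro j hj
      have hj2 : n - 2 < j.val := hj
      have hj' : j = ⟨n - 1, by omega⟩ := Fin.ext (show j.val = n - 1 by
        have := j.isLt; omega)
      rw [hj']
      exact good_ascent_end hvd hn2
    have hnxt : nxt π i ≤ (⟨n - 2, by omega⟩ : Fin n) :=
      nxt_min π (show i.val ≤ n - 2 by omega) hpre
    have hnxtlt : nxt π i < (⟨n - 1, by omega⟩ : Fin n) :=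
      lt_of_le_of_lt hnxt (show n - 2 < n - 1 by omega)
    show π (nxt π i) < π ⟨n - 1, by omega⟩
    exact isRLMin_nxt π i _ hnxtlt

include hInc hvd in
lemma good_strictMono : StrictMono (mkey (mOf π) ∘ π) := by
  intro i j hij
  simp only [Function.comp_apply]
  set m := mOf π with hm
  have hmv : m (π i) = π (nxt π i) := by rw [hm]; unfold mOf; rw [Equiv.symm_apply_apply]
  have hmw : m (π j) = π (nxt π j) := by rw [hm]; unfold mOf; rw [Equiv.symm_apply_apply]
  rcases eq_or_lt_of_le (nxt_mono π (le_of_lt hij)) with heq | hlt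
  · rcases eq_or_lt_of_le (le_nxt π j) with hjt | hjt
    · -- j is an RL min position, π j is a leader
      apply mkey_lt_leader
      · rw [hmv, hmw, heq]
      · rw [hmv]
        intro h
        have h2 : nxt π i = i := π.injective h
        rw [heq, ← hjt] at h2
        exact absurd h2 (ne_of_gt hij)
      · rw [hmw, ← hjt]
    · -- i < j < nxt π i; both non-leaders
      apply mkey_lt_of_val_lt
      · rw [hmv, hmw, heq]
      · constructor
        · intro h
          rw [hmv] at h
          have h2 : nxt π i = i := π.injective h
          rw [heq] at h2
          have h3 : j < i := h2 ▸ hjt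
          exact absurd (lt_trans hij h3) (lt_irrefl _)
        · intro h
          rw [hmw] at h
          exact absurd (π.injective h) (ne_of_gt hjt)
      · exact seg_inc hInc hvd hij (heq ▸ hjt)
  · apply mkey_lt_of_lt
    rw [hmv, hmw]
    exact isRLMin_nxt π i _ hlt

include hInc hvd in
lemma good_eq_sort : π = Tuple.sort (mkey (mOf π)) := by
  have h1 : Monotone (mkey (mOf π) ∘ π) := (good_strictMono hInc hvd).monotone
  have h2 : Monotone (mkey (mOf π) ∘ Tuple.sort (mkey (mOf π))) := Tuple.monotone_sort _
  have := Tuple.unique_monotone h1 h2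
  apply Equiv.ext
  intro i
  exact mkey_injective _ (congrFun this i)

end GoodPerm

section Theta

variable {n : ℕ} {m : Fin n → Fin n} (hm : IsMM m)

/-- the permutation built from a min map by sorting along the key -/
def Theta (m : Fin n → Fin n) : Equiv.Perm (Fin n) := Tuple.sort (mkey m)

lemma theta_strictMono : StrictMono (mkey m ∘ Theta m) :=
  (Tuple.monotone_sort (mkey m)).strictMono_of_injective
    ((mkey_injective m).comp (Theta m).injective)

lemma theta_def : Theta m = Tuple.sort (mkey m) := rfl

attribute [irreducible] Theta

lemma theta_lt_iff {i j : Fin n} :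
    mkey m (Theta m i) < mkey m (Theta m j) ↔ i < j :=
  (theta_strictMono (m := m)).lt_iff_lt

lemma theta_le_iff {i j : Fin n} :
    mkey m (Theta m i) ≤ mkey m (Theta m j) ↔ i ≤ j :=
  (theta_strictMono (m := m)).le_iff_le

include hm in
lemma theta_noBetween {i : Fin n} (h : i.val + 1 < n) (u : Fin n) :
    ¬ (mkey m (Theta m i) < mkey m u ∧ mkey m u < mkey m (Theta m ⟨i.val + 1, h⟩)) := by
  rintro ⟨h1, h2⟩
  set j := (Theta m).symm u with hj
  have hu : Theta m j = u := by rw [hj, Equiv.apply_symm_apply]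
  rw [← hu] at h1 h2
  have g1 : i < j := theta_lt_iff.mp h1
  have g2 : j < (⟨i.val + 1, h⟩ : Fin n) := theta_lt_iff.mp h2
  have g1' : i.val < j.val := g1
  have g2' : j.val < i.val + 1 := g2
  omega

include hm in
lemma mm_le (v : Fin n) : m v ≤ v := (hm v).1

include hm in
lemma mm_idem (v : Fin n) : m (m v) = m v := (hm v).2

include hm in
lemma theta_block_top {w u : Fin n} (hw : m w = w) (h : mkey m w < mkey m u) :
    w < u := by
  rcases mkey_dec hm h with h1 | ⟨h1, h2 | h2⟩
  · calc w = m w := hw.symm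
      _ < m u := h1
      _ ≤ u := mm_le hm u
  · exfalso
    exact h2.2 (hw.symm.trans (h1.trans h2.1))
  · exact absurd hw h2.1

include hm in
lemma theta_desc_iff {i : Fin n} (h : i.val + 1 < n) :
    Theta m ⟨i.val + 1, h⟩ < Theta m i ↔ m (Theta m i) = Theta m ⟨i.val + 1, h⟩ := by
  set v := Theta m i with hv
  set w := Theta m ⟨i.val + 1, h⟩ with hw
  have hvw : v ≠ w := fun he => by
    have := (Theta m).injective (hv ▸ hw ▸ he)
    have h2 : i.val = i.val + 1 := congrArg Fin.val this
    omega
  have hkey : mkey m v < mkey m w := by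
    rw [hv, hw]
    exact theta_lt_iff.mpr (show i.val < i.val + 1 by omega)
  constructor
  · intro hd
    rcases mkey_dec hm hkey with h1 | ⟨h1, h2 | h2⟩
    · -- m v < m w; show v is a leader, contradiction with descent
      exfalso
      by_cases hlv : m v = v
      · have : v < w := by
          calc v = m v := hlv.symm
            _ < m w := h1
            _ ≤ w := mm_le hm w
        exact absurd hd (not_lt.mpr (le_of_lt this))
      · -- the leader of v's block sits strictly between
        have hk1 : mkey m v < mkey m (m v) :=
          mkey_lt_leader (mm_idem hm v).symm hlv (mm_idem hm v)
        have hk2 : mkey m (m v) < mkey m w := by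
          apply mkey_lt_of_lt
          rw [mm_idem hm v]
          exact h1
        exact theta_noBetween hm h (m v) ⟨hv ▸ hk1, hw ▸ hk2⟩
    · -- m w = w and m v = m w
      rw [h1, h2.1]
    · exact absurd hd (not_lt.mpr (le_of_lt h2.2.2))
  · intro he
    have : w ≤ v := he ▸ mm_le hm v
    exact lt_of_le_of_ne this (fun hh => hvw hh.symm)

include hm in
lemma theta_rlmin_iff {p : Fin n} :
    IsRLMin (Theta m) p ↔ m (Theta m p) = Theta m p := by
  set v := Theta m p with hv
  constructor
  · intro hrl
    by_contra hne
    -- the leader of v's block occurs later but has smaller value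
    have hk : mkey m v < mkey m (m v) :=
      mkey_lt_leader (mm_idem hm v).symm hne (mm_idem hm v)
    set q := (Theta m).symm (m v) with hq
    have hq' : Theta m q = m v := by rw [hq, Equiv.apply_symm_apply]
    have hpq : p < q := theta_lt_iff.mp (by rw [hq']; exact hv ▸ hk)
    have := hrl q hpq
    rw [hq', ← hv] at this
    exact absurd (lt_of_le_of_ne (mm_le hm v) hne) (not_lt.mpr (le_of_lt this))
  · intro hlead j hpj
    have hk : mkey m (Theta m p) < mkey m (Theta m j) := theta_lt_iff.mpr hpj
    exact theta_block_top hm (hv ▸ hlead) (hv ▸ hk)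


section ThetaLB

variable {x : Fin n} (hx1 : m x = x) (hx2 : ∀ i, i ≠ x → m i < x)

include hx1 hx2 in
lemma theta_last (hn : 0 < n) : Theta m ⟨n - 1, by omega⟩ = x := by
  by_contra hne
  have hmax : mkey m (Theta m ⟨n - 1, by omega⟩) < mkey m x := by
    apply mkey_lt_of_lt
    rw [hx1]
    exact hx2 _ hne
  set q := (Theta m).symm x with hq
  have hq' : Theta m q = x := by rw [hq, Equiv.apply_symm_apply]
  have h1 : (⟨n - 1, by omega⟩ : Fin n) < q :=
    theta_lt_iff.mp (by rw [hq']; exact hmax)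
  have h2 : q.val < n := q.isLt
  have h3 : n - 1 < q.val := h1
  omega

include hm hx1 hx2 in
lemma theta_desc_to_valley {i : Fin n} (h : i.val + 1 < n)
    (hd : Theta m ⟨i.val + 1, h⟩ < Theta m i) :
    IsValley (Theta m) ⟨i.val + 1, h⟩ := by
  have hn : 0 < n := by omega
  set v := Theta m i with hv
  set w := Theta m ⟨i.val + 1, h⟩ with hw
  have hlead : m v = w := (theta_desc_iff hm h).mp hd
  have hwl : m w = w := by rw [← hlead, mm_idem hm]
  have hwx : w ≠ x := by
    intro he
    by_cases hvx : v = x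
    · rw [he, hvx] at hd
      exact lt_irrefl _ hd
    · have h2 := hx2 v hvx
      rw [hlead, he] at h2
      exact lt_irrefl _ h2
  have hsu : (⟨i.val + 1, h⟩ : Fin n) ≠ (⟨n - 1, by omega⟩ : Fin n) := by
    intro he
    apply hwx
    rw [hw, he]
    exact theta_last hx1 hx2 hn
  have h3 : i.val + 1 ≤ n - 1 := by omega
  have h2 : i.val + 1 + 1 < n := by
    rcases eq_or_lt_of_le h3 with he | hlt
    · exact absurd (Fin.ext he) hsu
    · omega
  have hasc : w < Theta m ⟨i.val + 1 + 1, h2⟩ := by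
    apply theta_block_top hm hwl
    rw [hw]
    exact theta_lt_iff.mpr (show i.val + 1 < i.val + 1 + 1 by omega)
  refine ⟨Nat.succ_le_succ (Nat.zero_le _), h2, ?_, ?_⟩
  · have harg : (⟨(⟨i.val + 1, h⟩ : Fin n).val - 1,
        lt_of_le_of_lt (Nat.sub_le _ _) (⟨i.val + 1, h⟩ : Fin n).isLt⟩ : Fin n) = i :=
      Fin.ext (show i.val + 1 - 1 = i.val by omega)
    rw [harg]
    exact hd
  · exact hasc

include hm in
lemma theta_valley_leader {t : Fin n} (ht : IsValley (Theta m) t) :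
    m (Theta m t) = Theta m t := by
  obtain ⟨h1, h2, hgt, hlt⟩ := ht
  have hisl : t.val - 1 + 1 < n := by have := t.isLt; omega
  have harg : (⟨t.val - 1 + 1, hisl⟩ : Fin n) = t :=
    Fin.ext (show t.val - 1 + 1 = t.val by omega)
  have hd : Theta m ⟨t.val - 1 + 1, hisl⟩ < Theta m ⟨t.val - 1,
      lt_of_le_of_lt (Nat.sub_le _ _) t.isLt⟩ := by
    rw [harg]
    exact hgt
  have hres := (theta_desc_iff hm (i := ⟨t.val - 1, lt_of_le_of_lt (Nat.sub_le _ _) t.isLt⟩)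
    hisl).mp hd
  rw [harg] at hres
  rw [← hres, mm_idem hm]

include hm in
lemma theta_increasing : Increasing (Theta m) := by
  intro t t' ht ht' htt'
  have hl : m (Theta m t) = Theta m t := theta_valley_leader hm ht
  have hl' : m (Theta m t') = Theta m t' := theta_valley_leader hm ht'
  have hkey : mkey m (Theta m t) < mkey m (Theta m t') := theta_lt_iff.mpr htt'
  rcases mkey_dec hm hkey with hc | ⟨hc, h2 | h2⟩
  · calc Theta m t = m (Theta m t) := hl.symm
      _ < m (Theta m t') := hc
      _ = Theta m t' := hl'
  · exact lt_of_le_of_ne (le_of_eq (hl.symm.trans (hc.trans h2.1))) h2.2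
  · exact absurd hl h2.1

include hm hx1 hx2 in
lemma theta_valCount : valCount (Theta m) = desCount (Theta m) := by
  have himg : {ℓ : Fin n | ∃ h : ℓ.val + 1 < n, Theta m ⟨ℓ.val + 1, h⟩ < Theta m ℓ} =
      (fun (a : Fin n) => (⟨a.val - 1, lt_of_le_of_lt (Nat.sub_le _ _) a.isLt⟩ : Fin n)) ''
        {ℓ : Fin n | IsValley (Theta m) ℓ} := by
    ext b
    constructor
    · rintro ⟨hblt, hdesc⟩
      refine ⟨⟨b.val + 1, hblt⟩, theta_desc_to_valley hm hx1 hx2 hblt hdesc, ?_⟩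
      exact Fin.ext (show b.val + 1 - 1 = b.val by omega)
    · rintro ⟨a, ha, rfl⟩
      obtain ⟨h1, h2, hgt, hlt⟩ := ha
      refine ⟨show a.val - 1 + 1 < n by omega, ?_⟩
      have harg : (⟨a.val - 1 + 1, show a.val - 1 + 1 < n by omega⟩ : Fin n) = a :=
        Fin.ext (show a.val - 1 + 1 = a.val by omega)
      show Theta m ⟨a.val - 1 + 1, _⟩ < Theta m ⟨a.val - 1, _⟩
      rw [harg]
      exact hgt
  have hinj : Set.InjOn
      (fun (a : Fin n) => (⟨a.val - 1, lt_of_le_of_lt (Nat.sub_le _ _) a.isLt⟩ : Fin n))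
      {ℓ : Fin n | IsValley (Theta m) ℓ} := by
    intro a₁ h₁ a₂ h₂ he
    have hv : a₁.val - 1 = a₂.val - 1 := congrArg Fin.val he
    have g1 : 1 ≤ a₁.val := h₁.1
    have g2 : 1 ≤ a₂.val := h₂.1
    exact Fin.ext (by omega)
  rw [valCount, desCount, himg, Set.ncard_image_of_injOn hinj]

include hm hx1 hx2 in
lemma theta_mOf : mOf (Theta m) = m := by
  funext v
  set π := Theta m with hπ
  set i := π.symm v with hi
  have hiv : π i = v := by rw [hi, Equiv.apply_symm_apply]
  set t := π.symm (m v) with ht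
  have htv : π t = m v := by rw [ht, Equiv.apply_symm_apply]
  have hit : i ≤ t := by
    rcases eq_or_ne (m v) v with he | hne
    · have heq : t = i := by rw [ht, hi, he]
      exact le_of_eq heq.symm
    · have hk : mkey m v < mkey m (m v) :=
        mkey_lt_leader (mm_idem hm v).symm hne (mm_idem hm v)
      refine le_of_lt ((theta_lt_iff (m := m)).mp ?_)
      show mkey m (Theta m i) < mkey m (Theta m t)
      rw [← hπ, hiv, htv]
      exact hk
  have hrt : IsRLMin π t := by
    rw [hπ, theta_rlmin_iff hm]
    rw [← hπ, htv]
    exact mm_idem hm v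
  have hnot : ∀ j, i ≤ j → j < t → ¬ IsRLMin π j := by
    intro j hij hjt
    set u := π j with hu
    have hk1 : mkey m v ≤ mkey m u := by
      rw [← hiv, hu, hπ]
      exact theta_le_iff.mpr hij
    have hk2 : mkey m u < mkey m (m v) := by
      rw [hu, ← htv, hπ]
      exact theta_lt_iff.mpr hjt
    have hmu1 : m u ≤ m v := by
      by_contra hcon
      have hlt : m v < m u := lt_of_not_ge hcon
      have : mkey m (m v) < mkey m u := by
        apply mkey_lt_of_lt
        rw [mm_idem hm]
        exact hlt
      omega
    have hmu2 : m v ≤ m u := by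
      rcases eq_or_lt_of_le hk1 with he | hlt
      · exact le_of_eq (congrArg m (mkey_injective m he))
      · by_contra hcon
        have : mkey m u < mkey m v := mkey_lt_of_lt (lt_of_not_ge hcon)
        omega
    have hmu : m u = m v := le_antisymm hmu1 hmu2
    rw [hπ, theta_rlmin_iff hm, ← hπ, ← hu]
    intro hl
    have heq : u = m v := hl.symm.trans hmu
    have hjteq : j = t := by
      rw [ht, ← heq, hu, Equiv.symm_apply_apply]
    exact absurd (hjteq ▸ hjt) (lt_irrefl _)
  have hnxt : nxt π i = t := by
    apply le_antisymm (nxt_min π hit hrt)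
    by_contra hcon
    have hlt : nxt π i < t := lt_of_not_ge hcon
    exact hnot _ (le_nxt π i) hlt (isRLMin_nxt π i)
  show π (nxt π (π.symm v)) = m v
  rw [← hi, hnxt, htv]

end ThetaLB

end Theta


section Counting

/-- number of fixed points -/
def fixCount {j : ℕ} (m : Fin j → Fin j) : ℕ := (univ.filter fun i => m i = i).card

/-- min maps on `Fin j` -/
def MMF (j : ℕ) : Finset (Fin j → Fin j) := univ.filter IsMM

/-- min maps on `Fin j` with `k` fixed points -/
def MMk (j k : ℕ) : Finset (Fin j → Fin j) := (MMF j).filter (fun m => fixCount m = k)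

lemma mem_MMF {j : ℕ} {m : Fin j → Fin j} : m ∈ MMF j ↔ IsMM m := by
  unfold MMF
  rw [mem_filter]
  simp

lemma mem_MMk {j k : ℕ} {m : Fin j → Fin j} : m ∈ MMk j k ↔ IsMM m ∧ fixCount m = k := by
  unfold MMk
  rw [mem_filter, mem_MMF]

lemma stirling2_succ (j k : ℕ) :
    stirling2 (j+1) (k+1) = (k+1) * stirling2 j (k+1) + stirling2 j k := rfl

lemma stirling2_eq_zero_of_lt : ∀ {j k : ℕ}, j < k → stirling2 j k = 0 := by
  intro j
  induction j with
  | zero =>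
    intro k hk
    match k, hk with
    | k+1, _ => rfl
  | succ j IH =>
    intro k hk
    match k, hk with
    | k+1, hk =>
      rw [stirling2_succ, IH (show j < k + 1 by omega), IH (show j < k by omega)]
      ring

section Stirl

variable {j : ℕ}

/-- restriction of a min map to the lower part -/
def resm (m : Fin (j+1) → Fin (j+1)) : Fin j → Fin j := fun i =>
  if h : (m i.castSucc).val < j then ⟨(m i.castSucc).val, h⟩ else i

/-- extension of a min map by the choice of image of the top element -/
def extm (t : Fin j → Fin j) (w : Fin (j+1)) : Fin (j+1) → Fin (j+1) := fun i =>
  if h : i.val < j then (t ⟨i.val, h⟩).castSucc else w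

lemma resm_val {m : Fin (j+1) → Fin (j+1)} (hm : IsMM m) (i : Fin j) :
    (resm m i).val = (m i.castSucc).val := by
  have hb : (m i.castSucc).val < j :=
    lt_of_le_of_lt ((hm i.castSucc).1 : (m i.castSucc).val ≤ i.castSucc.val) i.isLt
  unfold resm
  rw [dif_pos hb]

lemma resm_castSucc {m : Fin (j+1) → Fin (j+1)} (hm : IsMM m) (i : Fin j) :
    (resm m i).castSucc = m i.castSucc := by
  apply Fin.ext
  rw [Fin.coe_castSucc, resm_val hm]

lemma resm_isMM {m : Fin (j+1) → Fin (j+1)} (hm : IsMM m) : IsMM (resm m) := by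
  intro i
  constructor
  · show (resm m i).val ≤ i.val
    rw [resm_val hm]
    exact (hm i.castSucc).1
  · apply Fin.ext
    rw [resm_val hm, resm_castSucc hm, (hm i.castSucc).2, ← resm_castSucc hm]
    exact Fin.coe_castSucc _

lemma extm_castSucc (t : Fin j → Fin j) (w : Fin (j+1)) (i : Fin j) :
    extm t w i.castSucc = (t i).castSucc := by
  unfold extm
  rw [dif_pos (show i.castSucc.val < j from i.isLt)]
  congr 2

lemma extm_last (t : Fin j → Fin j) (w : Fin (j+1)) :
    extm t w (Fin.last j) = w := by
  unfold extm
  rw [dif_neg (by simp)]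

lemma eq_extm_resm {m : Fin (j+1) → Fin (j+1)} (hm : IsMM m) :
    m = extm (resm m) (m (Fin.last j)) := by
  funext i
  rcases Fin.eq_castSucc_or_eq_last i with ⟨i', rfl⟩ | rfl
  · rw [extm_castSucc, resm_castSucc hm]
  · rw [extm_last]

lemma resm_extm (t : Fin j → Fin j) (w : Fin (j+1)) : resm (extm t w) = t := by
  funext i
  have hlow : extm t w i.castSucc = (t i).castSucc := extm_castSucc t w i
  have hb : (extm t w i.castSucc).val < j := by
    rw [hlow, Fin.coe_castSucc]
    exact (t i).isLt
  unfold resm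
  rw [dif_pos hb]
  apply Fin.ext
  show (extm t w i.castSucc).val = (t i).val
  rw [hlow, Fin.coe_castSucc]

lemma extm_isMM {t : Fin j → Fin j} (ht : IsMM t) {w : Fin (j+1)}
    (hw : w = Fin.last j ∨ ∃ w' : Fin j, w = w'.castSucc ∧ t w' = w') :
    IsMM (extm t w) := by
  have hwfix : extm t w w = w := by
    rcases hw with rfl | ⟨w', rfl, hfix⟩
    · exact extm_last t _
    · rw [extm_castSucc, hfix]
  intro i
  rcases Fin.eq_castSucc_or_eq_last i with ⟨i', rfl⟩ | rfl
  · constructor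
    · show (extm t w i'.castSucc).val ≤ i'.castSucc.val
      rw [extm_castSucc, Fin.coe_castSucc, Fin.coe_castSucc]
      exact (ht i').1
    · rw [extm_castSucc, extm_castSucc, (ht i').2]
  · rw [extm_last]
    constructor
    · rcases hw with rfl | ⟨w', rfl, -⟩
      · exact le_rfl
      · exact le_of_lt (Fin.castSucc_lt_last w')
    · exact hwfix

lemma fixCount_extm {t : Fin j → Fin j} {w : Fin (j+1)} :
    fixCount (extm t w) = fixCount t + (if w = Fin.last j then 1 else 0) := by
  unfold fixCount
  rw [Finset.card_filter, Finset.card_filter, Fin.sum_univ_castSucc]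
  have h1 : ∀ i : Fin j, (if extm t w i.castSucc = i.castSucc then (1:ℕ) else 0) =
      (if t i = i then 1 else 0) := by
    intro i
    have he : extm t w i.castSucc = (t i).castSucc := extm_castSucc t w i
    by_cases h : t i = i
    · rw [if_pos h, if_pos (by rw [he, h])]
    · rw [if_neg h, if_neg (by
        rw [he]
        exact fun hc => h (Fin.castSucc_injective _ hc))]
  rw [Finset.sum_congr rfl (fun i _ => h1 i), extm_last]

end Stirl

lemma card_MMk_zero_succ (k : ℕ) : (MMk 0 (k+1)).card = 0 := by
  rw [Finset.card_eq_zero]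
  ext m
  rw [mem_MMk]
  simp only [Finset.notMem_empty, iff_false]
  rintro ⟨-, hfix⟩
  have h0 : (univ.filter fun i : Fin 0 => m i = i) = ∅ := Finset.eq_empty_of_isEmpty _
  have : fixCount m = 0 := by
    unfold fixCount
    rw [h0, Finset.card_empty]
  omega

lemma card_MMk_zero_zero : (MMk 0 0).card = 1 := by
  have h1 : MMk 0 0 = univ := by
    ext m
    rw [mem_MMk]
    simp only [mem_univ, iff_true]
    constructor
    · intro i
      exact absurd i.isLt (by omega)
    · have h0 : (univ.filter fun i : Fin 0 => m i = i) = ∅ := Finset.eq_empty_of_isEmpty _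
      unfold fixCount
      rw [h0, Finset.card_empty]
  rw [h1, Finset.card_univ]
  exact Fintype.card_unique

lemma card_MMk_succ_zero (j : ℕ) : (MMk (j+1) 0).card = 0 := by
  rw [Finset.card_eq_zero]
  ext m
  rw [mem_MMk]
  simp only [Finset.notMem_empty, iff_false]
  rintro ⟨hmm, hfix⟩
  have h0 : m 0 = 0 := Fin.le_zero_iff.mp (hmm 0).1
  have hmem : (0 : Fin (j+1)) ∈ univ.filter (fun i => m i = i) := by
    rw [mem_filter]
    exact ⟨mem_univ _, h0⟩
  have := Finset.card_pos.mpr ⟨_, hmem⟩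
  unfold fixCount at hfix
  omega

lemma card_MMk_succ (j k : ℕ) :
    (MMk (j+1) (k+1)).card = (k+1) * (MMk j (k+1)).card + (MMk j k).card := by
  classical
  have hmaps : ∀ m ∈ MMk (j+1) (k+1), resm m ∈ MMF j := by
    intro m hm
    rw [mem_MMk] at hm
    rw [mem_MMF]
    exact resm_isMM hm.1
  rw [Finset.card_eq_sum_card_fiberwise hmaps]
  have hfib : ∀ t ∈ MMF j,
      ((MMk (j+1) (k+1)).filter (fun m => resm m = t)).card =
        (if fixCount t = k then 1 else 0) + (if fixCount t = k+1 then k+1 else 0) := by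
    intro t ht
    have htm : IsMM t := mem_MMF.mp ht
    set W : Finset (Fin (j+1)) :=
      (if fixCount t = k then ({Fin.last j} : Finset (Fin (j+1))) else ∅) ∪
      (if fixCount t = k+1 then
        ((univ.filter fun l : Fin j => t l = l).image Fin.castSucc) else ∅) with hW
    have hset : (MMk (j+1) (k+1)).filter (fun m => resm m = t) = W.image (extm t) := by
      ext m
      rw [mem_filter, mem_MMk]
      constructor
      · rintro ⟨⟨hmm, hfix⟩, hres⟩
        rw [Finset.mem_image]
        have hme : m = extm t (m (Fin.last j)) := by
          rw [← hres]
          exact eq_extm_resm hmm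
        refine ⟨m (Fin.last j), ?_, hme.symm⟩
        have hfc2 : fixCount m = fixCount t +
            (if m (Fin.last j) = Fin.last j then 1 else 0) := by
          conv_lhs => rw [hme]
          exact fixCount_extm
        rw [hW, Finset.mem_union]
        by_cases hw : m (Fin.last j) = Fin.last j
        · left
          rw [if_pos hw] at hfc2
          rw [if_pos (show fixCount t = k by omega)]
          simp [hw]
        · right
          rw [if_neg hw] at hfc2
          rw [if_pos (show fixCount t = k + 1 by omega), Finset.mem_image]
          obtain ⟨w', hw'⟩ := (Fin.eq_castSucc_or_eq_last (m (Fin.last j))).resolve_right hw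
          refine ⟨w', ?_, hw'.symm⟩
          rw [mem_filter]
          refine ⟨mem_univ _, ?_⟩
          have hidem := (hmm (Fin.last j)).2
          rw [hw'] at hidem
          have h3 : (resm m w').castSucc = w'.castSucc := by
            rw [resm_castSucc hmm w', hidem]
          have h4 : resm m w' = w' := Fin.castSucc_injective _ h3
          rw [← hres]
          exact h4
      · intro hmem
        rw [Finset.mem_image] at hmem
        obtain ⟨w, hw, rfl⟩ := hmem
        rw [hW, Finset.mem_union] at hw
        have hwcond : w = Fin.last j ∨ ∃ w' : Fin j, w = w'.castSucc ∧ t w' = w' := by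
          rcases hw with hw | hw
          · left
            by_cases hfc : fixCount t = k
            · rw [if_pos hfc] at hw
              simpa using hw
            · rw [if_neg hfc] at hw
              simp at hw
          · right
            by_cases hfc : fixCount t = k + 1
            · rw [if_pos hfc, Finset.mem_image] at hw
              obtain ⟨l, hl, rfl⟩ := hw
              rw [mem_filter] at hl
              exact ⟨l, rfl, hl.2⟩
            · rw [if_neg hfc] at hw
              simp at hw
        refine ⟨⟨extm_isMM htm hwcond, ?_⟩, resm_extm t w⟩
        rw [fixCount_extm]
        rcases hw with hw | hw
        · by_cases hfc : fixCount t = k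
          · rw [if_pos hfc] at hw
            simp only [Finset.mem_singleton] at hw
            rw [if_pos hw, hfc]
          · rw [if_neg hfc] at hw
            simp at hw
        · by_cases hfc : fixCount t = k + 1
          · rw [if_pos hfc, Finset.mem_image] at hw
            obtain ⟨l, -, rfl⟩ := hw
            rw [if_neg (Fin.castSucc_lt_last l).ne, hfc]
          · rw [if_neg hfc] at hw
            simp at hw
    rw [hset, Finset.card_image_of_injective _ (fun w1 w2 he => by
      have h1 : extm t w1 (Fin.last j) = w1 := extm_last t w1
      have h2 : extm t w2 (Fin.last j) = w2 := extm_last t w2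
      rw [← h1, ← h2, he]), hW]
    rw [Finset.card_union_of_disjoint (by
      by_cases h1 : fixCount t = k
      · by_cases h2 : fixCount t = k+1
        · exact absurd (h1.symm.trans h2) (by omega)
        · rw [if_neg h2]
          exact Finset.disjoint_empty_right _
      · rw [if_neg h1]
        exact Finset.disjoint_empty_left _)]
    congr 1
    · split
      · exact Finset.card_singleton _
      · exact Finset.card_empty
    · split
      · rename_i hfc
        rw [Finset.card_image_of_injective _ (Fin.castSucc_injective j)]
        exact hfc
      · exact Finset.card_empty
  calc ∑ t ∈ MMF j, ((MMk (j+1) (k+1)).filter (fun m => resm m = t)).card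
      = ∑ t ∈ MMF j,
        ((if fixCount t = k then 1 else 0) + (if fixCount t = k+1 then k+1 else 0)) :=
        Finset.sum_congr rfl hfib
    _ = (MMk j k).card + (k+1) * (MMk j (k+1)).card := by
        rw [Finset.sum_add_distrib]
        congr 1
        · rw [MMk, Finset.card_filter]
        · have hc : ∀ t ∈ MMF j, (if fixCount t = k+1 then k+1 else 0) =
              (k+1) * (if fixCount t = k+1 then 1 else 0) := by
            intro t _
            split <;> ring
          rw [Finset.sum_congr rfl hc, ← Finset.mul_sum, MMk, Finset.card_filter]
    _ = (k+1) * (MMk j (k+1)).card + (MMk j k).card := by ring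

lemma card_MMk (j k : ℕ) : (MMk j k).card = stirling2 j k := by
  induction j generalizing k with
  | zero =>
    cases k with
    | zero => rw [card_MMk_zero_zero]; rfl
    | succ k => rw [card_MMk_zero_succ]; rfl
  | succ j IH =>
    cases k with
    | zero => rw [card_MMk_succ_zero]; rfl
    | succ k => rw [card_MMk_succ, IH, IH, stirling2_succ]

/-- min maps satisfying the LBS condition -/
def LBSF (n : ℕ) : Finset (Fin n → Fin n) := (MMF n).filter IsLB

lemma mem_LBSF {n : ℕ} {m : Fin n → Fin n} : m ∈ LBSF n ↔ IsMM m ∧ IsLB m := by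
  unfold LBSF
  rw [mem_filter, mem_MMF]

section ResX

variable {n : ℕ} {x : Fin n}

/-- restriction of a min map to the part below `x` -/
def resx (x : Fin n) (m : Fin n → Fin n) : Fin x.val → Fin x.val := fun i =>
  if h : (m (Fin.castLE x.isLt.le i)).val < x.val
  then ⟨(m (Fin.castLE x.isLt.le i)).val, h⟩ else i

lemma resx_val {m : Fin n → Fin n} (hm : IsMM m) (i : Fin x.val) :
    (resx x m i).val = (m (Fin.castLE x.isLt.le i)).val := by
  have hb : (m (Fin.castLE x.isLt.le i)).val < x.val :=
    lt_of_le_of_lt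
      ((hm (Fin.castLE x.isLt.le i)).1 :
        (m (Fin.castLE x.isLt.le i)).val ≤ (Fin.castLE x.isLt.le i).val) i.isLt
  unfold resx
  rw [dif_pos hb]

lemma resx_castLE {m : Fin n → Fin n} (hm : IsMM m) (i : Fin x.val) :
    Fin.castLE x.isLt.le (resx x m i) = m (Fin.castLE x.isLt.le i) :=
  Fin.ext (resx_val hm i)

lemma resx_isMM {m : Fin n → Fin n} (hm : IsMM m) : IsMM (resx x m) := by
  intro i
  constructor
  · show (resx x m i).val ≤ i.val
    rw [resx_val hm]
    exact (hm (Fin.castLE x.isLt.le i)).1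
  · apply Fin.ext
    rw [resx_val hm, resx_castLE hm, (hm (Fin.castLE x.isLt.le i)).2, ← resx_castLE hm]
    rfl

end ResX

lemma card_LBSF (n : ℕ) (hn : 0 < n) :
    (LBSF n).card =
      ∑ x : Fin n, ∑ k ∈ Finset.range n, stirling2 x.val k * k ^ (n - 1 - x.val) := by
  classical
  have hne : (univ : Finset (Fin n)).Nonempty := ⟨⟨0, hn⟩, mem_univ _⟩
  set spec : (Fin n → Fin n) → Fin n := fun m => (univ.image m).max' (hne.image m) with hspecdef
  have hspec : ∀ (m : Fin n → Fin n) (x : Fin n), m x = x → (∀ i, i ≠ x → m i < x) →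
      spec m = x := by
    intro m x hx1 hx2
    apply le_antisymm
    · apply Finset.max'_le
      intro y hy
      rw [Finset.mem_image] at hy
      obtain ⟨i, -, rfl⟩ := hy
      by_cases h : i = x
      · rw [h, hx1]
      · exact le_of_lt (hx2 i h)
    · apply Finset.le_max'
      rw [Finset.mem_image]
      exact ⟨x, mem_univ _, hx1⟩
  have hmaps : ∀ m ∈ LBSF n, spec m ∈ (univ : Finset (Fin n)) := fun _ _ => mem_univ _
  rw [Finset.card_eq_sum_card_fiberwise hmaps]
  apply Finset.sum_congr rfl
  intro x _
  have hGx : (LBSF n).filter (fun m => spec m = x) =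
      univ.filter (fun m : Fin n → Fin n => IsMM m ∧ m x = x ∧ ∀ i, i ≠ x → m i < x) := by
    ext m
    rw [mem_filter, mem_LBSF, mem_filter]
    constructor
    · rintro ⟨⟨hmm, x₀, hx1, hx2⟩, hsp⟩
      have heq := hspec m x₀ hx1 hx2
      rw [heq] at hsp
      subst hsp
      exact ⟨mem_univ _, hmm, hx1, hx2⟩
    · rintro ⟨-, hmm, hx1, hx2⟩
      exact ⟨⟨hmm, x, hx1, hx2⟩, hspec m x hx1 hx2⟩
  rw [hGx]
  have hmaps2 : ∀ m ∈ univ.filter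
      (fun m : Fin n → Fin n => IsMM m ∧ m x = x ∧ ∀ i, i ≠ x → m i < x),
      resx x m ∈ MMF x.val := by
    intro m hm
    rw [mem_filter] at hm
    rw [mem_MMF]
    exact resx_isMM hm.2.1
  rw [Finset.card_eq_sum_card_fiberwise hmaps2]
  have hfib : ∀ t ∈ MMF x.val,
      ((univ.filter
        (fun m : Fin n → Fin n => IsMM m ∧ m x = x ∧ ∀ i, i ≠ x → m i < x)).filter
          (fun m => resx x m = t)).card = fixCount t ^ (n - 1 - x.val) := by
    intro t ht
    have htm : IsMM t := mem_MMF.mp ht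
    set S : Fin n → Finset (Fin n) := fun i =>
      if h : i.val < x.val then {Fin.castLE x.isLt.le (t ⟨i.val, h⟩)}
      else if i = x then {x}
      else (univ.filter fun l : Fin x.val => t l = l).image (Fin.castLE x.isLt.le) with hS
    have hSlow : ∀ (i : Fin n) (h : i.val < x.val),
        S i = {Fin.castLE x.isLt.le (t ⟨i.val, h⟩)} := by
      intro i h
      rw [hS]
      exact dif_pos h
    have hSx : S x = {x} := by
      rw [hS]
      exact (dif_neg (lt_irrefl x.val)).trans (if_pos rfl)
    have hShigh : ∀ (i : Fin n), ¬ i.val < x.val → i ≠ x →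
        S i = (univ.filter fun l : Fin x.val => t l = l).image (Fin.castLE x.isLt.le) := by
      intro i h h2
      rw [hS]
      exact (dif_neg h).trans (if_neg h2)
    have hset : (univ.filter
        (fun m : Fin n → Fin n => IsMM m ∧ m x = x ∧ ∀ i, i ≠ x → m i < x)).filter
          (fun m => resx x m = t) = Fintype.piFinset S := by
      ext m
      rw [mem_filter, mem_filter, Fintype.mem_piFinset]
      constructor
      · rintro ⟨⟨-, hmm, hx1, hx2⟩, hres⟩
        intro i
        by_cases h : i.val < x.val
        · rw [hSlow i h, Finset.mem_singleton]
          have hcl : Fin.castLE x.isLt.le (⟨i.val, h⟩ : Fin x.val) = i := Fin.ext rfl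
          have h5 := resx_castLE hmm (x := x) ⟨i.val, h⟩
          rw [hres, hcl] at h5
          exact h5.symm
        · by_cases h2 : i = x
          · rw [h2, hSx, Finset.mem_singleton]
            exact hx1
          · rw [hShigh i h h2, Finset.mem_image]
            have hmi : m i < x := hx2 i h2
            have hmiv : (m i).val < x.val := hmi
            refine ⟨⟨(m i).val, hmiv⟩, ?_, Fin.ext rfl⟩
            rw [mem_filter]
            refine ⟨mem_univ _, ?_⟩
            have hcl : Fin.castLE x.isLt.le (⟨(m i).val, hmiv⟩ : Fin x.val) = m i :=
              Fin.ext rfl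
            have hidem := (hmm i).2
            have h5 := resx_castLE hmm (x := x) ⟨(m i).val, hmiv⟩
            rw [hres, hcl, hidem] at h5
            apply Fin.castLE_injective x.isLt.le
            rw [h5, hcl]
      · intro hmem
        have hlow : ∀ (i : Fin n) (h : i.val < x.val),
            m i = Fin.castLE x.isLt.le (t ⟨i.val, h⟩) := by
          intro i h
          have hmi := hmem i
          rw [hSlow i h, Finset.mem_singleton] at hmi
          exact hmi
        have hxx : m x = x := by
          have hmi := hmem x
          rw [hSx, Finset.mem_singleton] at hmi
          exact hmi
        have hhigh : ∀ (i : Fin n), ¬ i.val < x.val → i ≠ x →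
            ∃ l : Fin x.val, t l = l ∧ m i = Fin.castLE x.isLt.le l := by
          intro i h h2
          have hmi := hmem i
          rw [hShigh i h h2, Finset.mem_image] at hmi
          obtain ⟨l, hl, he⟩ := hmi
          rw [mem_filter] at hl
          exact ⟨l, hl.2, he.symm⟩
        have hlt : ∀ i : Fin n, i ≠ x → m i < x := by
          intro i h2
          by_cases h : i.val < x.val
          · rw [hlow i h]
            show (t ⟨i.val, h⟩).val < x.val
            exact (t ⟨i.val, h⟩).isLt
          · obtain ⟨l, -, he⟩ := hhigh i h h2
            rw [he]
            exact l.isLt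
        have hmm : IsMM m := by
          intro i
          constructor
          · by_cases h2 : i = x
            · rw [h2, hxx]
            · by_cases h : i.val < x.val
              · rw [hlow i h]
                show (t ⟨i.val, h⟩).val ≤ i.val
                exact (htm ⟨i.val, h⟩).1
              · have hmi : (m i).val < x.val := hlt i h2
                have hxi : x.val ≤ i.val := not_lt.mp h
                show (m i).val ≤ i.val
                omega
          · by_cases h2 : i = x
            · rw [h2, hxx, hxx]
            · by_cases h : i.val < x.val
              · rw [hlow i h]
                have hv : (Fin.castLE x.isLt.le (t ⟨i.val, h⟩)).val < x.val :=
                  (t ⟨i.val, h⟩).isLt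
                rw [hlow _ hv]
                have harg : (⟨(Fin.castLE x.isLt.le (t ⟨i.val, h⟩)).val, hv⟩ : Fin x.val) =
                    t ⟨i.val, h⟩ := Fin.ext rfl
                rw [harg, (htm ⟨i.val, h⟩).2]
              · obtain ⟨l, hfixl, he⟩ := hhigh i h h2
                rw [he]
                have hv : (Fin.castLE x.isLt.le l).val < x.val := l.isLt
                rw [hlow _ hv]
                have harg : (⟨(Fin.castLE x.isLt.le l).val, hv⟩ : Fin x.val) = l :=
                  Fin.ext rfl
                rw [harg, hfixl]
        refine ⟨⟨mem_univ _, hmm, hxx, hlt⟩, ?_⟩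
        funext i'
        have hv : (Fin.castLE x.isLt.le i').val < x.val := i'.isLt
        apply Fin.ext
        rw [resx_val hmm, hlow _ hv]
        show (t ⟨(Fin.castLE x.isLt.le i').val, hv⟩).val = (t i').val
        congr 2
    rw [hset, Fintype.card_piFinset]
    have hcard : ∀ i : Fin n, (S i).card = if x < i then fixCount t else 1 := by
      intro i
      by_cases h : i.val < x.val
      · rw [hSlow i h, if_neg (not_lt.mpr (le_of_lt (show i < x from h))),
          Finset.card_singleton]
      · by_cases h2 : i = x
        · rw [h2, hSx, if_neg (lt_irrefl x), Finset.card_singleton]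
        · have hxi : x < i := by
            have h3 : x.val ≤ i.val := not_lt.mp h
            have h4 : x.val ≠ i.val := fun he => h2 (Fin.ext he.symm)
            show x.val < i.val
            omega
          rw [hShigh i h h2, if_pos hxi,
            Finset.card_image_of_injective _ (Fin.castLE_injective _)]
          rfl
    rw [Finset.prod_congr rfl (fun i _ => hcard i), Finset.prod_ite, Finset.prod_const,
      Finset.prod_const, one_pow, mul_one]
    congr 1
    have hIoi : univ.filter (fun i => x < i) = Finset.Ioi x := by
      ext i
      simp [Finset.mem_Ioi]
    rw [hIoi, Fin.card_Ioi]
  rw [Finset.sum_congr rfl hfib]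
  have hmaps3 : ∀ t ∈ MMF x.val, fixCount t ∈ Finset.range n := by
    intro t _
    rw [Finset.mem_range]
    have h1 : fixCount t ≤ Fintype.card (Fin x.val) := by
      unfold fixCount
      exact le_trans (Finset.card_filter_le _ _) (le_of_eq (Finset.card_univ))
    rw [Fintype.card_fin] at h1
    have := x.isLt
    omega
  rw [← Finset.sum_fiberwise_of_maps_to hmaps3 (fun t => fixCount t ^ (n - 1 - x.val))]
  apply Finset.sum_congr rfl
  intro k _
  have hsub : ∀ t ∈ (MMF x.val).filter (fun t => fixCount t = k),
      fixCount t ^ (n - 1 - x.val) = k ^ (n - 1 - x.val) := by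
    intro t htk
    rw [(Finset.mem_filter.mp htk).2]
  rw [Finset.sum_congr rfl hsub, Finset.sum_const, smul_eq_mul]
  have : (MMF x.val).filter (fun t => fixCount t = k) = MMk x.val k := rfl
  rw [this, card_MMk]

end Counting


noncomputable section Partitions

variable {n : ℕ}

lemma min'_congr' {s t : Finset (Fin n)} (hs : s.Nonempty) (ht : t.Nonempty) (h : s = t) :
    s.min' hs = t.min' ht := by subst h; rfl

/-- the min map of a finpartition -/
def mofP (P : Finpartition (univ : Finset (Fin n))) : Fin n → Fin n :=
  fun a => (P.part a).min' ⟨a, P.mem_part (mem_univ a)⟩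

lemma mofP_mem (P : Finpartition (univ : Finset (Fin n))) (a : Fin n) :
    mofP P a ∈ P.part a := Finset.min'_mem _ _

lemma mofP_le (P : Finpartition (univ : Finset (Fin n))) (a : Fin n) : mofP P a ≤ a :=
  Finset.min'_le _ a (P.mem_part (mem_univ a))

lemma part_mofP (P : Finpartition (univ : Finset (Fin n))) (a : Fin n) :
    P.part (mofP P a) = P.part a :=
  P.part_eq_of_mem (P.part_mem.mpr (mem_univ a)) (mofP_mem P a)

lemma mofP_idem (P : Finpartition (univ : Finset (Fin n))) (a : Fin n) :
    mofP P (mofP P a) = mofP P a :=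
  min'_congr' _ _ (part_mofP P a)

lemma mofP_isMM (P : Finpartition (univ : Finset (Fin n))) : IsMM (mofP P) :=
  fun a => ⟨mofP_le P a, mofP_idem P a⟩

lemma mofP_isLB {P : Finpartition (univ : Finset (Fin n))} (hP : LastBlockSingleton P) :
    IsLB (mofP P) := by
  obtain ⟨B, hB, hcard, hmin⟩ := hP
  obtain ⟨x, rfl⟩ := Finset.card_eq_one.mp hcard
  have hpx : P.part x = {x} := P.part_eq_of_mem hB (Finset.mem_singleton_self x)
  refine ⟨x, ?_, ?_⟩
  · have := min'_congr' (⟨x, P.mem_part (mem_univ x)⟩ : (P.part x).Nonempty)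
      (Finset.singleton_nonempty x) hpx
    rw [Finset.min'_singleton] at this
    exact this
  · intro i hi
    have hne : P.part i ≠ {x} := by
      intro he
      apply hi
      have hmem := P.mem_part (mem_univ i)
      rw [he, Finset.mem_singleton] at hmem
      exact hmem
    have h1 := hmin (P.part i) (P.part_mem.mpr (mem_univ i)) hne
    rw [Finset.min_singleton] at h1
    have h2 : (↑(mofP P i) : WithTop (Fin n)) = (P.part i).min := Finset.coe_min' _
    rw [← h2] at h1
    exact_mod_cast h1

lemma mofP_part_char (P : Finpartition (univ : Finset (Fin n))) (a : Fin n) :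
    P.part a = univ.filter (fun b => mofP P b = mofP P a) := by
  ext b
  rw [mem_filter]
  constructor
  · intro hb
    refine ⟨mem_univ _, ?_⟩
    exact min'_congr' _ _ (P.part_eq_of_mem (P.part_mem.mpr (mem_univ a)) hb)
  · rintro ⟨-, he⟩
    have h1 : mofP P b ∈ P.part b := mofP_mem P b
    have h2 : mofP P a ∈ P.part a := mofP_mem P a
    rw [he] at h1
    have hb' : P.part (mofP P a) = P.part b :=
      P.part_eq_of_mem (P.part_mem.mpr (mem_univ b)) h1
    have ha' : P.part (mofP P a) = P.part a :=
      P.part_eq_of_mem (P.part_mem.mpr (mem_univ a)) h2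
    have h3 : P.part b = P.part a := hb'.symm.trans ha'
    rw [← h3]
    exact P.mem_part (mem_univ b)

lemma mofP_inj {P Q : Finpartition (univ : Finset (Fin n))} (h : mofP P = mofP Q) :
    P = Q := by
  have key : ∀ (R S : Finpartition (univ : Finset (Fin n))), mofP R = mofP S →
      ∀ B ∈ R.parts, B ∈ S.parts := by
    intro R S h B hB
    obtain ⟨a, ha⟩ := R.nonempty_of_mem_parts hB
    have h1 : B = R.part a := (R.part_eq_of_mem hB ha).symm
    rw [h1, mofP_part_char R a]
    simp only [h]
    rw [← mofP_part_char S a]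
    exact S.part_mem.mpr (mem_univ a)
  apply Finpartition.ext
  ext B
  exact ⟨fun hB => key P Q h B hB, fun hB => key Q P h.symm B hB⟩

/-- the finpartition of a min map -/
def pOf (m : Fin n → Fin n) : Finpartition (univ : Finset (Fin n)) :=
  Finpartition.ofSetoid (Setoid.ker m)

lemma mem_part_pOf (m : Fin n → Fin n) (a b : Fin n) :
    b ∈ (pOf m).part a ↔ m a = m b := by
  unfold pOf
  rw [Finpartition.mem_part_ofSetoid_iff_rel]
  exact Setoid.ker_def

lemma mofP_pOf {m : Fin n → Fin n} (hm : IsMM m) : mofP (pOf m) = m := by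
  funext a
  apply le_antisymm
  · apply Finset.min'_le
    rw [mem_part_pOf]
    exact ((hm a).2).symm
  · apply Finset.le_min'
    intro b hb
    rw [mem_part_pOf] at hb
    calc m a = m b := hb
      _ ≤ b := (hm b).1

lemma pOf_LBS {m : Fin n → Fin n} (hm : IsMM m) (x : Fin n) (hx1 : m x = x)
    (hx2 : ∀ i, i ≠ x → m i < x) : LastBlockSingleton (pOf m) := by
  have hpx : (pOf m).part x = {x} := by
    ext b
    rw [mem_part_pOf, Finset.mem_singleton, hx1]
    constructor
    · intro h
      by_contra hbx
      exact absurd h.symm (ne_of_lt (hx2 b hbx))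
    · rintro rfl
      exact hx1.symm
  refine ⟨{x}, ?_, Finset.card_singleton x, ?_⟩
  · rw [← hpx]
    exact (pOf m).part_mem.mpr (mem_univ x)
  · intro B' hB' hne
    obtain ⟨a, ha⟩ := (pOf m).nonempty_of_mem_parts hB'
    have h1 : B' = (pOf m).part a := ((pOf m).part_eq_of_mem hB' ha).symm
    have h2 : m a ≠ x := by
      intro he
      apply hne
      have hx_mem : x ∈ (pOf m).part a := (mem_part_pOf m a x).mpr (by rw [hx1]; exact he)
      have := (pOf m).part_eq_of_mem ((pOf m).part_mem.mpr (mem_univ a)) hx_mem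
      rw [h1, ← this, hpx]
    have h3 : a ≠ x := fun he => h2 (by rw [he, hx1])
    have h4 : m a < x := hx2 a h3
    have h5 : B'.min = ((m a : Fin n) : WithTop (Fin n)) := by
      rw [h1, ← Finset.coe_min' ⟨a, (pOf m).mem_part (mem_univ a)⟩]
      congr 1
      exact congrFun (mofP_pOf hm) a
    rw [h5, Finset.min_singleton]
    exact_mod_cast h4

lemma card_partitions (n : ℕ) :
    Nat.card {P : Finpartition (univ : Finset (Fin n)) // LastBlockSingleton P} =
      (LBSF n).card := by
  classical
  rw [← Nat.card_eq_finsetCard]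
  apply Nat.card_congr
  refine Equiv.ofBijective (fun P => ⟨mofP P.1, ?_⟩) ⟨?_, ?_⟩
  · rw [mem_LBSF]
    exact ⟨mofP_isMM P.1, mofP_isLB P.2⟩
  · rintro ⟨P, hP⟩ ⟨Q, hQ⟩ h
    have hmo : mofP P = mofP Q := congrArg Subtype.val h
    exact Subtype.ext (mofP_inj hmo)
  · rintro ⟨m, hm⟩
    rw [mem_LBSF] at hm
    obtain ⟨hmm, x, hx1, hx2⟩ := hm
    exact ⟨⟨pOf m, pOf_LBS hmm x hx1 hx2⟩, Subtype.ext (mofP_pOf hmm)⟩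

lemma card_good (n : ℕ) (hn : 0 < n) :
    {π : Equiv.Perm (Fin n) | Increasing π ∧ valCount π = desCount π}.ncard =
      (LBSF n).card := by
  classical
  rw [← Nat.card_coe_set_eq, ← Nat.card_eq_finsetCard]
  apply Nat.card_congr
  refine Equiv.ofBijective (fun π => ⟨mOf π.1, ?_⟩) ⟨?_, ?_⟩
  · obtain ⟨h1, h2⟩ := π.2
    rw [mem_LBSF]
    exact ⟨mOf_isMM h1 h2, mOf_isLB h1 h2 hn⟩
  · rintro ⟨π, h1, h2⟩ ⟨π', h1', h2'⟩ h
    have hmo : mOf π = mOf π' := congrArg Subtype.val h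
    apply Subtype.ext
    show π = π'
    have e1 := good_eq_sort h1 h2
    have e2 := good_eq_sort h1' h2'
    rw [e1, e2, hmo]
  · rintro ⟨m, hm⟩
    rw [mem_LBSF] at hm
    obtain ⟨hmm, x, hx1, hx2⟩ := hm
    refine ⟨⟨Theta m, theta_increasing hmm, theta_valCount hmm hx1 hx2⟩, ?_⟩
    apply Subtype.ext
    show mOf (Theta m) = m
    exact theta_mOf hmm hx1 hx2

end Partitions

end AuxDev

theorem increasing_val_eq_des_count (n : ℕ) (hn : 1 ≤ n) :
    {π : Equiv.Perm (Fin n) | Increasing π ∧ valCount π = desCount π}.ncard =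
      (∑ k ∈ Finset.range n, ∑ j ∈ Finset.Icc k (n - 1),
        stirling2 j k * k ^ (n - 1 - j)) ∧
    {π : Equiv.Perm (Fin n) | Increasing π ∧ valCount π = desCount π}.ncard =
      Nat.card {P : Finpartition (Finset.univ : Finset (Fin n)) // LastBlockSingleton P} := by
  have hn0 : 0 < n := hn
  constructor
  · rw [card_good n hn0, card_LBSF n hn0]
    rw [Fin.sum_univ_eq_sum_range
      (fun j => ∑ k ∈ Finset.range n, stirling2 j k * k ^ (n - 1 - j)) n]
    rw [Finset.sum_comm]
    apply Finset.sum_congr rfl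
    intro k hk
    refine (Finset.sum_subset ?_ ?_).symm
    · intro j hj
      rw [Finset.mem_Icc] at hj
      rw [Finset.mem_range]
      omega
    · intro j hj hj2
      rw [Finset.mem_range] at hj
      rw [Finset.mem_Icc] at hj2
      have hjk : j < k := by omega
      rw [stirling2_eq_zero_of_lt hjk, zero_mul]
  · rw [card_good n hn0, ← card_partitions n]
end

section
/- There is a bijection between the set of increasing permutations π of {1,...,n} with val(π) = des(π) and the set of partitions of {1,...,n} into blocks such that, when blocks are ordered by their smallest elements, the last block is a singleton. -/
open Finset

namespace ValDesBij

open Finset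

variable {n : ℕ}

/-- the last index, as a member of `Fin n` -/
def lastIdx (i : Fin n) : Fin n := ⟨n - 1, Nat.sub_lt i.pos one_pos⟩

theorem le_lastIdx (i : Fin n) : i ≤ lastIdx i :=
  Nat.le_sub_one_of_lt i.isLt

theorem isRLMin_lastIdx (π : Equiv.Perm (Fin n)) (i : Fin n) : IsRLMin π (lastIdx i) := by
  intro j hj
  exact absurd (Nat.lt_of_lt_of_le hj (Nat.le_sub_one_of_lt j.isLt)) (lt_irrefl _)

open scoped Classical in
/-- the set of right-to-left-minimum positions weakly to the right of `i` -/
noncomputable def rlSet (π : Equiv.Perm (Fin n)) (i : Fin n) : Finset (Fin n) :=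
  Finset.univ.filter fun j => i ≤ j ∧ IsRLMin π j

theorem rlSet_nonempty (π : Equiv.Perm (Fin n)) (i : Fin n) : (rlSet π i).Nonempty := by
  classical
  exact ⟨lastIdx i, by simp [rlSet, le_lastIdx, isRLMin_lastIdx]⟩

/-- position of the first right-to-left minimum at or after `i` -/
noncomputable def eIdx (π : Equiv.Perm (Fin n)) (i : Fin n) : Fin n :=
  (rlSet π i).min' (rlSet_nonempty π i)

theorem eIdx_mem (π : Equiv.Perm (Fin n)) (i : Fin n) : eIdx π i ∈ rlSet π i :=
  Finset.min'_mem _ _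

theorem le_eIdx (π : Equiv.Perm (Fin n)) (i : Fin n) : i ≤ eIdx π i := by
  classical
  have := eIdx_mem π i
  simp only [rlSet, Finset.mem_filter] at this
  exact this.2.1

theorem isRLMin_eIdx (π : Equiv.Perm (Fin n)) (i : Fin n) : IsRLMin π (eIdx π i) := by
  classical
  have := eIdx_mem π i
  simp only [rlSet, Finset.mem_filter] at this
  exact this.2.2

theorem eIdx_min (π : Equiv.Perm (Fin n)) {i j : Fin n} (hij : i ≤ j) (hj : IsRLMin π j) :
    eIdx π i ≤ j := by
  classical
  exact Finset.min'_le _ _ (by simp [rlSet, hij, hj])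

theorem eIdx_eq_self (π : Equiv.Perm (Fin n)) {i : Fin n} (h : IsRLMin π i) : eIdx π i = i :=
  le_antisymm (eIdx_min π le_rfl h) (le_eIdx π i)

theorem eIdx_interval (π : Equiv.Perm (Fin n)) {i j : Fin n} (hij : i ≤ j)
    (hj : j ≤ eIdx π i) : eIdx π j = eIdx π i := by
  refine le_antisymm (eIdx_min π hj (isRLMin_eIdx π i)) ?_
  exact eIdx_min π (le_trans hij (le_eIdx π j)) (isRLMin_eIdx π j)

/-- the value at the segment-closing right-to-left minimum is the minimum value
on the whole segment -/
theorem eIdx_apply_le (π : Equiv.Perm (Fin n)) {i u : Fin n} (hiu : i ≤ u)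
    (hu : u ≤ eIdx π i) : π (eIdx π i) ≤ π u := by
  classical
  obtain ⟨u₀, hu₀mem, hu₀min⟩ :=
    Finset.exists_min_image (Finset.Icc i (eIdx π i)) (fun t => π t)
      ⟨u, Finset.mem_Icc.2 ⟨hiu, hu⟩⟩
  rw [Finset.mem_Icc] at hu₀mem
  have hrl : IsRLMin π u₀ := by
    intro j hj
    rcases le_or_gt j (eIdx π i) with hle | hlt
    · have hmem : j ∈ Finset.Icc i (eIdx π i) :=
        Finset.mem_Icc.2 ⟨le_trans hu₀mem.1 (le_of_lt hj), hle⟩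
      exact lt_of_le_of_ne (hu₀min j hmem) fun h => (ne_of_lt hj) (π.injective h)
    · calc π u₀ ≤ π (eIdx π i) := hu₀min _ (Finset.mem_Icc.2 ⟨le_eIdx π i, le_rfl⟩)
        _ < π j := isRLMin_eIdx π i j hlt
  have : u₀ = eIdx π i := le_antisymm hu₀mem.2 (eIdx_min π hu₀mem.1 hrl)
  rw [← this]
  exact hu₀min u (Finset.mem_Icc.2 ⟨hiu, hu⟩)

theorem eIdx_apply_lt (π : Equiv.Perm (Fin n)) {i u : Fin n} (hiu : i ≤ u)
    (hu : u ≤ eIdx π i) (hne : u ≠ eIdx π i) : π (eIdx π i) < π u :=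
  lt_of_le_of_ne (eIdx_apply_le π hiu hu) fun h => hne (π.injective h.symm)

end ValDesBij
namespace ValDesBij

open Finset

variable {n : ℕ} {π : Equiv.Perm (Fin n)}

/-- In a permutation with `val = des`, every descent is immediately followed by an ascent
(i.e. its bottom is a valley). -/
theorem descent_valley (hvd : valCount π = desCount π) {i : Fin n} (h1 : i.val + 1 < n)
    (hd : π ⟨i.val + 1, h1⟩ < π i) :
    ∃ h2 : i.val + 2 < n, π ⟨i.val + 1, h1⟩ < π ⟨i.val + 2, h2⟩ := by
  classical
  set V : Set (Fin n) := {ℓ | IsValley π ℓ} with hV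
  set D : Set (Fin n) := {ℓ : Fin n | ∃ h : ℓ.val + 1 < n, π ⟨ℓ.val + 1, h⟩ < π ℓ} with hD
  set g : Fin n → Fin n := fun v => ⟨v.val - 1, lt_of_le_of_lt (Nat.sub_le _ _) v.isLt⟩ with hg
  have hsub : g '' V ⊆ D := by
    rintro x ⟨v, hv, rfl⟩
    obtain ⟨h0, h2, hdes, _⟩ := hv
    have hlt : (g v).val + 1 < n := by
      simp only [hg]
      omega
    refine ⟨hlt, ?_⟩
    have : (⟨(g v).val + 1, hlt⟩ : Fin n) = v := by
      apply Fin.ext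
      simp only [hg]
      omega
    rw [this]
    exact hdes
  have hinj : Set.InjOn g V := by
    intro a ha b hb hab
    have ha1 : 1 ≤ a.val := ha.1
    have hb1 : 1 ≤ b.val := hb.1
    have h' : a.val - 1 = b.val - 1 := congrArg Fin.val hab
    apply Fin.ext
    omega
  have hcard : (g '' V).ncard = D.ncard := by
    rw [Set.ncard_image_of_injOn hinj]
    exact hvd
  have heq : g '' V = D :=
    Set.eq_of_subset_of_ncard_le hsub (le_of_eq hcard.symm) (Set.toFinite _)
  have hiD : i ∈ D := ⟨h1, hd⟩
  rw [← heq] at hiD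
  obtain ⟨v, hv, hgv⟩ := hiD
  obtain ⟨h0, h2, _, hasc⟩ := hv
  have hvval : v.val = i.val + 1 := by
    have : v.val - 1 = i.val := by
      have := congrArg Fin.val hgv
      simpa [hg] using this
    omega
  have h2' : i.val + 2 < n := by omega
  refine ⟨h2', ?_⟩
  have e1 : (⟨i.val + 1, h1⟩ : Fin n) = v := Fin.ext hvval.symm
  have e2 : (⟨i.val + 2, h2'⟩ : Fin n) = ⟨v.val + 1, h2⟩ := Fin.ext (by simp; omega)
  rw [e1, e2]
  exact hasc

/-- In an increasing permutation with `val = des`, every descent bottom is a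
right-to-left minimum. -/
theorem descent_rlmin (hinc : Increasing π) (hvd : valCount π = desCount π) {i : Fin n}
    (h1 : i.val + 1 < n) (hd : π ⟨i.val + 1, h1⟩ < π i) :
    IsRLMin π ⟨i.val + 1, h1⟩ := by
  classical
  set v : Fin n := ⟨i.val + 1, h1⟩ with hv
  obtain ⟨u, humem, humin⟩ :=
    Finset.exists_min_image (Finset.Ici v) (fun t => π t) ⟨v, Finset.mem_Ici.2 le_rfl⟩
  rw [Finset.mem_Ici] at humem
  have hurl : IsRLMin π u := by
    intro j hj
    have : j ∈ Finset.Ici v := Finset.mem_Ici.2 (le_trans humem (le_of_lt hj))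
    exact lt_of_le_of_ne (humin j this) fun h => (ne_of_lt hj) (π.injective h)
  -- v is a valley
  obtain ⟨h2, hasc⟩ := descent_valley hvd h1 hd
  have hvval : IsValley π v := by
    have h2v : v.val + 1 < n := h2
    have hdes : π ⟨v.val - 1, lt_of_le_of_lt (Nat.sub_le _ _) v.isLt⟩ > π v := by
      have e : (⟨v.val - 1, lt_of_le_of_lt (Nat.sub_le _ _) v.isLt⟩ : Fin n) = i :=
        Fin.ext (by simp [hv])
      rw [e]
      exact hd
    exact ⟨Nat.le_add_left 1 i.val, h2v, hdes, hasc⟩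
  rcases eq_or_lt_of_le humem with rfl | hlt
  · exact hurl
  · -- u is also a valley, contradicting increasingness
    exfalso
    have hu1 : 1 ≤ u.val := by
      have := hlt
      simp only [hv, Fin.lt_def] at this
      omega
    have hp : u.val - 1 < n := lt_of_le_of_lt (Nat.sub_le _ _) u.isLt
    set p : Fin n := ⟨u.val - 1, hp⟩ with hpdef
    have hpv : v ≤ p := by
      simp only [Fin.le_def, hpdef, hv]
      simp only [hv, Fin.lt_def] at hlt
      omega
    have hpd1 : p.val + 1 < n := by simp only [hpdef]; omega
    have hpu : (⟨p.val + 1, hpd1⟩ : Fin n) = u := Fin.ext (by simp [hpdef]; omega)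
    have hdesc_p : π ⟨p.val + 1, hpd1⟩ < π p := by
      rw [hpu]
      refine lt_of_le_of_ne (humin p (Finset.mem_Ici.2 hpv)) fun h => ?_
      have := π.injective h
      simp only [hpdef, Fin.ext_iff] at this
      omega
    obtain ⟨h2u, hascu⟩ := descent_valley hvd hpd1 hdesc_p
    have huval : IsValley π u := by
      have h2u' : u.val + 1 < n := by
        have h3 : p.val + 2 < n := h2u
        simp only [hpdef] at h3
        omega
      refine ⟨hu1, h2u', ?_, ?_⟩
      · have e : (⟨u.val - 1, lt_of_le_of_lt (Nat.sub_le _ _) u.isLt⟩ : Fin n) = p :=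
          Fin.ext (by simp [hpdef])
        rw [e, ← hpu]
        exact hdesc_p
      · have e2 : (⟨u.val + 1, h2u'⟩ : Fin n) = ⟨p.val + 2, h2u⟩ :=
          Fin.ext (by simp [hpdef]; omega)
        rw [e2, ← hpu]
        exact hascu
    have := hinc v u hvval huval hlt
    exact absurd (humin v (Finset.mem_Ici.2 le_rfl)) (not_le.2 this)

/-- no descent at the very end -/
theorem no_descent_end (hvd : valCount π = desCount π) {i : Fin n} (h1 : i.val + 1 < n)
    (hlast : i.val + 2 = n) : π i < π ⟨i.val + 1, h1⟩ := by
  rcases lt_trichotomy (π i) (π ⟨i.val + 1, h1⟩) with h | h | h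
  · exact h
  · exact absurd (π.injective h) (by simp [Fin.ext_iff])
  · obtain ⟨h2, -⟩ := descent_valley hvd h1 h
    omega

/-- within a segment, values ascend (before the final right-to-left minimum) -/
theorem seg_ascend (hinc : Increasing π) (hvd : valCount π = desCount π) {i j : Fin n}
    (hij : i ≤ j) (hjE : j < eIdx π i) : π i ≤ π j := by
  classical
  obtain ⟨k, hk⟩ : ∃ k, j.val = i.val + k := ⟨j.val - i.val, by omega⟩
  induction k generalizing j with
  | zero => have : i = j := Fin.ext (by omega); rw [this]
  | succ k ih =>
    have hj1 : 1 ≤ j.val := by omega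
    have hpn : i.val + k < n := by omega
    set p : Fin n := ⟨i.val + k, hpn⟩ with hpdef
    have hip : i ≤ p := by simp [Fin.le_def, hpdef]
    have hpj : p < j := by simp [Fin.lt_def, hpdef]; omega
    have hpE : p < eIdx π i := lt_trans hpj hjE
    have hstep : π p < π j := by
      by_contra hcon
      push_neg at hcon
      have hne : π j ≠ π p := fun h => (ne_of_lt hpj) (π.injective h).symm
      have hd : π j < π p := lt_of_le_of_ne hcon hne
      have hpd1 : p.val + 1 < n := by simp only [hpdef]; omega
      have hpj' : (⟨p.val + 1, hpd1⟩ : Fin n) = j := Fin.ext (by simp [hpdef]; omega)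
      have hrl := descent_rlmin hinc hvd hpd1 (by rw [hpj']; exact hd)
      rw [hpj'] at hrl
      have hEj : eIdx π j = j := eIdx_eq_self π hrl
      have hEE : eIdx π j = eIdx π i :=
        eIdx_interval π (le_of_lt (lt_of_le_of_lt hip hpj)) (le_of_lt hjE)
      rw [hEj] at hEE
      rw [← hEE] at hjE
      exact lt_irrefl _ hjE
    exact le_trans (ih hip hpE rfl) (le_of_lt hstep)

end ValDesBij
namespace ValDesBij

open Finset

variable {n : ℕ}

/-- the minimum of the block of `P` containing `v` -/
noncomputable def bmin (P : Finpartition (Finset.univ : Finset (Fin n))) (v : Fin n) : Fin n :=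
  (P.part v).min' (P.nonempty_of_mem_parts (P.part_mem.2 (mem_univ v)))

theorem bmin_mem (P : Finpartition (Finset.univ : Finset (Fin n))) (v : Fin n) :
    bmin P v ∈ P.part v := Finset.min'_mem _ _

theorem bmin_le (P : Finpartition (Finset.univ : Finset (Fin n))) (v : Fin n) :
    bmin P v ≤ v := Finset.min'_le _ _ (P.mem_part (mem_univ v))

theorem bmin_le_of_mem (P : Finpartition (Finset.univ : Finset (Fin n))) {v w : Fin n}
    (h : w ∈ P.part v) : bmin P v ≤ w := Finset.min'_le _ _ h

theorem part_bmin (P : Finpartition (Finset.univ : Finset (Fin n))) (v : Fin n) :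
    P.part (bmin P v) = P.part v :=
  P.part_eq_of_mem (P.part_mem.2 (mem_univ v)) (bmin_mem P v)

theorem bmin_of_part_eq (P : Finpartition (Finset.univ : Finset (Fin n))) {v w : Fin n}
    (h : P.part v = P.part w) : bmin P v = bmin P w := by
  unfold bmin
  congr 1

theorem bmin_bmin (P : Finpartition (Finset.univ : Finset (Fin n))) (v : Fin n) :
    bmin P (bmin P v) = bmin P v :=
  bmin_of_part_eq P (part_bmin P v)

theorem part_eq_of_bmin_eq (P : Finpartition (Finset.univ : Finset (Fin n))) {v w : Fin n}
    (h : bmin P v = bmin P w) : P.part v = P.part w := by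
  rw [← part_bmin P v, ← part_bmin P w, h]

/-- sorting key: block minimum first, then the block minimum itself counts as `⊤`
(goes last within its block), other elements ascending -/
noncomputable def key (P : Finpartition (Finset.univ : Finset (Fin n))) (v : Fin n) :
    Lex (Fin n × WithTop (Fin n)) :=
  toLex (bmin P v, if v = bmin P v then ⊤ else (v : WithTop (Fin n)))

theorem key_inj (P : Finpartition (Finset.univ : Finset (Fin n))) :
    Function.Injective (key P) := by
  intro v w h
  unfold key at h
  have h1 : bmin P v = bmin P w := congrArg (fun x => (ofLex x).1) h
  have h2 : (if v = bmin P v then (⊤ : WithTop (Fin n)) else v)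
      = (if w = bmin P w then (⊤ : WithTop (Fin n)) else w) := congrArg (fun x => (ofLex x).2) h
  by_cases hv : v = bmin P v <;> by_cases hw : w = bmin P w
  · rw [hv, hw, h1]
  · rw [if_pos hv, if_neg hw] at h2
    exact absurd h2.symm WithTop.coe_ne_top
  · rw [if_neg hv, if_pos hw] at h2
    exact absurd h2 WithTop.coe_ne_top
  · rw [if_neg hv, if_neg hw] at h2
    exact WithTop.coe_injective h2

theorem key_lt_iff {P : Finpartition (Finset.univ : Finset (Fin n))} {v w : Fin n} :
    key P v < key P w ↔ bmin P v < bmin P w ∨ bmin P v = bmin P w ∧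
      (if v = bmin P v then (⊤ : WithTop (Fin n)) else v)
        < (if w = bmin P w then (⊤ : WithTop (Fin n)) else w) := by
  unfold key
  simpa using Prod.Lex.lt_iff (x := toLex (bmin P v, if v = bmin P v then ⊤ else (v : WithTop (Fin n)))) (y := toLex (bmin P w, if w = bmin P w then ⊤ else (w : WithTop (Fin n))))

theorem key_le_iff {P : Finpartition (Finset.univ : Finset (Fin n))} {v w : Fin n} :
    key P v ≤ key P w ↔ bmin P v < bmin P w ∨ bmin P v = bmin P w ∧
      (if v = bmin P v then (⊤ : WithTop (Fin n)) else v)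
        ≤ (if w = bmin P w then (⊤ : WithTop (Fin n)) else w) := by
  unfold key
  simpa using Prod.Lex.le_iff (x := toLex (bmin P v, if v = bmin P v then ⊤ else (v : WithTop (Fin n)))) (y := toLex (bmin P w, if w = bmin P w then ⊤ else (w : WithTop (Fin n))))


/-- the setoid relating values in the same segment of `π` -/
def segSetoid (π : Equiv.Perm (Fin n)) : Setoid (Fin n) :=
  ⟨fun v w => eIdx π (π.symm v) = eIdx π (π.symm w), ⟨fun _ => rfl, Eq.symm, Eq.trans⟩⟩

open scoped Classical in
noncomputable def toPart (π : Equiv.Perm (Fin n)) :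
    Finpartition (Finset.univ : Finset (Fin n)) :=
  Finpartition.ofSetoid (segSetoid π)

open scoped Classical in
theorem mem_part_toPart (π : Equiv.Perm (Fin n)) {v w : Fin n} :
    w ∈ (toPart π).part v ↔ eIdx π (π.symm v) = eIdx π (π.symm w) := by
  unfold toPart
  exact Finpartition.mem_part_ofSetoid_iff_rel

theorem bmin_toPart (π : Equiv.Perm (Fin n)) (v : Fin n) :
    bmin (toPart π) v = π (eIdx π (π.symm v)) := by
  apply le_antisymm
  · apply bmin_le_of_mem
    rw [mem_part_toPart]
    rw [Equiv.symm_apply_apply]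
    exact (eIdx_eq_self π (isRLMin_eIdx π (π.symm v))).symm
  · apply Finset.le_min'
    intro w hw
    rw [mem_part_toPart] at hw
    have : π (eIdx π (π.symm v)) ≤ π (π.symm w) := by
      rw [hw]
      exact eIdx_apply_le π le_rfl (le_eIdx π (π.symm w))
    rwa [Equiv.apply_symm_apply] at this

end ValDesBij
namespace ValDesBij

open Finset

variable {n : ℕ} {π : Equiv.Perm (Fin n)}

theorem bmin_toPart_apply (π : Equiv.Perm (Fin n)) (i : Fin n) :
    bmin (toPart π) (π i) = π (eIdx π i) := by
  rw [bmin_toPart, Equiv.symm_apply_apply]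

theorem key_toPart_strictMono (hinc : Increasing π) (hvd : valCount π = desCount π) :
    StrictMono (fun i => key (toPart π) (π i)) := by
  intro i j hij
  have hbi := bmin_toPart_apply π i
  have hbj := bmin_toPart_apply π j
  have hEle : eIdx π i ≤ eIdx π j :=
    eIdx_min π (le_trans (le_of_lt hij) (le_eIdx π j)) (isRLMin_eIdx π j)
  rw [key_lt_iff]
  rcases eq_or_lt_of_le hEle with hEeq | hElt
  · -- same segment
    right
    constructor
    · rw [hbi, hbj, hEeq]
    · have hine : i ≠ eIdx π i := by
        intro h
        rw [h, hEeq] at hij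
        exact absurd (le_eIdx π j) (not_le.2 hij)
      have hicond : ¬ π i = bmin (toPart π) (π i) := by
        rw [hbi]
        exact fun h => hine (π.injective h)
      rw [if_neg hicond]
      by_cases hje : j = eIdx π j
      · have hjcond : π j = bmin (toPart π) (π j) := by
          rw [hbj, ← hje]
        rw [if_pos hjcond]
        exact WithTop.coe_lt_top _
      · have hjcond : ¬ π j = bmin (toPart π) (π j) := by
          rw [hbj]
          exact fun h => hje (π.injective h)
        rw [if_neg hjcond]
        rw [WithTop.coe_lt_coe]
        have hjlt : j < eIdx π i := by
          rw [hEeq]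
          exact lt_of_le_of_ne (le_eIdx π j) hje
        have := seg_ascend hinc hvd (le_of_lt hij) hjlt
        exact lt_of_le_of_ne this fun h => (ne_of_lt hij) (π.injective h)
  · -- different segments
    left
    rw [hbi, hbj]
    exact isRLMin_eIdx π i _ hElt

theorem lastBlockSingleton_toPart (hn : 1 ≤ n) (hvd : valCount π = desCount π) :
    LastBlockSingleton (toPart π) := by
  set last : Fin n := ⟨n - 1, Nat.sub_lt hn one_pos⟩ with hlastdef
  have hlastrl : IsRLMin π last := by
    intro j hj
    exact absurd (Nat.lt_of_lt_of_le hj (Nat.le_sub_one_of_lt j.isLt)) (lt_irrefl _)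
  have hle_last : ∀ t : Fin n, t ≤ last := fun t => Nat.le_sub_one_of_lt t.isLt
  set B : Finset (Fin n) := (toPart π).part (π last) with hBdef
  have hBmem : B ∈ (toPart π).parts := (toPart π).part_mem.2 (mem_univ _)
  have hsing : B = {π last} := by
    ext w
    rw [hBdef, mem_part_toPart, Equiv.symm_apply_apply, eIdx_eq_self π hlastrl,
      Finset.mem_singleton]
    constructor
    · intro h
      have hw : w = π (π.symm w) := (Equiv.apply_symm_apply π w).symm
      rcases le_or_gt n 1 with hn1 | hn2
      · rw [hw]
        congr 1
        apply Fin.ext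
        have := (π.symm w).isLt
        omega
      · set t := π.symm w with htdef
        by_cases hteq : t = last
        · rw [hw, hteq]
        · exfalso
          have hp : n - 2 < n := by omega
          set p : Fin n := ⟨n - 2, hp⟩ with hpdef
          have hprl : IsRLMin π p := by
            intro j hj
            have hjlast : j = last := by
              apply Fin.ext
              have h1 : p.val < j.val := hj
              have h2 : j.val < n := j.isLt
              simp only [hpdef] at h1
              simp only [hlastdef]
              omega
            have h1 : p.val + 1 < n := by simp only [hpdef]; omega
            have := no_descent_end hvd h1 (by simp only [hpdef]; omega)
            have e : (⟨p.val + 1, h1⟩ : Fin n) = last := Fin.ext (by simp [hpdef, hlastdef]; omega)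
            rw [e] at this
            rw [hjlast]
            exact this
          have htp : t ≤ p := by
            have h1 : t.val < n := t.isLt
            have h2 : t.val ≠ n - 1 := fun h => hteq (Fin.ext h)
            show t.val ≤ p.val
            simp only [hpdef]
            omega
          have := eIdx_min π htp hprl
          rw [← h] at this
          have hlt : p < last := by
            simp only [Fin.lt_def, hpdef, hlastdef]
            omega
          exact absurd (lt_of_le_of_lt this hlt) (lt_irrefl _)
    · intro h
      rw [h, Equiv.symm_apply_apply, eIdx_eq_self π hlastrl]
  refine ⟨B, hBmem, by rw [hsing]; exact Finset.card_singleton _, ?_⟩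
  intro B' hB' hne
  obtain ⟨v, hv⟩ := (toPart π).nonempty_of_mem_parts hB'
  have hB'eq : B' = (toPart π).part v := ((toPart π).part_eq_of_mem hB' hv).symm
  set E' := eIdx π (π.symm v) with hE'def
  have hE'mem : π E' ∈ B' := by
    rw [hB'eq, mem_part_toPart, Equiv.symm_apply_apply]
    exact (eIdx_eq_self π (isRLMin_eIdx π (π.symm v))).symm
  have hE'ne : E' ≠ last := by
    intro h
    apply hne
    have hvB : v ∈ B := by
      rw [hBdef, mem_part_toPart, Equiv.symm_apply_apply, eIdx_eq_self π hlastrl, ← hE'def, h]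
    rw [hB'eq, hBdef]
    exact (toPart π).part_eq_of_mem ((toPart π).part_mem.2 (mem_univ (π last)))
      (by rw [← hBdef]; exact hvB)
  have hE'lt : π E' < π last :=
    isRLMin_eIdx π (π.symm v) last (lt_of_le_of_ne (hle_last E') hE'ne)
  have h1 : B'.min ≤ (π E' : WithTop (Fin n)) := Finset.min_le hE'mem
  have h2 : B.min = (π last : WithTop (Fin n)) := by rw [hsing]; exact Finset.min_singleton
  rw [h2]
  exact lt_of_le_of_lt h1 (WithTop.coe_lt_coe.2 hE'lt)

end ValDesBij
namespace ValDesBij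

open Finset

variable {n : ℕ}

/-- the permutation obtained by listing each block in ascending order but with its minimum
moved to the end, blocks ordered by their minima -/
noncomputable def toPerm (P : Finpartition (Finset.univ : Finset (Fin n))) :
    Equiv.Perm (Fin n) :=
  Tuple.sort (key P)

theorem key_toPerm_strictMono (P : Finpartition (Finset.univ : Finset (Fin n))) :
    StrictMono (fun i => key P (toPerm P i)) :=
  (Tuple.monotone_sort (key P)).strictMono_of_injective ((key_inj P).comp (toPerm P).injective)

theorem bmin_toPerm_mono (P : Finpartition (Finset.univ : Finset (Fin n))) {i j : Fin n}
    (hij : i ≤ j) : bmin P (toPerm P i) ≤ bmin P (toPerm P j) := by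
  have := (key_toPerm_strictMono P).monotone hij
  rw [key_le_iff] at this
  rcases this with h | ⟨h, -⟩
  · exact le_of_lt h
  · exact le_of_eq h

theorem isRLMin_toPerm_iff (P : Finpartition (Finset.univ : Finset (Fin n))) (i : Fin n) :
    IsRLMin (toPerm P) i ↔ toPerm P i = bmin P (toPerm P i) := by
  set σ := toPerm P with hσ
  constructor
  · intro hrl
    by_contra hne
    set j := σ.symm (bmin P (σ i)) with hj
    have hσj : σ j = bmin P (σ i) := Equiv.apply_symm_apply _ _
    have hkey : key P (σ i) < key P (σ j) := by
      rw [key_lt_iff]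
      right
      refine ⟨by rw [hσj, bmin_bmin], ?_⟩
      rw [if_neg hne]
      have : σ j = bmin P (σ j) := by rw [hσj, bmin_bmin]
      rw [if_pos this]
      exact WithTop.coe_lt_top _
    have hij : i < j := (key_toPerm_strictMono P).lt_iff_lt.1 hkey
    have : σ i < σ j := hrl j hij
    rw [hσj] at this
    exact absurd (bmin_le P (σ i)) (not_le.2 this)
  · intro hmin j hij
    have hkey : key P (σ i) < key P (σ j) := key_toPerm_strictMono P hij
    rw [key_lt_iff] at hkey
    rcases hkey with h | ⟨-, h⟩
    · calc σ i = bmin P (σ i) := hmin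
        _ < bmin P (σ j) := h
        _ ≤ σ j := bmin_le P (σ j)
    · rw [if_pos hmin] at h
      exact absurd h not_top_lt

theorem part_succ_eq (P : Finpartition (Finset.univ : Finset (Fin n))) {i : Fin n}
    (h1 : i.val + 1 < n) (hne : toPerm P i ≠ bmin P (toPerm P i)) :
    P.part (toPerm P ⟨i.val + 1, h1⟩) = P.part (toPerm P i) := by
  set σ := toPerm P with hσ
  set j := σ.symm (bmin P (σ i)) with hj
  have hσj : σ j = bmin P (σ i) := Equiv.apply_symm_apply _ _
  have hkey : key P (σ i) < key P (σ j) := by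
    rw [key_lt_iff]
    right
    refine ⟨by rw [hσj, bmin_bmin], ?_⟩
    rw [if_neg hne]
    have : σ j = bmin P (σ j) := by rw [hσj, bmin_bmin]
    rw [if_pos this]
    exact WithTop.coe_lt_top _
  have hij : i < j := (key_toPerm_strictMono P).lt_iff_lt.1 hkey
  set i1 : Fin n := ⟨i.val + 1, h1⟩ with hi1
  have hii1 : i < i1 := by simp [Fin.lt_def, hi1]
  have hi1j : i1 ≤ j := by
    have := hij
    simp only [Fin.lt_def] at this
    show i1.val ≤ j.val
    simp only [hi1]
    omega
  have hup : bmin P (σ i) ≤ bmin P (σ i1) := bmin_toPerm_mono P (le_of_lt hii1)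
  have hdown : bmin P (σ i1) ≤ bmin P (σ i) := by
    have h := bmin_toPerm_mono P hi1j
    rwa [hσj, bmin_bmin] at h
  exact part_eq_of_bmin_eq P (le_antisymm hdown hup)

theorem descent_iff_toPerm (P : Finpartition (Finset.univ : Finset (Fin n))) {i : Fin n}
    (h1 : i.val + 1 < n) :
    toPerm P ⟨i.val + 1, h1⟩ < toPerm P i ↔
      P.part (toPerm P ⟨i.val + 1, h1⟩) = P.part (toPerm P i) ∧
        toPerm P ⟨i.val + 1, h1⟩ = bmin P (toPerm P ⟨i.val + 1, h1⟩) := by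
  set σ := toPerm P with hσ
  set i1 : Fin n := ⟨i.val + 1, h1⟩ with hi1
  have hii1 : i < i1 := by simp [Fin.lt_def, hi1]
  constructor
  · intro hd
    have hine : σ i ≠ bmin P (σ i) := by
      intro h
      have := ((isRLMin_toPerm_iff P i).2 h) i1 hii1
      exact absurd hd (not_lt.2 (le_of_lt this))
    have hpart := part_succ_eq P h1 hine
    refine ⟨hpart, ?_⟩
    by_contra hne2
    have hkey : key P (σ i) < key P (σ i1) := key_toPerm_strictMono P hii1
    rw [key_lt_iff] at hkey
    have hbeq : bmin P (σ i1) = bmin P (σ i) := bmin_of_part_eq P hpart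
    rcases hkey with h | ⟨-, h⟩
    · rw [hbeq] at h
      exact absurd h (lt_irrefl _)
    · rw [if_neg hine, if_neg hne2, WithTop.coe_lt_coe] at h
      exact absurd hd (not_lt.2 (le_of_lt h))
  · rintro ⟨hpart, hmin⟩
    have : bmin P (σ i1) = bmin P (σ i) := bmin_of_part_eq P hpart
    have hle : σ i1 ≤ σ i := by
      rw [hmin, this]
      exact bmin_le P (σ i)
    refine lt_of_le_of_ne hle fun h => ?_
    have := σ.injective h
    rw [hi1] at this
    exact absurd (congrArg Fin.val this) (by omega)

end ValDesBij
namespace ValDesBij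

open Finset

variable {n : ℕ} {P : Finpartition (Finset.univ : Finset (Fin n))}

section LastBlock

variable {B : Finset (Fin n)} {m : Fin n}

theorem bmin_eq_self_of_singleton (hB : B ∈ P.parts) (hBm : B = {m}) : bmin P m = m := by
  have hpartm : P.part m = B :=
    P.part_eq_of_mem hB (by rw [hBm]; exact Finset.mem_singleton_self m)
  have := bmin_mem P m
  rw [hpartm, hBm, Finset.mem_singleton] at this
  exact this

theorem key_le_key_max (hB : B ∈ P.parts) (hBm : B = {m})
    (hmin : ∀ B' ∈ P.parts, B' ≠ B → B'.min < B.min) (v : Fin n) :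
    key P v ≤ key P m := by
  have hbm : bmin P m = m := bmin_eq_self_of_singleton hB hBm
  have hpartm : P.part m = B :=
    P.part_eq_of_mem hB (by rw [hBm]; exact Finset.mem_singleton_self m)
  by_cases hv : P.part v = P.part m
  · rw [key_le_iff]
    right
    refine ⟨by rw [bmin_of_part_eq P hv, hbm], ?_⟩
    rw [if_pos (show m = bmin P m from hbm.symm)]
    exact le_top
  · have hne : P.part v ≠ B := fun h => hv (h.trans hpartm.symm)
    have hlt := hmin (P.part v) (P.part_mem.2 (mem_univ v)) hne
    rw [hBm, Finset.min_singleton] at hlt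
    have hcoe : ((P.part v).min' (P.nonempty_of_mem_parts (P.part_mem.2 (mem_univ v))) :
        WithTop (Fin n)) = (P.part v).min := Finset.coe_min' _
    have : (bmin P v : WithTop (Fin n)) < (m : WithTop (Fin n)) := by
      rw [show (bmin P v : WithTop (Fin n)) = (P.part v).min from hcoe]
      exact hlt
    rw [WithTop.coe_lt_coe] at this
    rw [key_le_iff]
    left
    rw [hbm]
    exact this

theorem toPerm_last (hn : 1 ≤ n) (hB : B ∈ P.parts) (hBm : B = {m})
    (hmin : ∀ B' ∈ P.parts, B' ≠ B → B'.min < B.min) :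
    toPerm P ⟨n - 1, Nat.sub_lt hn one_pos⟩ = m := by
  set σ := toPerm P with hσ
  set last : Fin n := ⟨n - 1, Nat.sub_lt hn one_pos⟩ with hlast
  have hle_last : ∀ t : Fin n, t ≤ last := fun t => Nat.le_sub_one_of_lt t.isLt
  have h1 : key P (σ last) ≤ key P m := key_le_key_max hB hBm hmin _
  have h2 : key P m ≤ key P (σ last) := by
    have h3 := (key_toPerm_strictMono P).monotone (hle_last (σ.symm m))
    have e : σ (σ.symm m) = m := Equiv.apply_symm_apply σ m
    rw [← e]
    exact h3
  exact key_inj P (le_antisymm h1 h2)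

theorem descent_valley_toPerm (hn : 1 ≤ n) (hB : B ∈ P.parts) (hBm : B = {m})
    (hmin : ∀ B' ∈ P.parts, B' ≠ B → B'.min < B.min) {i : Fin n} (h1 : i.val + 1 < n)
    (hd : toPerm P ⟨i.val + 1, h1⟩ < toPerm P i) :
    ∃ h2 : i.val + 2 < n, toPerm P ⟨i.val + 1, h1⟩ < toPerm P ⟨i.val + 2, h2⟩ := by
  set σ := toPerm P with hσ
  obtain ⟨hpart, hminv⟩ := (descent_iff_toPerm P h1).1 hd
  have h2 : i.val + 2 < n := by
    rcases lt_or_ge (i.val + 2) n with h | h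
    · exact h
    · exfalso
      have hilast : (⟨i.val + 1, h1⟩ : Fin n) = ⟨n - 1, Nat.sub_lt hn one_pos⟩ :=
        Fin.ext (by show i.val + 1 = n - 1; omega)
      have hm : σ ⟨i.val + 1, h1⟩ = m := by rw [hilast]; exact toPerm_last hn hB hBm hmin
      have hpartm : P.part m = B :=
        P.part_eq_of_mem hB (by rw [hBm]; exact Finset.mem_singleton_self m)
      have hmem : σ i ∈ P.part (σ i) := P.mem_part (mem_univ _)
      rw [← hpart, hm, hpartm, hBm, Finset.mem_singleton] at hmem
      rw [hm, hmem] at hd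
      exact lt_irrefl _ hd
  refine ⟨h2, ?_⟩
  have hrl : IsRLMin σ ⟨i.val + 1, h1⟩ := (isRLMin_toPerm_iff P _).2 hminv
  exact hrl _ (by simp [Fin.lt_def])

theorem valley_toPerm (hn : 1 ≤ n) (hB : B ∈ P.parts) (hBm : B = {m})
    (hmin : ∀ B' ∈ P.parts, B' ≠ B → B'.min < B.min) {i : Fin n} (h1 : i.val + 1 < n)
    (hd : toPerm P ⟨i.val + 1, h1⟩ < toPerm P i) :
    IsValley (toPerm P) ⟨i.val + 1, h1⟩ := by
  obtain ⟨h2, hasc⟩ := descent_valley_toPerm hn hB hBm hmin h1 hd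
  refine ⟨Nat.le_add_left 1 i.val, ?_, ?_, ?_⟩
  · exact h2
  · have e : (⟨(⟨i.val + 1, h1⟩ : Fin n).val - 1,
        lt_of_le_of_lt (Nat.sub_le _ _) (⟨i.val + 1, h1⟩ : Fin n).isLt⟩ : Fin n) = i :=
      Fin.ext (by show i.val + 1 - 1 = i.val; omega)
    rw [e]
    exact hd
  · have e : (⟨(⟨i.val + 1, h1⟩ : Fin n).val + 1, h2⟩ : Fin n) = ⟨i.val + 2, h2⟩ :=
      Fin.ext (by show i.val + 1 + 1 = i.val + 2; omega)
    rw [e]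
    exact hasc

theorem valCount_eq_desCount_toPerm (hn : 1 ≤ n) (hB : B ∈ P.parts) (hBm : B = {m})
    (hmin : ∀ B' ∈ P.parts, B' ≠ B → B'.min < B.min) :
    valCount (toPerm P) = desCount (toPerm P) := by
  classical
  set σ := toPerm P with hσ
  set V : Set (Fin n) := {ℓ | IsValley σ ℓ} with hV
  set D : Set (Fin n) := {ℓ : Fin n | ∃ h : ℓ.val + 1 < n, σ ⟨ℓ.val + 1, h⟩ < σ ℓ} with hD
  set g : Fin n → Fin n := fun v => ⟨v.val - 1, lt_of_le_of_lt (Nat.sub_le _ _) v.isLt⟩ with hg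
  have himg : g '' V = D := by
    apply Set.Subset.antisymm
    · rintro x ⟨v, hv, rfl⟩
      obtain ⟨h0, h2, hdes, _⟩ := hv
      have hlt : (g v).val + 1 < n := by simp only [hg]; omega
      refine ⟨hlt, ?_⟩
      have e : (⟨(g v).val + 1, hlt⟩ : Fin n) = v := Fin.ext (by simp only [hg]; omega)
      rw [e]
      exact hdes
    · rintro d ⟨h1, hd⟩
      refine ⟨⟨d.val + 1, h1⟩, valley_toPerm hn hB hBm hmin h1 hd, ?_⟩
      apply Fin.ext
      show d.val + 1 - 1 = d.val
      omega
  have hinj : Set.InjOn g V := by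
    intro a ha b hb hab
    have ha1 : 1 ≤ a.val := ha.1
    have hb1 : 1 ≤ b.val := hb.1
    have h' : a.val - 1 = b.val - 1 := congrArg Fin.val hab
    exact Fin.ext (by omega)
  show V.ncard = D.ncard
  rw [← himg, Set.ncard_image_of_injOn hinj]

theorem increasing_toPerm (hn : 1 ≤ n) (hB : B ∈ P.parts) (hBm : B = {m})
    (hmin : ∀ B' ∈ P.parts, B' ≠ B → B'.min < B.min) :
    Increasing (toPerm P) := by
  intro i j hvi hvj hij
  obtain ⟨h0, h2, hdes, hasc⟩ := hvi
  set p : Fin n := ⟨i.val - 1, lt_of_le_of_lt (Nat.sub_le _ _) i.isLt⟩ with hp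
  have h1p : p.val + 1 < n := by
    show i.val - 1 + 1 < n
    have := i.isLt
    omega
  have e : (⟨p.val + 1, h1p⟩ : Fin n) = i := by
    apply Fin.ext
    show i.val - 1 + 1 = i.val
    omega
  have hd : toPerm P ⟨p.val + 1, h1p⟩ < toPerm P p := by
    rw [e]
    exact hdes
  have hres := (descent_iff_toPerm P h1p).1 hd
  have hminv := hres.2
  rw [e] at hminv
  exact ((isRLMin_toPerm_iff P i).2 hminv) j hij

end LastBlock

theorem eIdx_toPerm (P : Finpartition (Finset.univ : Finset (Fin n))) (i : Fin n) :
    eIdx (toPerm P) i = (toPerm P).symm (bmin P (toPerm P i)) := by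
  set σ := toPerm P with hσ
  set E := σ.symm (bmin P (σ i)) with hE
  have hσE : σ E = bmin P (σ i) := Equiv.apply_symm_apply _ _
  have hErl : IsRLMin σ E := by
    rw [isRLMin_toPerm_iff]
    show σ E = bmin P (σ E)
    rw [hσE, bmin_bmin]
  have hiE : i ≤ E := by
    by_cases h : σ i = bmin P (σ i)
    · have : E = i := by rw [hE, ← h, Equiv.symm_apply_apply]
      rw [this]
    · have hkey : key P (σ i) < key P (σ E) := by
        rw [key_lt_iff]
        right
        refine ⟨by rw [hσE, bmin_bmin], ?_⟩
        rw [if_neg h, if_pos (by rw [hσE, bmin_bmin])]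
        exact WithTop.coe_lt_top _
      exact le_of_lt ((key_toPerm_strictMono P).lt_iff_lt.1 hkey)
  apply le_antisymm (eIdx_min σ hiE hErl)
  -- E ≤ eIdx σ i
  have ht := isRLMin_eIdx σ i
  rw [isRLMin_toPerm_iff] at ht
  have hkey : key P (σ E) ≤ key P (σ (eIdx σ i)) := by
    rw [key_le_iff]
    have hb : bmin P (σ E) = bmin P (σ i) := by rw [hσE, bmin_bmin]
    have hble : bmin P (σ i) ≤ bmin P (σ (eIdx σ i)) := bmin_toPerm_mono P (le_eIdx σ i)
    rcases eq_or_lt_of_le hble with heq | hlt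
    · right
      refine ⟨by rw [hb, heq], ?_⟩
      rw [if_pos (by rw [hσE, bmin_bmin]), if_pos ht]
    · left
      rw [hb]
      exact hlt
  exact (key_toPerm_strictMono P).le_iff_le.1 hkey

theorem part_toPart_toPerm (P : Finpartition (Finset.univ : Finset (Fin n))) (v : Fin n) :
    (toPart (toPerm P)).part v = P.part v := by
  set σ := toPerm P with hσ
  ext w
  rw [mem_part_toPart, eIdx_toPerm, eIdx_toPerm, Equiv.apply_symm_apply, Equiv.apply_symm_apply]
  constructor
  · intro h
    have hb : bmin P v = bmin P w := σ.symm.injective h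
    exact (P.mem_part_iff_part_eq_part (mem_univ w) (mem_univ v)).2
      (part_eq_of_bmin_eq P hb.symm)
  · intro h
    have hpart : P.part w = P.part v :=
      (P.mem_part_iff_part_eq_part (mem_univ w) (mem_univ v)).1 h
    rw [bmin_of_part_eq P hpart.symm]

theorem toPart_toPerm (P : Finpartition (Finset.univ : Finset (Fin n))) :
    toPart (toPerm P) = P := by
  apply Finpartition.ext
  ext B0
  constructor
  · intro hB0
    obtain ⟨v, hv⟩ := (toPart (toPerm P)).nonempty_of_mem_parts hB0
    have : B0 = (toPart (toPerm P)).part v := ((toPart (toPerm P)).part_eq_of_mem hB0 hv).symm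
    rw [this, part_toPart_toPerm]
    exact P.part_mem.2 (mem_univ v)
  · intro hB0
    obtain ⟨v, hv⟩ := P.nonempty_of_mem_parts hB0
    have : B0 = P.part v := (P.part_eq_of_mem hB0 hv).symm
    rw [this, ← part_toPart_toPerm]
    exact (toPart (toPerm P)).part_mem.2 (mem_univ v)

end ValDesBij
namespace ValDesBij

variable {n : ℕ}

theorem toPerm_toPart {π : Equiv.Perm (Fin n)} (hinc : Increasing π)
    (hvd : valCount π = desCount π) : toPerm (toPart π) = π := by
  have h1 : Monotone (key (toPart π) ∘ (toPerm (toPart π))) := Tuple.monotone_sort _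
  have h2 : Monotone (key (toPart π) ∘ π) := (key_toPart_strictMono hinc hvd).monotone
  have h3 := Tuple.unique_monotone h1 h2
  apply Equiv.ext
  intro i
  exact key_inj (toPart π) (congrFun h3 i)

noncomputable def G (hn : 1 ≤ n)
    (y : {P : Finpartition (Finset.univ : Finset (Fin n)) // LastBlockSingleton P}) :
    {π : Equiv.Perm (Fin n) // Increasing π ∧ valCount π = desCount π} :=
  ⟨toPerm y.1, by
    obtain ⟨B, hB, hcard, hmin⟩ := y.2
    obtain ⟨m, hm⟩ := Finset.card_eq_one.1 hcard
    subst hm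
    exact ⟨increasing_toPerm hn hB rfl hmin, valCount_eq_desCount_toPerm hn hB rfl hmin⟩⟩

end ValDesBij
theorem increasing_val_eq_des_bijection (n : ℕ) (hn : 1 ≤ n) :
    Nonempty ({π : Equiv.Perm (Fin n) // Increasing π ∧ valCount π = desCount π} ≃
      {P : Finpartition (Finset.univ : Finset (Fin n)) // LastBlockSingleton P}) :=
  ⟨{ toFun := fun x => ⟨ValDesBij.toPart x.1, ValDesBij.lastBlockSingleton_toPart hn x.2.2⟩
     invFun := ValDesBij.G hn
     left_inv := fun x => Subtype.ext (ValDesBij.toPerm_toPart x.2.1 x.2.2)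
     right_inv := fun y => Subtype.ext (ValDesBij.toPart_toPerm y.1) }⟩
end

section
/- The number of increasing alternating permutations of {1,...,n} equals (n−1)!! (double factorial of n−1) when n is odd, and equals n!! − (n−1)!! when n is even and positive. In particular the counts for n = 0,...,8 are 1, 1, 1, 2, 5, 8, 33, 48, 279. -/
open Finset

/-- `π` is alternating: `π(1) > π(2) < π(3) > π(4) < ⋯` (1-based). -/
def Alternating {n : ℕ} (π : Equiv.Perm (Fin n)) : Prop :=
  ∀ (i : ℕ) (h : i + 1 < n),
    if Even i then π ⟨i + 1, h⟩ < π ⟨i, by omega⟩ else π ⟨i, by omega⟩ < π ⟨i + 1, h⟩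

/-- number of increasing alternating permutations of `{1,...,n}` -/
noncomputable def incAlt (n : ℕ) : ℕ :=
  {π : Equiv.Perm (Fin n) | Increasing π ∧ Alternating π}.ncard

section Aux
open Equiv

lemma alt_even {n : ℕ} {π : Perm (Fin n)} (hπ : Alternating π) {i : ℕ} (hi : i % 2 = 0)
    (h : i + 1 < n) : π ⟨i + 1, h⟩ < π ⟨i, by omega⟩ := by
  have := hπ i h
  rwa [if_pos (Nat.even_iff.mpr hi)] at this

lemma alt_odd {n : ℕ} {π : Perm (Fin n)} (hπ : Alternating π) {i : ℕ} (hi : i % 2 = 1)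
    (h : i + 1 < n) : π ⟨i, by omega⟩ < π ⟨i + 1, h⟩ := by
  have := hπ i h
  rwa [if_neg (by rw [Nat.even_iff]; omega)] at this

lemma valley_iff {n : ℕ} {π : Perm (Fin n)} (hπ : Alternating π) (ℓ : Fin n) :
    IsValley π ℓ ↔ (ℓ.val % 2 = 1 ∧ ℓ.val + 1 < n) := by
  constructor
  · rintro ⟨h1, h2, h3, h4⟩
    refine ⟨?_, h2⟩
    by_contra hodd
    have he : (ℓ.val - 1) % 2 = 1 := by omega
    have := alt_odd hπ he (by omega)
    have heq : (⟨ℓ.val - 1 + 1, by omega⟩ : Fin n) = ℓ := by ext; simp; omega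
    rw [heq] at this
    exact absurd h3 (lt_asymm this)
  · rintro ⟨h1, h2⟩
    refine ⟨by omega, h2, ?_, ?_⟩
    · have := alt_even hπ (show (ℓ.val - 1) % 2 = 0 by omega) (show ℓ.val - 1 + 1 < n by omega)
      have heq : (⟨ℓ.val - 1 + 1, by omega⟩ : Fin n) = ℓ := by ext; simp; omega
      rwa [heq] at this
    · have := alt_odd hπ h1 h2
      exact this

section
variable {n : ℕ}

def dn (v x : Fin (n+3)) : Fin (n+1) :=
  ⟨if x.val < v.val then x.val - 1 else x.val - 2, by
    have := x.isLt; have := v.isLt; split <;> omega⟩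

def uv (v : Fin (n+3)) (y : Fin (n+1)) : Fin (n+3) :=
  ⟨if y.val + 1 < v.val then y.val + 1 else y.val + 2, by
    have := y.isLt; split <;> omega⟩

lemma uv_dn {v x : Fin (n+3)} (hv : 0 < v.val) (hx0 : x.val ≠ 0) (hxv : x.val ≠ v.val) :
    uv v (dn v x) = x := by
  have := x.isLt; have := v.isLt
  ext; simp only [uv, dn]; split_ifs <;> omega

lemma dn_uv {v : Fin (n+3)} {y : Fin (n+1)} : dn v (uv v y) = y := by
  have := y.isLt; have := v.isLt
  ext; simp only [uv, dn]; split_ifs <;> omega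

lemma uv_lt_iff {v : Fin (n+3)} {a b : Fin (n+1)} : uv v a < uv v b ↔ a < b := by
  have := a.isLt; have := b.isLt
  simp only [uv, Fin.lt_def]; split_ifs <;> omega

lemma uv_pos {v : Fin (n+3)} {y : Fin (n+1)} : 0 < (uv v y).val := by
  simp only [uv]; split <;> omega

lemma uv_ne_v {v : Fin (n+3)} {y : Fin (n+1)} (hv : 0 < v.val) : (uv v y).val ≠ v.val := by
  simp only [uv]; split <;> omega

lemma dn_lt_iff {v a b : Fin (n+3)} (hv : 0 < v.val) (ha0 : a.val ≠ 0) (hav : a.val ≠ v.val)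
    (hb0 : b.val ≠ 0) (hbv : b.val ≠ v.val) : dn v a < dn v b ↔ a < b := by
  rw [← uv_lt_iff (v := v), uv_dn hv ha0 hav, uv_dn hv hb0 hbv]

end

section
variable {N : ℕ}

lemma fin_not_lt_zero' {N : ℕ} (x : Fin N) (z : Fin N) (hz : z.val = 0) : ¬ x < z := by
  simp [Fin.lt_def, hz]

lemma zero_pos {π : Perm (Fin N)} (hI : Increasing π) (hA : Alternating π) (hN : 3 ≤ N) :
    (π ⟨1, by omega⟩).val = 0 ∨ (N % 2 = 0 ∧ (π ⟨N-1, by omega⟩).val = 0) := by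
  obtain ⟨p, hp⟩ : ∃ p : Fin N, π p = ⟨0, by omega⟩ := ⟨π.symm _, Equiv.apply_symm_apply _ _⟩
  have podd : p.val % 2 = 1 := by
    by_contra hodd
    rcases Nat.lt_or_ge (p.val + 1) N with hlt | hge
    · have := alt_even hA (show p.val % 2 = 0 by omega) hlt
      rw [show (⟨p.val, by omega⟩ : Fin N) = p from Fin.eta p p.isLt, hp] at this
      exact fin_not_lt_zero' _ _ rfl this
    · have hpv : p.val = N - 1 := by have := p.isLt; omega
      have h2 : 2 ≤ p.val := by omega
      have := alt_odd hA (show (p.val - 1) % 2 = 1 by omega) (show p.val - 1 + 1 < N by have := p.isLt; omega)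
      rw [show (⟨p.val - 1 + 1, by have := p.isLt; omega⟩ : Fin N) = p from by ext; simp; omega, hp] at this
      exact fin_not_lt_zero' _ _ rfl this
  rcases Nat.lt_or_ge (p.val + 1) N with hlt | hge
  · left
    have hv1 : IsValley π ⟨1, by omega⟩ := (valley_iff hA _).mpr ⟨rfl, by show 1+1 < N; omega⟩
    have hvp : IsValley π p := (valley_iff hA _).mpr ⟨podd, hlt⟩
    by_cases h1 : p.val = 1
    · rw [show (⟨1, by omega⟩ : Fin N) = p from by ext; simp [h1], hp]
    · exfalso
      have : (⟨1, by omega⟩ : Fin N) < p := by simp [Fin.lt_def]; omega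
      exact fin_not_lt_zero' _ _ (congrArg Fin.val hp) (hI _ _ hv1 hvp this)
  · right
    have hpv : p.val = N - 1 := by have := p.isLt; omega
    refine ⟨by omega, ?_⟩
    rw [show (⟨N-1, by omega⟩ : Fin N) = p from by ext; simp [hpv], hp]

end

section EqB
variable {n : ℕ}

lemma pi_pos {π : Perm (Fin (n+3))} (h1 : (π ⟨1, by omega⟩).val = 0) :
    0 < (π ⟨0, by omega⟩).val := by
  rcases Nat.eq_zero_or_pos (π ⟨0, by omega⟩).val with h | h
  · exfalso
    have : π ⟨0, by omega⟩ = π ⟨1, by omega⟩ := by ext; omega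
    have := π.injective this
    simpa using congrArg Fin.val this
  · exact h

lemma pi_ne {π : Perm (Fin (n+3))} (h1 : (π ⟨1, by omega⟩).val = 0) {k : Fin (n+3)}
    (hk : 2 ≤ k.val) : (π k).val ≠ 0 ∧ (π k).val ≠ (π ⟨0, by omega⟩).val := by
  constructor
  · intro h
    have : π k = π ⟨1, by omega⟩ := by ext; omega
    have := congrArg Fin.val (π.injective this)
    simp at this; omega
  · intro h
    have : π k = π ⟨0, by omega⟩ := by ext; omega
    have := congrArg Fin.val (π.injective this)
    simp only [Fin.val_mk] at this; omega

def fwdF (π : Perm (Fin (n+3))) : Fin (n+1) → Fin (n+1) :=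
  fun i => dn (π ⟨0, by omega⟩) (π ⟨i.val + 2, by have := i.isLt; omega⟩)

lemma fwdF_inj {π : Perm (Fin (n+3))} (h1 : (π ⟨1, by omega⟩).val = 0) :
    Function.Injective (fwdF π) := by
  intro i j h
  have hi := pi_ne h1 (k := ⟨i.val + 2, by have := i.isLt; omega⟩) (by simp)
  have hj := pi_ne h1 (k := ⟨j.val + 2, by have := j.isLt; omega⟩) (by simp)
  have := congrArg (uv (π ⟨0, by omega⟩)) h
  rw [fwdF, fwdF, uv_dn (pi_pos h1) hi.1 hi.2, uv_dn (pi_pos h1) hj.1 hj.2] at this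
  have := congrArg Fin.val (π.injective this)
  simp at this
  ext; omega

noncomputable def fwdP (π : Perm (Fin (n+3))) (h1 : (π ⟨1, by omega⟩).val = 0) : Perm (Fin (n+1)) :=
  Equiv.ofBijective _ (Finite.injective_iff_bijective.mp (fwdF_inj h1))

lemma fwdP_apply {π : Perm (Fin (n+3))} (h1 : (π ⟨1, by omega⟩).val = 0) (i : Fin (n+1)) :
    fwdP π h1 i = dn (π ⟨0, by omega⟩) (π ⟨i.val + 2, by have := i.isLt; omega⟩) := rfl

lemma fwdP_alt {π : Perm (Fin (n+3))} (hA : Alternating π) (h1 : (π ⟨1, by omega⟩).val = 0) :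
    Alternating (fwdP π h1) := by
  intro i h
  have hi := pi_ne h1 (k := ⟨i + 2, by omega⟩) (by simp)
  have hj := pi_ne h1 (k := ⟨i + 1 + 2, by omega⟩) (by simp)
  have key : ∀ {a b : Fin (n+1)} (ha : a.val = i) (hb : b.val = i + 1),
      (fwdP π h1 b < fwdP π h1 a ↔ π ⟨i+1+2, by omega⟩ < π ⟨i+2, by omega⟩) ∧
      (fwdP π h1 a < fwdP π h1 b ↔ π ⟨i+2, by omega⟩ < π ⟨i+1+2, by omega⟩) := by
    intro a b ha hb
    rw [fwdP_apply, fwdP_apply]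
    have e1 : (⟨a.val + 2, by have := a.isLt; omega⟩ : Fin (n+3)) = ⟨i+2, by omega⟩ := by
      ext; simp [ha]
    have e2 : (⟨b.val + 2, by have := b.isLt; omega⟩ : Fin (n+3)) = ⟨i+1+2, by omega⟩ := by
      ext; simp [hb]
    rw [e1, e2]
    exact ⟨dn_lt_iff (pi_pos h1) hj.1 hj.2 hi.1 hi.2,
           dn_lt_iff (pi_pos h1) hi.1 hi.2 hj.1 hj.2⟩
  split
  · next he =>
    have := alt_even hA (show (i+2) % 2 = 0 by rcases he with ⟨r, hr⟩; omega) (show i+2+1 < n+3 by omega)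
    exact ((key rfl rfl).1).mpr this
  · next he =>
    have hodd : (i+2) % 2 = 1 := by
      rcases Nat.even_or_odd i with h' | h'
      · exact absurd h' he
      · have := Nat.odd_iff.mp h'; omega
    have := alt_odd hA hodd (show i+2+1 < n+3 by omega)
    exact ((key rfl rfl).2).mpr this

end EqB

section EqB2
variable {n : ℕ}

lemma fwdP_inc {π : Perm (Fin (n+3))} (hI : Increasing π) (hA : Alternating π)
    (h1 : (π ⟨1, by omega⟩).val = 0) : Increasing (fwdP π h1) := by
  intro i j vi vj hij
  rw [valley_iff (fwdP_alt hA h1)] at vi vj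
  have hi := pi_ne h1 (k := ⟨i.val + 2, by have := i.isLt; omega⟩) (by simp)
  have hj := pi_ne h1 (k := ⟨j.val + 2, by have := j.isLt; omega⟩) (by simp)
  rw [fwdP_apply, fwdP_apply, dn_lt_iff (pi_pos h1) hi.1 hi.2 hj.1 hj.2]
  refine hI _ _ ((valley_iff hA _).mpr ⟨by show (i.val+2) % 2 = 1; omega, by show i.val+2+1 < n+3; omega⟩)
    ((valley_iff hA _).mpr ⟨by show (j.val+2) % 2 = 1; omega, by show j.val+2+1 < n+3; omega⟩) ?_
  exact Fin.mk_lt_mk.mpr (by have := Fin.lt_def.mp hij; omega)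

noncomputable def bwdF (w : Fin (n+2)) (σ : Perm (Fin (n+1))) : Fin (n+3) → Fin (n+3) :=
  fun i => if i.val = 0 then ⟨w.val + 1, by have := w.isLt; omega⟩
    else if i.val = 1 then ⟨0, by omega⟩
    else uv ⟨w.val + 1, by have := w.isLt; omega⟩ (σ ⟨i.val - 2, by have := i.isLt; omega⟩)

lemma bwdF_inj (w : Fin (n+2)) (σ : Perm (Fin (n+1))) : Function.Injective (bwdF w σ) := by
  intro i j h
  unfold bwdF at h
  have hw : 0 < (⟨w.val + 1, by have := w.isLt; omega⟩ : Fin (n+3)).val := by simp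
  split_ifs at h with h1 h2 h2 h3 h4 h3 h4
  · ext; omega
  · exact absurd (congrArg Fin.val h) (by simp)
  · exact absurd (congrArg Fin.val h) (by have := uv_ne_v (v := (⟨w.val + 1, by have := w.isLt; omega⟩ : Fin (n+3))) (y := σ ⟨j.val - 2, by have := j.isLt; omega⟩) hw; simp; simp at this; omega)
  · exact absurd (congrArg Fin.val h) (by simp)
  · ext; omega
  · exact absurd (congrArg Fin.val h) (by have := uv_pos (v := (⟨w.val + 1, by have := w.isLt; omega⟩ : Fin (n+3))) (y := σ ⟨j.val - 2, by have := j.isLt; omega⟩); simp; omega)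
  · exact absurd (congrArg Fin.val h) (by have := uv_ne_v (v := (⟨w.val + 1, by have := w.isLt; omega⟩ : Fin (n+3))) (y := σ ⟨i.val - 2, by have := i.isLt; omega⟩) hw; simp at this ⊢; omega)
  · exact absurd (congrArg Fin.val h) (by have := uv_pos (v := (⟨w.val + 1, by have := w.isLt; omega⟩ : Fin (n+3))) (y := σ ⟨i.val - 2, by have := i.isLt; omega⟩); simp only [Fin.val_mk]; omega)
  · have := congrArg (dn (⟨w.val + 1, by have := w.isLt; omega⟩ : Fin (n+3))) h
    rw [dn_uv, dn_uv] at this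
    have := congrArg Fin.val (σ.injective this)
    simp at this
    ext; omega

noncomputable def bwdP (w : Fin (n+2)) (σ : Perm (Fin (n+1))) : Perm (Fin (n+3)) :=
  Equiv.ofBijective _ (Finite.injective_iff_bijective.mp (bwdF_inj w σ))

lemma bwdP_apply (w : Fin (n+2)) (σ : Perm (Fin (n+1))) (i : Fin (n+3)) :
    bwdP w σ i = bwdF w σ i := rfl

end EqB2

section EqB3
variable {n : ℕ} (w : Fin (n+2)) (σ : Perm (Fin (n+1)))

lemma bwdP_at0 : bwdP w σ ⟨0, by omega⟩ = ⟨w.val + 1, by have := w.isLt; omega⟩ := by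
  rw [bwdP_apply]; unfold bwdF; simp

lemma bwdP_at1 : bwdP w σ ⟨1, by omega⟩ = ⟨0, by omega⟩ := by
  rw [bwdP_apply]; unfold bwdF; norm_num

lemma bwdP_at2 (k : Fin (n+3)) (hk : 2 ≤ k.val) :
    bwdP w σ k = uv ⟨w.val + 1, by have := w.isLt; omega⟩ (σ ⟨k.val - 2, by have := k.isLt; omega⟩) := by
  rw [bwdP_apply]; unfold bwdF; rw [if_neg (by omega), if_neg (by omega)]

lemma bwdP_alt (hσ : Alternating σ) : Alternating (bwdP w σ) := by
  intro i h
  by_cases hi0 : i = 0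
  · subst hi0
    rw [if_pos Even.zero, bwdP_at1, bwdP_at0]
    exact Fin.mk_lt_mk.mpr (by omega)
  by_cases hi1 : i = 1
  · subst hi1
    rw [if_neg (by simp), bwdP_at1, bwdP_at2 w σ ⟨2, by omega⟩ (by norm_num)]
    exact Fin.lt_def.mpr (by simpa using uv_pos)
  · have h2 : 2 ≤ i := by omega
    rw [bwdP_at2 w σ ⟨i, by omega⟩ (by simpa using h2),
        bwdP_at2 w σ ⟨i+1, h⟩ (by simp; omega)]
    have e1 : (⟨(⟨i+1, h⟩ : Fin (n+3)).val - 2, by have := h; simp; omega⟩ : Fin (n+1))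
        = ⟨i - 2 + 1, by omega⟩ := by ext; simp; omega
    rw [e1]
    by_cases he : Even i
    · rw [if_pos he, uv_lt_iff]
      have := alt_even hσ (show (i-2) % 2 = 0 by rcases he with ⟨r,hr⟩; omega)
        (show i - 2 + 1 < n + 1 by omega)
      exact this
    · rw [if_neg he, uv_lt_iff]
      have := alt_odd hσ (show (i-2) % 2 = 1 by
          rcases Nat.even_or_odd i with h' | h'
          · exact absurd h' he
          · have := Nat.odd_iff.mp h'; omega)
        (show i - 2 + 1 < n + 1 by omega)
      exact this

lemma bwdP_inc (hσI : Increasing σ) (hσA : Alternating σ) : Increasing (bwdP w σ) := by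
  intro i j vi vj hij
  rw [valley_iff (bwdP_alt w σ hσA)] at vi vj
  have hij' : i.val < j.val := Fin.lt_def.mp hij
  by_cases hi1 : i.val = 1
  · rw [show i = ⟨1, by omega⟩ from by ext; simp [hi1], bwdP_at1,
      bwdP_at2 w σ j (by omega)]
    exact Fin.lt_def.mpr (by simpa using uv_pos)
  · have h3 : 3 ≤ i.val := by omega
    rw [bwdP_at2 w σ i (by omega), bwdP_at2 w σ j (by omega), uv_lt_iff]
    refine hσI _ _ ((valley_iff hσA _).mpr ⟨by show (i.val - 2) % 2 = 1; omega,
        by show i.val - 2 + 1 < n + 1; omega⟩)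
      ((valley_iff hσA _).mpr ⟨by show (j.val - 2) % 2 = 1; omega,
        by show j.val - 2 + 1 < n + 1; omega⟩) ?_
    exact Fin.mk_lt_mk.mpr (by omega)

lemma bwdP_one : (bwdP w σ ⟨1, by omega⟩).val = 0 := by rw [bwdP_at1]

end EqB3

noncomputable def eqB (n : ℕ) :
    {π : Perm (Fin (n+3)) // (Increasing π ∧ Alternating π) ∧ (π ⟨1, by omega⟩).val = 0} ≃
    Fin (n+2) × {σ : Perm (Fin (n+1)) // Increasing σ ∧ Alternating σ} where
  toFun p := (⟨(p.1 ⟨0, by omega⟩).val - 1, by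
      have := (p.1 ⟨0, by omega⟩).isLt; have := pi_pos p.2.2; omega⟩,
    ⟨fwdP p.1 p.2.2, fwdP_inc p.2.1.1 p.2.1.2 p.2.2, fwdP_alt p.2.1.2 p.2.2⟩)
  invFun q := ⟨bwdP q.1 q.2.1,
    ⟨⟨bwdP_inc _ _ q.2.2.1 q.2.2.2, bwdP_alt _ _ q.2.2.2⟩, bwdP_one _ _⟩⟩
  left_inv p := by
    obtain ⟨π, ⟨hI, hA⟩, h1⟩ := p
    apply Subtype.ext
    apply Equiv.ext
    intro i
    simp only
    by_cases hi0 : i.val = 0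
    · rw [show i = ⟨0, by omega⟩ from by ext; simp [hi0], bwdP_at0]
      ext
      show (π ⟨0, by omega⟩).val - 1 + 1 = _
      have := pi_pos h1; omega
    by_cases hi1 : i.val = 1
    · rw [show i = ⟨1, by omega⟩ from by ext; simp [hi1], bwdP_at1]
      ext; simp [h1.symm]
    · rw [bwdP_at2 _ _ i (by omega)]
      have hv : (⟨(⟨(π ⟨0, by omega⟩).val - 1, by
          have := (π ⟨0, by omega⟩).isLt; have := pi_pos h1; omega⟩ : Fin (n+2)).val + 1,
          by have := (π ⟨0, by omega⟩).isLt; omega⟩ : Fin (n+3)) = π ⟨0, by omega⟩ := by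
        ext
        show (π ⟨0, by omega⟩).val - 1 + 1 = (π ⟨0, by omega⟩).val
        have := pi_pos h1; omega
      rw [hv, fwdP_apply]
      have e : (⟨(⟨i.val - 2, by have := i.isLt; omega⟩ : Fin (n+1)).val + 2,
          by have := i.isLt; show i.val - 2 + 2 < n + 3; omega⟩ : Fin (n+3)) = i := by
        ext; show i.val - 2 + 2 = i.val; omega
      rw [e]
      exact uv_dn (pi_pos h1) (pi_ne h1 (by omega)).1 (pi_ne h1 (by omega)).2
  right_inv q := by
    obtain ⟨w, σ, hσI, hσA⟩ := q
    refine Prod.ext ?_ ?_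
    · simp only
      have hval : (bwdP w σ ⟨0, by omega⟩ : Fin (n+3)).val = w.val + 1 := by
        rw [bwdP_at0]
      ext
      show (bwdP w σ ⟨0, by omega⟩).val - 1 = w.val
      omega
    · simp only
      apply Subtype.ext
      apply Equiv.ext
      intro i
      simp only
      rw [fwdP_apply, bwdP_at0, bwdP_at2 _ _ _ (by simp), ]
      have e : (⟨(⟨i.val + 2, by have := i.isLt; omega⟩ : Fin (n+3)).val - 2,
          by have := i.isLt; simp; omega⟩ : Fin (n+1)) = i := by ext; simp
      rw [e]
      exact dn_uv

section EqC
variable {n : ℕ}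

lemma cpi_ne {π : Perm (Fin (n+2))} (hl : (π ⟨n+1, by omega⟩).val = 0) {k : Fin (n+2)}
    (hk : k.val < n+1) : (π k).val ≠ 0 := by
  intro h
  have : π k = π ⟨n+1, by omega⟩ := by ext; omega
  have := congrArg Fin.val (π.injective this)
  simp at this; omega

def cF (π : Perm (Fin (n+2))) : Fin (n+1) → Fin (n+1) :=
  fun i => ⟨(π ⟨i.val, by have := i.isLt; omega⟩).val - 1, by
    have := (π ⟨i.val, by have := i.isLt; omega⟩).isLt; omega⟩

lemma cF_inj {π : Perm (Fin (n+2))} (hl : (π ⟨n+1, by omega⟩).val = 0) :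
    Function.Injective (cF π) := by
  intro i j h
  have hi := cpi_ne hl (k := ⟨i.val, by have := i.isLt; omega⟩) (by have := i.isLt; simpa using i.isLt)
  have hj := cpi_ne hl (k := ⟨j.val, by have := j.isLt; omega⟩) (by simpa using j.isLt)
  have hval := congrArg Fin.val h
  simp only [cF] at hval
  have : π ⟨i.val, by have := i.isLt; omega⟩ = π ⟨j.val, by have := j.isLt; omega⟩ := by
    ext; omega
  have := congrArg Fin.val (π.injective this)
  simp at this
  ext; omega

noncomputable def cP (π : Perm (Fin (n+2))) (hl : (π ⟨n+1, by omega⟩).val = 0) :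
    Perm (Fin (n+1)) :=
  Equiv.ofBijective _ (Finite.injective_iff_bijective.mp (cF_inj hl))

lemma cP_apply {π : Perm (Fin (n+2))} (hl : (π ⟨n+1, by omega⟩).val = 0) (i : Fin (n+1)) :
    cP π hl i = ⟨(π ⟨i.val, by have := i.isLt; omega⟩).val - 1, by
      have := (π ⟨i.val, by have := i.isLt; omega⟩).isLt; omega⟩ := rfl

set_option maxHeartbeats 1000000 in
lemma cP_lt_iff {π : Perm (Fin (n+2))} (hl : (π ⟨n+1, by omega⟩).val = 0) {a b : Fin (n+1)} :
    cP π hl a < cP π hl b ↔ π ⟨a.val, by have := a.isLt; omega⟩ < π ⟨b.val, by have := b.isLt; omega⟩ := by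
  have ha := cpi_ne hl (k := ⟨a.val, by have := a.isLt; omega⟩) (by simpa using a.isLt)
  have hb := cpi_ne hl (k := ⟨b.val, by have := b.isLt; omega⟩) (by simpa using b.isLt)
  rw [cP_apply, cP_apply, Fin.mk_lt_mk, Fin.lt_def]
  omega

lemma cP_alt {π : Perm (Fin (n+2))} (hA : Alternating π) (hl : (π ⟨n+1, by omega⟩).val = 0) :
    Alternating (cP π hl) := by
  intro i h
  have key := cP_lt_iff hl (a := ⟨i, by omega⟩) (b := ⟨i+1, h⟩)
  have key2 := cP_lt_iff hl (a := ⟨i+1, h⟩) (b := ⟨i, by omega⟩)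
  split
  · next he =>
    rw [key2]
    exact alt_even hA (Nat.even_iff.mp he) (by omega)
  · next he =>
    rw [key]
    exact alt_odd hA (Nat.odd_iff.mp (Nat.not_even_iff_odd.mp he)) (Nat.lt_succ_of_lt h)

lemma cP_inc {π : Perm (Fin (n+2))} (hI : Increasing π) (hA : Alternating π)
    (hl : (π ⟨n+1, by omega⟩).val = 0) : Increasing (cP π hl) := by
  intro i j vi vj hij
  rw [valley_iff (cP_alt hA hl)] at vi vj
  rw [cP_lt_iff]
  refine hI _ _ ((valley_iff hA _).mpr ⟨by show i.val % 2 = 1; omega, by show i.val + 1 < n+2; omega⟩)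
    ((valley_iff hA _).mpr ⟨by show j.val % 2 = 1; omega, by show j.val + 1 < n+2; omega⟩) ?_
  exact Fin.mk_lt_mk.mpr (Fin.lt_def.mp hij)

def dF (σ : Perm (Fin (n+1))) : Fin (n+2) → Fin (n+2) :=
  fun i => if h : i.val = n+1 then ⟨0, by omega⟩
    else ⟨(σ ⟨i.val, by have := i.isLt; omega⟩).val + 1, by
      have := (σ ⟨i.val, by have := i.isLt; omega⟩).isLt; omega⟩

lemma dF_inj (σ : Perm (Fin (n+1))) : Function.Injective (dF σ) := by
  intro i j h
  unfold dF at h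
  split_ifs at h with h1 h2 h2
  · ext; omega
  · exact absurd (congrArg Fin.val h).symm (by simp)
  · exact absurd (congrArg Fin.val h) (by simp)
  · have hval := congrArg Fin.val h
    simp only at hval
    have : σ ⟨i.val, by have := i.isLt; omega⟩ = σ ⟨j.val, by have := j.isLt; omega⟩ := by
      ext; omega
    have := congrArg Fin.val (σ.injective this)
    simp at this
    ext; omega

noncomputable def dP (σ : Perm (Fin (n+1))) : Perm (Fin (n+2)) :=
  Equiv.ofBijective _ (Finite.injective_iff_bijective.mp (dF_inj σ))

lemma dP_atlast (σ : Perm (Fin (n+1))) : (dP σ ⟨n+1, by omega⟩).val = 0 := by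
  show (dF σ _).val = 0
  unfold dF
  rw [dif_pos rfl]

lemma dP_atlt (σ : Perm (Fin (n+1))) (k : Fin (n+2)) (hk : k.val < n+1) :
    dP σ k = ⟨(σ ⟨k.val, hk⟩).val + 1, by have := (σ ⟨k.val, hk⟩).isLt; omega⟩ := by
  show dF σ _ = _
  unfold dF
  rw [dif_neg (by omega)]

lemma dP_alt (hn : n % 2 = 0) {σ : Perm (Fin (n+1))} (hσ : Alternating σ) :
    Alternating (dP σ) := by
  intro i h
  by_cases hi : i = n
  · rw [if_pos (by rw [hi]; exact Nat.even_iff.mpr hn)]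
    rw [dP_atlt σ ⟨i, by omega⟩ (by show i < n+1; omega)]
    refine Fin.lt_def.mpr ?_
    have hlast := dP_atlast σ
    rw [show (⟨i+1, h⟩ : Fin (n+2)) = ⟨n+1, by omega⟩ from by ext; show i+1 = n+1; omega]
    show (dP σ ⟨n+1, by omega⟩).val < (σ ⟨i, by show i < n+1; omega⟩).val + 1
    omega
  · have hlt : i + 1 < n + 1 := by omega
    rw [dP_atlt σ ⟨i, by omega⟩ (by show i < n+1; omega),
        dP_atlt σ ⟨i+1, h⟩ (by show i+1 < n+1; omega)]
    split
    · next he =>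
      have := alt_even hσ (Nat.even_iff.mp he) hlt
      exact Fin.mk_lt_mk.mpr (Nat.succ_lt_succ (Fin.lt_def.mp this))
    · next he =>
      have := alt_odd hσ (Nat.odd_iff.mp (Nat.not_even_iff_odd.mp he)) hlt
      exact Fin.mk_lt_mk.mpr (Nat.succ_lt_succ (Fin.lt_def.mp this))

lemma dP_inc (hn : n % 2 = 0) {σ : Perm (Fin (n+1))} (hσI : Increasing σ)
    (hσA : Alternating σ) : Increasing (dP σ) := by
  intro i j vi vj hij
  rw [valley_iff (dP_alt hn hσA)] at vi vj
  have hi : i.val < n + 1 := by omega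
  have hj : j.val < n + 1 := by omega
  rw [dP_atlt σ i hi, dP_atlt σ j hj]
  refine Fin.mk_lt_mk.mpr ?_
  refine Nat.succ_lt_succ (Fin.lt_def.mp ?_)
  show σ ⟨i.val, hi⟩ < σ ⟨j.val, hj⟩
  have : σ ⟨i.val, hi⟩ < σ ⟨j.val, hj⟩ := by
    refine hσI _ _ ((valley_iff hσA _).mpr ⟨by show i.val % 2 = 1; omega,
        by show i.val + 1 < n + 1; omega⟩)
      ((valley_iff hσA _).mpr ⟨by show j.val % 2 = 1; omega,
        by show j.val + 1 < n + 1; omega⟩) (Fin.mk_lt_mk.mpr (Fin.lt_def.mp hij))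
  exact this

end EqC

noncomputable def eqC (n : ℕ) (hn : n % 2 = 0) :
    {π : Perm (Fin (n+2)) // (Increasing π ∧ Alternating π) ∧ (π ⟨n+1, by omega⟩).val = 0} ≃
    {σ : Perm (Fin (n+1)) // Increasing σ ∧ Alternating σ} where
  toFun p := ⟨cP p.1 p.2.2, cP_inc p.2.1.1 p.2.1.2 p.2.2, cP_alt p.2.1.2 p.2.2⟩
  invFun q := ⟨dP q.1, ⟨dP_inc hn q.2.1 q.2.2, dP_alt hn q.2.2⟩, dP_atlast q.1⟩
  left_inv p := by
    obtain ⟨π, ⟨hI, hA⟩, hl⟩ := p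
    apply Subtype.ext
    apply Equiv.ext
    intro i
    simp only
    by_cases hi : i.val = n+1
    · rw [show i = ⟨n+1, by omega⟩ from by ext; simp [hi]]
      have h0 := dP_atlast (cP π hl)
      ext
      show _ = (π ⟨n+1, by omega⟩).val
      omega
    · rw [dP_atlt (cP π hl) i (Nat.lt_of_le_of_ne (Nat.lt_succ_iff.mp i.isLt) hi)]
      have hne := cpi_ne hl (k := ⟨i.val, by have := i.isLt; omega⟩) (by show i.val < n+1; exact Nat.lt_of_le_of_ne (Nat.lt_succ_iff.mp i.isLt) hi)
      ext
      show (π ⟨i.val, by have := i.isLt; omega⟩).val - 1 + 1 = (π i).val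
      rw [show (⟨i.val, by have := i.isLt; omega⟩ : Fin (n+2)) = i from by ext; rfl] at hne ⊢
      omega
  right_inv q := by
    obtain ⟨σ, hσI, hσA⟩ := q
    apply Subtype.ext
    apply Equiv.ext
    intro i
    simp only
    rw [cP_apply]
    ext
    show (dP σ ⟨i.val, by have := i.isLt; omega⟩).val - 1 = (σ i).val
    rw [dP_atlt σ ⟨i.val, by have := i.isLt; omega⟩ (by show i.val < n+1; exact i.isLt)]
    show (σ ⟨i.val, _⟩).val + 1 - 1 = (σ i).val
    rw [show (⟨i.val, by show i.val < n+1; exact i.isLt⟩ : Fin (n+1)) = i from by ext; rfl]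
    omega

lemma incAlt_coe (n : ℕ) :
    incAlt n = Nat.card {π : Perm (Fin n) // Increasing π ∧ Alternating π} := by
  rw [incAlt, ← Nat.card_coe_set_eq]
  exact Nat.card_congr (Equiv.subtypeEquivRight (fun _ => Iff.rfl))

lemma card_B (n : ℕ) :
    Nat.card {π : Perm (Fin (n+3)) // (Increasing π ∧ Alternating π) ∧ (π ⟨1, by omega⟩).val = 0}
      = (n+2) * incAlt (n+1) := by
  rw [Nat.card_congr (eqB n), Nat.card_prod, Nat.card_eq_fintype_card, Fintype.card_fin]
  rw [incAlt_coe]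

lemma card_C (n : ℕ) (hn : n % 2 = 0) :
    Nat.card {π : Perm (Fin (n+2)) // (Increasing π ∧ Alternating π) ∧ (π ⟨n+1, by omega⟩).val = 0}
      = incAlt (n+1) := by
  rw [Nat.card_congr (eqC n hn), incAlt_coe]

lemma rec_odd (n : ℕ) (hodd : (n+3) % 2 = 1) : incAlt (n+3) = (n+2) * incAlt (n+1) := by
  rw [incAlt_coe, ← card_B n]
  apply Nat.card_congr
  apply Equiv.subtypeEquivRight
  intro π
  constructor
  · intro hP
    refine ⟨hP, ?_⟩
    rcases zero_pos hP.1 hP.2 (by omega) with h | h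
    · exact h
    · omega
  · exact fun h => h.1

lemma rec_even (n : ℕ) (hn : n % 2 = 0) :
    incAlt (n+4) = (n+3) * incAlt (n+2) + incAlt (n+3) := by
  have hunion : {π : Perm (Fin (n+4)) | Increasing π ∧ Alternating π} =
      {π : Perm (Fin (n+4)) | (Increasing π ∧ Alternating π) ∧ (π ⟨1, by omega⟩).val = 0} ∪
      {π : Perm (Fin (n+4)) | (Increasing π ∧ Alternating π) ∧ (π ⟨n+3, by omega⟩).val = 0} := by
    apply Set.ext
    intro π
    constructor
    · intro hP
      rcases zero_pos hP.1 hP.2 (by omega) with h | h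
      · exact Or.inl ⟨hP, h⟩
      · refine Or.inr ⟨hP, ?_⟩
        have := h.2
        rwa [show (⟨n+4-1, by omega⟩ : Fin (n+4)) = ⟨n+3, by omega⟩ from by ext; show n+4-1 = n+3; omega] at this
    · rintro (h | h) <;> exact h.1
  have hdisj : Disjoint
      {π : Perm (Fin (n+4)) | (Increasing π ∧ Alternating π) ∧ (π ⟨1, by omega⟩).val = 0}
      {π : Perm (Fin (n+4)) | (Increasing π ∧ Alternating π) ∧ (π ⟨n+3, by omega⟩).val = 0} := by
    rw [Set.disjoint_left]
    rintro π ⟨_, h1⟩ ⟨_, h2⟩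
    have : π ⟨1, by omega⟩ = π ⟨n+3, by omega⟩ := by ext; omega
    have := congrArg Fin.val (π.injective this)
    simp at this
  rw [incAlt, hunion, Set.ncard_union_eq hdisj (Set.toFinite _) (Set.toFinite _),
    ← Nat.card_coe_set_eq, ← Nat.card_coe_set_eq]
  have e1 := Nat.card_congr (Equiv.subtypeEquivRight (p := fun π : Perm (Fin (n+4)) =>
    π ∈ {π : Perm (Fin (n+4)) | (Increasing π ∧ Alternating π) ∧ (π ⟨1, by omega⟩).val = 0})
    (q := fun π : Perm (Fin (n+4)) => (Increasing π ∧ Alternating π) ∧ (π ⟨1, by omega⟩).val = 0)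
    (fun _ => Iff.rfl))
  have e2 := Nat.card_congr (Equiv.subtypeEquivRight (p := fun π : Perm (Fin (n+4)) =>
    π ∈ {π : Perm (Fin (n+4)) | (Increasing π ∧ Alternating π) ∧ (π ⟨n+3, by omega⟩).val = 0})
    (q := fun π : Perm (Fin (n+4)) => (Increasing π ∧ Alternating π) ∧ (π ⟨n+3, by omega⟩).val = 0)
    (fun _ => Iff.rfl))
  rw [e1, e2]
  have hB := card_B (n+1)
  have hC := card_C (n+2) (by omega)
  rw [show (⟨n+2+1, by omega⟩ : Fin (n+2+2)) = ⟨n+3, by omega⟩ from rfl] at hC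
  rw [hB, hC]

lemma incAlt_zero : incAlt 0 = 1 := by
  have : {π : Perm (Fin 0) | Increasing π ∧ Alternating π} = Set.univ :=
    Set.eq_univ_of_forall fun π => ⟨fun i => i.elim0, fun i h => absurd h (by omega)⟩
  rw [incAlt, this, Set.ncard_univ, Nat.card_eq_fintype_card, Fintype.card_perm,
    Fintype.card_fin]
  rfl

lemma incAlt_one : incAlt 1 = 1 := by
  have : {π : Perm (Fin 1) | Increasing π ∧ Alternating π} = Set.univ :=
    Set.eq_univ_of_forall fun π =>
      ⟨fun i j vi => absurd vi.2.1 (by omega), fun i h => absurd h (by omega)⟩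
  rw [incAlt, this, Set.ncard_univ, Nat.card_eq_fintype_card, Fintype.card_perm,
    Fintype.card_fin]
  rfl

lemma incAlt_two : incAlt 2 = 1 := by
  have : {π : Perm (Fin 2) | Increasing π ∧ Alternating π} =
      {Equiv.swap ⟨0, by omega⟩ ⟨1, by omega⟩} := by
    apply Set.ext
    intro π
    simp only [Set.mem_setOf_eq, Set.mem_singleton_iff]
    constructor
    · rintro ⟨hI, hA⟩
      have h0 := alt_even hA (i := 0) rfl (by omega)
      have key : ∀ u v : Fin 2, π u < π v → π u = ⟨0, by omega⟩ ∧ π v = ⟨1, by omega⟩ := by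
        intro u v h
        have hl := Fin.lt_def.mp h
        have h1 := (π u).isLt
        have h2 := (π v).isLt
        constructor <;> ext <;> [show (π u).val = 0; show (π v).val = 1] <;> omega
      obtain ⟨e1, e2⟩ := key _ _ h0
      apply Equiv.ext
      intro i
      by_cases hi : i.val = 0
      · rw [show i = ⟨0, by omega⟩ from by ext; omega, Equiv.swap_apply_left]
        exact e2
      · rw [show i = ⟨1, by omega⟩ from by ext; omega, Equiv.swap_apply_right]
        exact e1
    · rintro rfl
      constructor
      · intro i j vi _ _
        obtain ⟨hv1, hv2, _⟩ := vi
        omega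
      · intro i h
        have hi0 : i = 0 := by omega
        subst hi0
        rw [if_pos Even.zero]
        rw [show (⟨0+1, h⟩ : Fin 2) = ⟨1, by omega⟩ from rfl,
          Equiv.swap_apply_right, Equiv.swap_apply_left]
        exact Fin.mk_lt_mk.mpr (by omega)
  rw [incAlt, this, Set.ncard_singleton]

lemma dfac_le : ∀ k : ℕ, Nat.doubleFactorial k ≤ Nat.doubleFactorial (k+1)
  | 0 => le_refl 1
  | 1 => by simp [Nat.doubleFactorial]
  | (k+2) => by
      rw [Nat.doubleFactorial_add_two, show k+2+1 = (k+1)+2 from rfl,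
        Nat.doubleFactorial_add_two]
      exact Nat.mul_le_mul (by omega) (dfac_le k)

lemma incAlt_odd_aux : ∀ m : ℕ, incAlt (2*m+1) = Nat.doubleFactorial (2*m) := by
  intro m
  induction m with
  | zero => simpa using incAlt_one
  | succ m ih =>
    rw [show 2*(m+1)+1 = 2*m+3 from by ring, rec_odd (2*m) (by omega),
      show 2*(m+1) = 2*m+2 from by ring, Nat.doubleFactorial_add_two, ih]

lemma incAlt_even_aux : ∀ m : ℕ, incAlt (2*m+2) =
    Nat.doubleFactorial (2*m+2) - Nat.doubleFactorial (2*m+1) := by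
  intro m
  induction m with
  | zero =>
    rw [show 2*0+2 = 2 from rfl, incAlt_two]
    decide
  | succ m ih =>
    have e1 : incAlt (2*m+3) = Nat.doubleFactorial (2*m+2) := by
      rw [show 2*m+3 = 2*(m+1)+1 from by ring, incAlt_odd_aux (m+1),
        show 2*(m+1) = 2*m+2 from by ring]
    have goal1 : incAlt (2*(m+1)+2) = (2*m+3) * incAlt (2*m+2) + incAlt (2*m+3) := by
      rw [show 2*(m+1)+2 = 2*m+4 from by ring]
      exact rec_even (2*m) (by omega)
    rw [goal1, ih, e1]
    have hd1 : Nat.doubleFactorial (2*(m+1)+2) = (2*m+4) * Nat.doubleFactorial (2*m+2) := by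
      rw [show 2*(m+1)+2 = (2*m+2)+2 from by ring, Nat.doubleFactorial_add_two,
        show (2*m+2)+2 = 2*m+4 from by ring]
    have hd2 : Nat.doubleFactorial (2*(m+1)+1) = (2*m+3) * Nat.doubleFactorial (2*m+1) := by
      rw [show 2*(m+1)+1 = (2*m+1)+2 from by ring, Nat.doubleFactorial_add_two,
        show (2*m+1)+2 = 2*m+3 from by ring]
    rw [hd1, hd2]
    have hle : Nat.doubleFactorial (2*m+1) ≤ Nat.doubleFactorial (2*m+2) := dfac_le _
    have hx := Nat.mul_sub (2*m+3) (Nat.doubleFactorial (2*m+2)) (Nat.doubleFactorial (2*m+1))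
    have hy : (2*m+4) * Nat.doubleFactorial (2*m+2)
        = (2*m+3) * Nat.doubleFactorial (2*m+2) + Nat.doubleFactorial (2*m+2) := by ring
    have hz : (2*m+3) * Nat.doubleFactorial (2*m+1)
        ≤ (2*m+3) * Nat.doubleFactorial (2*m+2) := Nat.mul_le_mul_left _ hle
    omega

end Aux

theorem incAlt_count :
    (∀ n : ℕ, Odd n → incAlt n = Nat.doubleFactorial (n - 1)) ∧
    (∀ n : ℕ, Even n → 0 < n →
      incAlt n = Nat.doubleFactorial n - Nat.doubleFactorial (n - 1)) ∧
    incAlt 0 = 1 ∧ incAlt 1 = 1 ∧ incAlt 2 = 1 ∧ incAlt 3 = 2 ∧ incAlt 4 = 5 ∧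
    incAlt 5 = 8 ∧ incAlt 6 = 33 ∧ incAlt 7 = 48 ∧ incAlt 8 = 279 := by
  have hodd : ∀ n : ℕ, Odd n → incAlt n = Nat.doubleFactorial (n - 1) := by
    rintro n ⟨m, hm⟩
    rw [show n = 2*m+1 from by omega, incAlt_odd_aux m, show 2*m+1-1 = 2*m from by omega]
  have heven : ∀ n : ℕ, Even n → 0 < n →
      incAlt n = Nat.doubleFactorial n - Nat.doubleFactorial (n - 1) := by
    rintro n ⟨k, hk⟩ hpos
    rw [show n = 2*(k-1)+2 from by omega, incAlt_even_aux (k-1),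
      show 2*(k-1)+2-1 = 2*(k-1)+1 from by omega]
  have h3 : incAlt 3 = 2 := by
    have := incAlt_odd_aux 1
    norm_num [Nat.doubleFactorial] at this
    exact this
  have h5 : incAlt 5 = 8 := by
    have := incAlt_odd_aux 2
    norm_num [Nat.doubleFactorial] at this
    exact this
  have h7 : incAlt 7 = 48 := by
    have := incAlt_odd_aux 3
    norm_num [Nat.doubleFactorial] at this
    exact this
  have h4 : incAlt 4 = 5 := by
    have := incAlt_even_aux 1
    norm_num [Nat.doubleFactorial] at this
    exact this
  have h6 : incAlt 6 = 33 := by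
    have := incAlt_even_aux 2
    norm_num [Nat.doubleFactorial] at this
    exact this
  have h8 : incAlt 8 = 279 := by
    have := incAlt_even_aux 3
    norm_num [Nat.doubleFactorial] at this
    exact this
  exact ⟨hodd, heven, incAlt_zero, incAlt_one, incAlt_two, h3, h4, h5, h6, h7, h8⟩
end
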